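/- arXiv:2407.18027 — 11 statements merged into one kernel-verified Lean document; each statement's English description precedes it below -/
import Mathlib

section
/- Let G be a group normally generated by a subset S (i.e. the conjugates of elements of S ∪ S⁻¹ generate G), equipped with the associated conjugation-invariant word norm ‖·‖_S and bi-invariant metric d_S(g,h) = ‖g·h⁻¹‖_S. If ψ : G → ℝ is a homogeneous quasi-morphism with defect at most D and |ψ(s)| ≤ B for all s ∈ S, then |ψ(g) − ψ(h)| ≤ (B + 2D)·d_S(g,h) for all g,h ∈ G; in particular ψ is Lipschitz. -/
/-- The set of conjugates of elements of `S ∪ S⁻¹`. -/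
def conjGens {G : Type*} [Group G] (S : Set G) : Set G :=
  {x | ∃ g s : G, (s ∈ S ∨ s⁻¹ ∈ S) ∧ x = g * s * g⁻¹}

/-- The conjugation-invariant word norm associated to a normally generating set `S`:
the least `k` such that `g` is a product of `k` conjugates of elements of `S ∪ S⁻¹`. -/
noncomputable def ciNorm {G : Type*} [Group G] (S : Set G) (g : G) : ℕ :=
  sInf {k | ∃ f : Fin k → G, (∀ i, f i ∈ conjGens S) ∧ (List.ofFn f).prod = g}

/-- The bi-invariant word metric associated to `S`. -/
noncomputable def ciDist {G : Type*} [Group G] (S : Set G) (g h : G) : ℝ :=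
  (ciNorm S (g * h⁻¹) : ℝ)

/-- The bi-invariant word metric on the free group on `Fin n`,
associated with the standard generating set. -/
noncomputable def freeDist (n : ℕ) (g h : FreeGroup (Fin n)) : ℝ :=
  ciDist (Set.range (FreeGroup.of : Fin n → FreeGroup (Fin n))) g h

/-- A quasi-isometric embedding between spaces with distance functions `d₁`, `d₂`. -/
def IsQuasiIsometricEmbedding {X Y : Type*} (d₁ : X → X → ℝ) (d₂ : Y → Y → ℝ)
    (φ : X → Y) : Prop :=
  ∃ C > (0:ℝ), ∃ D ≥ (0:ℝ), ∀ x y : X,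
    (1/C) * d₁ x y - D ≤ d₂ (φ x) (φ y) ∧ d₂ (φ x) (φ y) ≤ C * d₁ x y + D

/-- Quasi-surjectivity of a map into a space with distance function `d₂`. -/
def IsQuasiSurjective {X Y : Type*} (d₂ : Y → Y → ℝ) (φ : X → Y) : Prop :=
  ∃ B ≥ (0:ℝ), ∀ y : Y, ∃ x : X, d₂ (φ x) y ≤ B

lemma conjGens_inv {G : Type*} [Group G] (S : Set G) {x : G} (hx : x ∈ conjGens S) :
    x⁻¹ ∈ conjGens S := by
  obtain ⟨g, s, hs, rfl⟩ := hx
  exact ⟨g, s⁻¹, by simpa [or_comm] using hs, by group⟩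

lemma conjGens_conj {G : Type*} [Group G] (S : Set G) {x : G} (hx : x ∈ conjGens S) (c : G) :
    c * x * c⁻¹ ∈ conjGens S := by
  obtain ⟨g, s, hs, rfl⟩ := hx
  exact ⟨c * g, s, hs, by group⟩

lemma exists_word {G : Type*} [Group G] (S : Set G)
    (hS : Subgroup.normalClosure S = ⊤) (g : G) :
    ∃ k : ℕ, ∃ f : Fin k → G, (∀ i, f i ∈ conjGens S) ∧ (List.ofFn f).prod = g := by
  have H : Subgroup.Normal (Subgroup.closure (conjGens S)) := by
    constructor
    intro n hn c
    induction hn using Subgroup.closure_induction with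
    | mem x hx => exact Subgroup.subset_closure (conjGens_conj S hx c)
    | one => simpa using Subgroup.one_mem _
    | mul x y _ _ hx hy =>
        have : c * (x * y) * c⁻¹ = (c * x * c⁻¹) * (c * y * c⁻¹) := by group
        rw [this]; exact Subgroup.mul_mem _ hx hy
    | inv x _ hx =>
        have : c * x⁻¹ * c⁻¹ = (c * x * c⁻¹)⁻¹ := by group
        rw [this]; exact Subgroup.inv_mem _ hx
  have hsub : S ⊆ Subgroup.closure (conjGens S) := by
    intro s hs
    exact Subgroup.subset_closure ⟨1, s, Or.inl hs, by group⟩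
  have hle : Subgroup.normalClosure S ≤ Subgroup.closure (conjGens S) :=
    Subgroup.normalClosure_le_normal hsub
  have hg : g ∈ Subgroup.closure (conjGens S) := by
    rw [hS] at hle; exact hle (Subgroup.mem_top g)
  have hg' : g ∈ Submonoid.closure (conjGens S ∪ (conjGens S)⁻¹) := by
    rw [← Subgroup.closure_toSubmonoid]; exact hg
  obtain ⟨l, hl, rfl⟩ := Submonoid.exists_list_of_mem_closure hg'
  refine ⟨l.length, l.get, ?_, by simp⟩
  intro i
  rcases hl (l.get i) (l.get_mem _) with h | h
  · exact h
  · simpa using conjGens_inv S (Set.mem_inv.mp h)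

section QM
variable {G : Type*} [Group G] (ψ : G → ℝ) (D : ℝ)
  (hdef : ∀ g h : G, |ψ g - ψ (g * h) + ψ h| ≤ D)
  (hhom : ∀ (g : G) (n : ℤ), ψ (g ^ n) = (n : ℝ) * ψ g)

include hhom in
lemma psi_one : ψ 1 = 0 := by simpa using hhom 1 0

include hdef hhom in
lemma D_nonneg : 0 ≤ D := by
  have := hdef 1 1
  simp [psi_one ψ hhom] at this
  linarith [abs_nonneg (ψ 1), this]

include hhom in
lemma psi_inv (g : G) : ψ g⁻¹ = -ψ g := by
  have := hhom g (-1)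
  simpa using this

include hdef in
lemma psi_mul (a b : G) : |ψ (a * b) - ψ a - ψ b| ≤ D := by
  have := hdef a b
  rw [show ψ (a*b) - ψ a - ψ b = -(ψ a - ψ (a*b) + ψ b) by ring, abs_neg]
  exact this

include hdef hhom in
lemma psi_conj (c x : G) : ψ (c * x * c⁻¹) = ψ x := by
  have key : ∀ n : ℕ, (n : ℝ) * |ψ (c * x * c⁻¹) - ψ x| ≤ 2 * D := by
    intro n
    have hpow : (c * x * c⁻¹) ^ (n : ℤ) = c * x ^ (n : ℤ) * c⁻¹ := by
      rw [conj_zpow]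
    have h1 := psi_mul ψ D hdef (c * x ^ (n : ℤ)) c⁻¹
    have h2 := psi_mul ψ D hdef c (x ^ (n : ℤ))
    have h3 : ψ c⁻¹ = -ψ c := psi_inv ψ hhom c
    have h4 : ψ (c * x ^ (n : ℤ) * c⁻¹) = (n : ℝ) * ψ (c * x * c⁻¹) := by
      rw [← hpow, hhom]; push_cast; ring
    have h5 : ψ (x ^ (n : ℤ)) = (n : ℝ) * ψ x := hhom x n
    have : |(n : ℝ) * ψ (c * x * c⁻¹) - (n : ℝ) * ψ x| ≤ 2 * D := by
      rw [← h4, ← h5]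
      have := abs_add_le (ψ (c * x ^ (n:ℤ) * c⁻¹) - ψ (c * x ^ (n:ℤ)) - ψ c⁻¹)
        (ψ (c * x ^ (n:ℤ)) - ψ c - ψ (x ^ (n:ℤ)))
      rw [h3] at h1
      calc |ψ (c * x ^ (n:ℤ) * c⁻¹) - ψ (x ^ (n:ℤ))|
          = |(ψ (c * x ^ (n:ℤ) * c⁻¹) - ψ (c * x ^ (n:ℤ)) + ψ c)
            + (ψ (c * x ^ (n:ℤ)) - ψ c - ψ (x ^ (n:ℤ)))| := by ring_nf
        _ ≤ |ψ (c * x ^ (n:ℤ) * c⁻¹) - ψ (c * x ^ (n:ℤ)) + ψ c|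
            + |ψ (c * x ^ (n:ℤ)) - ψ c - ψ (x ^ (n:ℤ))| := abs_add_le _ _
        _ ≤ D + D := add_le_add (by simpa using h1) h2
        _ = 2 * D := by ring
    calc (n : ℝ) * |ψ (c * x * c⁻¹) - ψ x| = |(n : ℝ) * (ψ (c * x * c⁻¹) - ψ x)| := by
          rw [abs_mul, Nat.abs_cast]
      _ = |(n : ℝ) * ψ (c * x * c⁻¹) - (n : ℝ) * ψ x| := by ring_nf
      _ ≤ 2 * D := this
  by_contra hne
  have hpos : 0 < |ψ (c * x * c⁻¹) - ψ x| := by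
    rw [abs_pos]; intro h; exact hne (by linarith)
  obtain ⟨n, hn⟩ := exists_nat_gt (2 * D / |ψ (c * x * c⁻¹) - ψ x|)
  have := key n
  rw [div_lt_iff₀ hpos] at hn
  linarith

include hdef hhom in
lemma psi_prod (B : ℝ) : ∀ L : List G, (∀ x ∈ L, |ψ x| ≤ B) →
    |ψ L.prod| ≤ L.length * (B + D) := by
  intro L
  induction L with
  | nil => intro _; simp [psi_one ψ hhom]
  | cons a tl ih =>
      intro hmem
      have h1 := psi_mul ψ D hdef a tl.prod
      have h2 := ih (fun x hx => hmem x (List.mem_cons_of_mem a hx))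
      have h3 := hmem a List.mem_cons_self
      have : |ψ (a * tl.prod)| ≤ |ψ a| + |ψ tl.prod| + D := by
        have := abs_add_le (ψ (a * tl.prod) - ψ a - ψ tl.prod) (ψ a + ψ tl.prod)
        calc |ψ (a * tl.prod)| = |(ψ (a * tl.prod) - ψ a - ψ tl.prod) + (ψ a + ψ tl.prod)| := by
              ring_nf
          _ ≤ |ψ (a * tl.prod) - ψ a - ψ tl.prod| + |ψ a + ψ tl.prod| := abs_add_le _ _
          _ ≤ D + (|ψ a| + |ψ tl.prod|) := add_le_add h1 (abs_add_le _ _)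
          _ = |ψ a| + |ψ tl.prod| + D := by ring
      simp only [List.prod_cons, List.length_cons]
      push_cast
      calc |ψ (a * tl.prod)| ≤ |ψ a| + |ψ tl.prod| + D := this
        _ ≤ B + tl.length * (B + D) + D := by linarith
        _ = (tl.length + 1) * (B + D) := by ring
end QM

/-- A homogeneous quasi-morphism with defect at most `D`, bounded by `B` on a normally
generating set `S`, is Lipschitz with constant `B + 2D` for the bi-invariant word metric. -/
theorem homogeneous_quasimorphism_lipschitz {G : Type*} [Group G] (S : Set G)
    (hS : Subgroup.normalClosure S = ⊤)
    (ψ : G → ℝ) (D B : ℝ)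
    (hdef : ∀ g h : G, |ψ g - ψ (g * h) + ψ h| ≤ D)
    (hhom : ∀ (g : G) (n : ℤ), ψ (g ^ n) = (n : ℝ) * ψ g)
    (hB : ∀ s ∈ S, |ψ s| ≤ B) :
    ∀ g h : G, |ψ g - ψ h| ≤ (B + 2 * D) * ciDist S g h := by
  intro g h
  have hD : 0 ≤ D := D_nonneg ψ D hdef hhom
  have hne : {k | ∃ f : Fin k → G, (∀ i, f i ∈ conjGens S) ∧ (List.ofFn f).prod = g * h⁻¹}.Nonempty := by
    obtain ⟨k, f, hf, hp⟩ := exists_word S hS (g * h⁻¹)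
    exact ⟨k, f, hf, hp⟩
  obtain ⟨f, hf, hp⟩ := Nat.sInf_mem hne
  set k := ciNorm S (g * h⁻¹) with hk
  have hletter : ∀ i, |ψ (f i)| ≤ B := by
    intro i
    obtain ⟨c, s, hs, hcs⟩ := hf i
    rw [hcs, psi_conj ψ D hdef hhom]
    rcases hs with hs | hs
    · exact hB s hs
    · have := hB s⁻¹ hs
      rwa [psi_inv ψ hhom, abs_neg] at this
  have hdist : ciDist S g h = (k : ℝ) := rfl
  rcases Nat.eq_zero_or_pos k with hk0 | hk1
  · have h1 : g * h⁻¹ = 1 := by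
      rw [← hp]
      have h2 : (List.ofFn f) = [] := by
        apply List.eq_nil_of_length_eq_zero
        simp only [List.length_ofFn]
        exact hk0
      simp [h2]
    have hgh : g = h := by rw [← mul_inv_eq_one]; exact h1
    rw [hdist, hk0]
    simp [hgh]
  · have hBpos : 0 ≤ B := le_trans (abs_nonneg _) (hletter ⟨0, hk1⟩)
    have hprod : |ψ (g * h⁻¹)| ≤ (k : ℝ) * (B + D) := by
      have := psi_prod ψ D hdef hhom B (List.ofFn f) (by
        intro x hx
        obtain ⟨i, rfl⟩ := Set.mem_range.mp (List.mem_ofFn.mp hx)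
        exact hletter i)
      rwa [hp, List.length_ofFn] at this
    have htri : |ψ g - ψ h| ≤ |ψ (g * h⁻¹)| + D := by
      have h1 := hdef (g * h⁻¹) h
      rw [inv_mul_cancel_right] at h1
      have h2 := abs_le.mp h1
      rw [abs_le]
      constructor <;> linarith [le_abs_self (ψ (g * h⁻¹)), neg_abs_le (ψ (g * h⁻¹))]
    have hkD : D ≤ (k : ℝ) * D := by
      have hk1' : (1 : ℝ) ≤ (k : ℝ) := by exact_mod_cast hk1
      nlinarith
    rw [hdist]
    calc |ψ g - ψ h| ≤ |ψ (g * h⁻¹)| + D := htri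
      _ ≤ (k : ℝ) * (B + D) + (k : ℝ) * D := by linarith
      _ = (B + 2 * D) * (k : ℝ) := by ring
end

section
/- Let H and G be groups, each equipped with a bi-invariant metric (with associated norms ‖h‖_H = d_H(h,1) and ‖g‖_G = d_G(g,1)), and let ρ : H → G be a group homomorphism. Suppose there exist a Lipschitz function φ : H → ℝ satisfying φ(hⁿ) = n·φ(h) for all h ∈ H and all n > 0, and elements h₁, h₂ ∈ H such that φ(h₁) ≠ φ(h₂) and ρ(h₁), ρ(h₂) are conjugate in G. Then ρ is not a quasi-isometric embedding. -/
/-- `d` is a bi-invariant metric on the group `G`. -/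
structure IsBiInvMetric {G : Type*} [Group G] (d : G → G → ℝ) : Prop where
  refl : ∀ x, d x x = 0
  eq_of_dist_eq_zero : ∀ x y, d x y = 0 → x = y
  symm : ∀ x y, d x y = d y x
  triangle : ∀ x y z, d x z ≤ d x y + d y z
  left_invariant : ∀ g x y, d (g * x) (g * y) = d x y
  right_invariant : ∀ g x y, d (x * g) (y * g) = d x y

/-- If there is a Lipschitz homogeneous function `φ : H → ℝ` separating two elements
`h₁, h₂` whose images under a homomorphism `ρ : H → G` are conjugate in `G`, then
`ρ` is not a quasi-isometric embedding (w.r.t. given bi-invariant metrics). -/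
theorem not_quasiIsometricEmbedding_of_separating_function
    {H G : Type*} [Group H] [Group G]
    (dH : H → H → ℝ) (dG : G → G → ℝ)
    (hdH : IsBiInvMetric dH) (hdG : IsBiInvMetric dG)
    (ρ : H →* G) (φ : H → ℝ) (C : ℝ)
    (hLip : ∀ x y : H, |φ x - φ y| ≤ C * dH x y)
    (hhom : ∀ (h : H) (n : ℕ), 0 < n → φ (h ^ n) = (n : ℝ) * φ h)
    (h₁ h₂ : H) (hne : φ h₁ ≠ φ h₂)
    (hconj : ∃ g : G, g * ρ h₁ * g⁻¹ = ρ h₂) :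
    ¬ IsQuasiIsometricEmbedding dH dG ρ := by
  rintro ⟨C', hC', D, hD, hQI⟩
  obtain ⟨g, hg⟩ := hconj
  set ε := |φ h₁ - φ h₂| with hεdef
  have hεpos : 0 < ε := abs_pos.mpr (sub_ne_zero.mpr hne)
  have hdHnn : ∀ x y : H, 0 ≤ dH x y := by
    intro x y
    have h1 := hdH.triangle x y x
    have h2 := hdH.symm x y
    have h3 := hdH.refl x
    linarith
  have hCpos : 0 < C := by
    have := hLip h₁ h₂
    have hd : 0 ≤ dH h₁ h₂ := hdHnn h₁ h₂
    nlinarith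
  set K := dG 1 g + dG 1 g⁻¹ with hKdef
  have key : ∀ n : ℕ, 0 < n → (n : ℝ) * ε ≤ C * C' * (K + D) := by
    intro n hn
    have hφ : (n : ℝ) * ε = |φ (h₁ ^ n) - φ (h₂ ^ n)| := by
      rw [hhom h₁ n hn, hhom h₂ n hn, ← mul_sub, abs_mul,
        abs_of_nonneg (by positivity : (0:ℝ) ≤ (n:ℝ))]
    have h1 : (n : ℝ) * ε ≤ C * dH (h₁ ^ n) (h₂ ^ n) := hφ ▸ hLip _ _
    have hG : dG (ρ (h₁ ^ n)) (ρ (h₂ ^ n)) ≤ K := by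
      have e1 : ρ (h₁ ^ n) = (ρ h₁) ^ n := map_pow ρ h₁ n
      have e2 : ρ (h₂ ^ n) = g * (ρ h₁) ^ n * g⁻¹ := by
        rw [map_pow, ← hg, conj_pow]
      rw [e1, e2]
      set x := (ρ h₁) ^ n with hx
      have t := hdG.triangle x (g * x) (g * x * g⁻¹)
      have a1 : dG x (g * x) = dG 1 g := by
        have := hdG.right_invariant x 1 g
        simpa using this
      have a2 : dG (g * x) (g * x * g⁻¹) = dG 1 g⁻¹ := by
        have := hdG.left_invariant (g * x) 1 g⁻¹
        simpa using this
      linarith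
    have h2 := (hQI (h₁ ^ n) (h₂ ^ n)).1
    have hdn : dH (h₁ ^ n) (h₂ ^ n) ≤ C' * (K + D) := by
      have h23 := h2.trans hG
      have : (1 / C') * dH (h₁ ^ n) (h₂ ^ n) ≤ K + D := by linarith
      have h3 := mul_le_mul_of_nonneg_left this (le_of_lt hC')
      rw [← mul_assoc, mul_one_div, div_self (ne_of_gt hC'), one_mul] at h3
      exact h3
    calc (n : ℝ) * ε ≤ C * dH (h₁ ^ n) (h₂ ^ n) := h1
      _ ≤ C * (C' * (K + D)) := by
          exact mul_le_mul_of_nonneg_left hdn (le_of_lt hCpos)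
      _ = C * C' * (K + D) := by ring
  obtain ⟨n, hn⟩ := exists_nat_gt (C * C' * (K + D) / ε)
  have hkey := key (n + 1) (Nat.succ_pos n)
  have hgt : C * C' * (K + D) < ((n + 1 : ℕ) : ℝ) * ε := by
    have : C * C' * (K + D) / ε < ((n + 1 : ℕ) : ℝ) := by
      push_cast
      linarith
    calc C * C' * (K + D) = C * C' * (K + D) / ε * ε := by
          field_simp
      _ < ((n + 1 : ℕ) : ℝ) * ε := by
          exact mul_lt_mul_of_pos_right this hεpos
  linarith
end

section
/- Let H and G be groups with G equipped with a bi-invariant metric, and let ρ : H → G be a group homomorphism. Suppose there exists a Lipschitz function φ : G → ℝ satisfying φ(gⁿ) = n·φ(g) for all g ∈ G and all n > 0, such that φ is not identically zero but φ ∘ ρ = 0. Then ρ is not quasi-surjective: the distance from points of G to the image ρ(H) is unbounded. -/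
/-- If there is a nonzero Lipschitz homogeneous function `φ : G → ℝ` vanishing on the
image of a homomorphism `ρ : H → G`, then the distance to `ρ(H)` is unbounded and `ρ`
is not quasi-surjective (w.r.t. a given bi-invariant metric on `G`). -/
theorem not_quasiSurjective_of_vanishing_function
    {H G : Type*} [Group H] [Group G]
    (dG : G → G → ℝ) (hdG : IsBiInvMetric dG)
    (ρ : H →* G) (φ : G → ℝ) (C : ℝ)
    (hLip : ∀ x y : G, |φ x - φ y| ≤ C * dG x y)
    (hhom : ∀ (g : G) (n : ℕ), 0 < n → φ (g ^ n) = (n : ℝ) * φ g)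
    (hne : φ ≠ 0) (hker : ∀ h : H, φ (ρ h) = 0) :
    (∀ B : ℝ, ∃ g : G, ∀ h : H, B ≤ dG (ρ h) g) ∧
      ¬ IsQuasiSurjective dG ρ := by
  -- dG is nonnegative
  have hnn : ∀ x y : G, 0 ≤ dG x y := by
    intro x y
    have h1 := hdG.triangle x y x
    rw [hdG.refl x, hdG.symm y x] at h1
    linarith
  obtain ⟨g₀, hg₀⟩ : ∃ g₀, φ g₀ ≠ 0 := by
    by_contra h
    push_neg at h
    exact hne (funext fun x => h x)
  have hφpos : 0 < |φ g₀| := abs_pos.mpr hg₀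
  have hC : 0 < C := by
    have hφ1 : φ (1:G) = 0 := by simpa using hker 1
    have h1 := hLip g₀ 1
    rw [hφ1, sub_zero] at h1
    by_contra hc
    push_neg at hc
    have : C * dG g₀ 1 ≤ 0 := mul_nonpos_of_nonpos_of_nonneg hc (hnn _ _)
    linarith
  have key : ∀ B : ℝ, ∃ g : G, ∀ h : H, B ≤ dG (ρ h) g := by
    intro B
    obtain ⟨n, hn⟩ := exists_nat_gt (max 0 (C * B / |φ g₀|))
    have hn0 : 0 < n := by
      have : (0:ℝ) < n := lt_of_le_of_lt (le_max_left _ _) hn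
      exact_mod_cast this
    refine ⟨g₀ ^ n, fun h => ?_⟩
    have h1 := hLip (g₀ ^ n) (ρ h)
    rw [hker h, sub_zero, hhom g₀ n hn0, abs_mul, Nat.abs_cast] at h1
    rw [hdG.symm] at h1
    have h2 : C * B / |φ g₀| < n := lt_of_le_of_lt (le_max_right _ _) hn
    have h3 : C * B < n * |φ g₀| := by
      rw [div_lt_iff₀ hφpos] at h2
      linarith
    have := le_trans (le_of_lt h3) h1
    have hB : C * B ≤ C * dG (ρ h) (g₀ ^ n) := this
    exact le_of_mul_le_mul_left hB hC
  refine ⟨key, ?_⟩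
  rintro ⟨B, hB0, hB⟩
  obtain ⟨g, hg⟩ := key (B + 1)
  obtain ⟨x, hx⟩ := hB g
  have := hg x
  linarith
end

section
/- Let w be a nontrivial cyclically reduced word in F_n. Then ψ_w(w^k) = k for every integer k > 0, and consequently the homogenisation satisfies ψ̄_w(w) = 1. -/
/-- `L` contains `k` pairwise disjoint contiguous copies of `w`. -/
def DisjointOccurrences {α : Type*} (w L : List α) (k : ℕ) : Prop :=
  ∃ p : Fin k → ℕ, (∀ i, (L.drop (p i)).take w.length = w) ∧
    ∀ i j : Fin k, (i : ℕ) < (j : ℕ) → p i + w.length ≤ p j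

/-- The little counting function `c_w`: the maximal number of pairwise disjoint
copies of the reduced word of `w` inside the reduced word of `g`. -/
noncomputable def littleCount {α : Type*} [DecidableEq α] (w g : FreeGroup α) : ℕ :=
  sSup {k | DisjointOccurrences w.toWord g.toWord k}

/-- The little counting quasi-morphism `ψ_w = c_w - c_{w⁻¹}`. -/
noncomputable def littleQM {α : Type*} [DecidableEq α] (w g : FreeGroup α) : ℤ :=
  (littleCount w g : ℤ) - (littleCount w⁻¹ g : ℤ)

/-- A nontrivial element of a free group is cyclically reduced if the first letter
of its reduced word is not the inverse of the last letter. -/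
def CyclicallyReduced {α : Type*} [DecidableEq α] (w : FreeGroup α) : Prop :=
  w ≠ 1 ∧ ∀ x ∈ w.toWord.head?, ∀ y ∈ w.toWord.getLast?, x ≠ (y.1, !y.2)

set_option linter.unusedSectionVars false

section Aux
variable {α : Type*} [DecidableEq α]

/-- adjacency relation of reduced words -/
def RedRel (a b : α × Bool) : Prop := ¬(a.1 = b.1 ∧ a.2 = !b.2)

lemma chain'_reduce (L : List (α × Bool)) : List.Chain' RedRel (FreeGroup.reduce L) := by
  induction L with
  | nil => exact List.isChain_nil
  | cons x L ih =>
    rw [FreeGroup.reduce.cons]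
    rcases h : FreeGroup.reduce L with _ | ⟨hd, tl⟩
    · exact List.isChain_singleton _
    · rw [h] at ih
      by_cases hc : x.1 = hd.1 ∧ x.2 = !hd.2
      · simpa [hc, List.Chain'] using ih.tail
      · simpa [hc, List.Chain', List.isChain_cons_cons] using ⟨hc, ih⟩

lemma reduce_eq_self_of_chain' {L : List (α × Bool)} (h : List.Chain' RedRel L) :
    FreeGroup.reduce L = L := by
  induction L with
  | nil => simp
  | cons x L ih =>
    rw [FreeGroup.reduce.cons, ih h.tail]
    rcases L with _ | ⟨hd, tl⟩
    · rfl
    · have : ¬(x.1 = hd.1 ∧ x.2 = !hd.2) := (List.isChain_cons_cons.1 h).1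
      simp [this]

lemma invRev_append' (A B : List (α × Bool)) :
    FreeGroup.invRev (A ++ B) = FreeGroup.invRev B ++ FreeGroup.invRev A := by
  simp [FreeGroup.invRev]

lemma invRev_ne_self {M : List (α × Bool)} (hc : List.Chain' RedRel M) (hne : M ≠ []) :
    FreeGroup.invRev M ≠ M := by
  intro h
  have hlen : ∀ i j (hi : i < M.length) (hj : j < M.length), i + j = M.length - 1 →
      M[i] = ((M[j]).1, !(M[j]).2) := by
    intro i j hi hj hij
    have hji : M.length - 1 - i = j := by omega
    subst hji
    have hi' : i < (FreeGroup.invRev M).length := by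
      rwa [FreeGroup.invRev_length]
    have h0 : M[i] = (FreeGroup.invRev M)[i]'hi' := (List.getElem_of_eq h.symm hi)
    rw [h0]
    simp only [FreeGroup.invRev]
    rw [List.getElem_reverse]
    simp [List.getElem_map]
  rcases Nat.even_or_odd M.length with ⟨m, hm⟩ | ⟨m, hm⟩
  · -- even, length = 2m, m ≥ 1
    have hmpos : 0 < m := by
      rcases Nat.eq_zero_or_pos m with h0 | h0
      · exact absurd (List.eq_nil_of_length_eq_zero (by omega)) hne
      · exact h0
    obtain ⟨i, rfl⟩ : ∃ i, m = i + 1 := ⟨m - 1, by omega⟩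
    have h1 := hlen i (i+1) (by omega) (by omega) (by omega)
    have hch := List.isChain_iff_getElem.1 hc i (by omega)
    refine hch ⟨?_, ?_⟩ <;>
      rw [h1]
  · -- odd, length = 2m+1
    have h1 := hlen m m (by omega) (by omega) (by omega)
    have := congrArg Prod.snd h1
    simp at this

lemma flatten_replicate_succ (k : ℕ) (W : List (α × Bool)) :
    List.flatten (List.replicate (k+1) W) = W ++ List.flatten (List.replicate k W) := by
  rw [List.replicate_succ, List.flatten_cons]

lemma length_flatten_replicate (k : ℕ) (W : List (α × Bool)) :
    (List.flatten (List.replicate k W)).length = k * W.length := by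
  induction k with
  | zero => simp
  | succ k ih => rw [flatten_replicate_succ, List.length_append, ih]; ring

lemma chain'_flatten_replicate {W : List (α × Bool)} (hne : W ≠ [])
    (hc : List.Chain' RedRel W)
    (hcyc : ∀ x ∈ W.getLast?, ∀ y ∈ W.head?, RedRel x y) (k : ℕ) :
    List.Chain' RedRel (List.flatten (List.replicate k W)) := by
  rw [List.Chain', List.isChain_flatten (by intro hmem; exact hne (List.eq_of_mem_replicate hmem).symm)]
  constructor
  · intro l hl; rw [List.eq_of_mem_replicate hl]; exact hc
  · exact List.isChain_replicate_of_rel _ hcyc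

lemma drop_flatten_replicate {W : List (α × Bool)} (k i : ℕ) (hik : i ≤ k) :
    (List.flatten (List.replicate k W)).drop (i * W.length) =
      List.flatten (List.replicate (k - i) W) := by
  induction i generalizing k with
  | zero => simp
  | succ i ih =>
    obtain ⟨k', rfl⟩ : ∃ k', k = k' + 1 := ⟨k - 1, by omega⟩
    rw [flatten_replicate_succ, show (i+1) * W.length = W.length + i * W.length by ring,
      ← List.drop_drop, List.drop_left, ih k' (by omega),
      show k' + 1 - (i + 1) = k' - i from by omega]

lemma count_flatten_eq {W : List (α × Bool)} (hne : W ≠ []) (k : ℕ) :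
    sSup {m | DisjointOccurrences W (List.flatten (List.replicate k W)) m} = k := by
  have hℓ : 0 < W.length := List.length_pos_iff.2 hne
  have hLlen : (List.flatten (List.replicate k W)).length = k * W.length :=
    length_flatten_replicate k W
  have hmem : DisjointOccurrences W (List.flatten (List.replicate k W)) k := by
    refine ⟨fun i => (i : ℕ) * W.length, fun i => ?_, fun i j hij => ?_⟩
    · rw [drop_flatten_replicate k i (le_of_lt i.isLt)]
      obtain ⟨m, hm⟩ : ∃ m, k - (i : ℕ) = m + 1 := ⟨k - i - 1, by omega⟩
      rw [hm, flatten_replicate_succ, List.take_left]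
    · calc (i : ℕ) * W.length + W.length = ((i : ℕ) + 1) * W.length := by ring
        _ ≤ (j : ℕ) * W.length := Nat.mul_le_mul_right _ (by omega)
  have hub : ∀ m ∈ {m | DisjointOccurrences W (List.flatten (List.replicate k W)) m},
      m ≤ k := by
    rintro m ⟨p, hocc, hsp⟩
    rcases Nat.eq_zero_or_pos m with rfl | hm0
    · exact Nat.zero_le k
    have hlen_occ : ∀ i : Fin m, p i + W.length ≤ k * W.length := by
      intro i
      have h0 := congrArg List.length (hocc i)
      rw [List.length_take, List.length_drop, hLlen] at h0
      have := min_eq_left_iff.mp h0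
      omega
    have hmono : ∀ v (hv : v < m), v * W.length ≤ p ⟨v, hv⟩ := by
      intro v
      induction v with
      | zero => simp
      | succ v ih =>
        intro hv
        have h1 := hsp ⟨v, by omega⟩ ⟨v + 1, hv⟩ (by simp)
        calc (v + 1) * W.length = v * W.length + W.length := by ring
          _ ≤ p ⟨v, by omega⟩ + W.length := Nat.add_le_add_right (ih (by omega)) _
          _ ≤ p ⟨v + 1, hv⟩ := h1
    obtain ⟨m', rfl⟩ : ∃ m', m = m' + 1 := ⟨m - 1, by omega⟩
    have h1 := hmono m' (by omega)
    have h2 := hlen_occ ⟨m', by omega⟩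
    have h3 : (m' + 1) * W.length ≤ k * W.length := by
      have e : (m' + 1) * W.length = m' * W.length + W.length := by ring
      rw [e]
      exact le_trans (Nat.add_le_add_right h1 _) h2
    exact Nat.le_of_mul_le_mul_right h3 hℓ
  exact le_antisymm (csSup_le ⟨k, hmem⟩ hub) (le_csSup ⟨k, hub⟩ hmem)

lemma count_inv_flatten_eq {W : List (α × Bool)} (hne : W ≠ [])
    (hWc : List.Chain' RedRel W) (k : ℕ) :
    sSup {m | DisjointOccurrences (FreeGroup.invRev W)
      (List.flatten (List.replicate k W)) m} = 0 := by
  have hℓ : 0 < W.length := List.length_pos_iff.2 hne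
  have hLlen : (List.flatten (List.replicate k W)).length = k * W.length :=
    length_flatten_replicate k W
  have hzero : ∀ m ∈ {m | DisjointOccurrences (FreeGroup.invRev W)
      (List.flatten (List.replicate k W)) m}, m = 0 := by
    rintro m ⟨p, hocc, -⟩
    by_contra hm0
    have i0 : Fin m := ⟨0, by omega⟩
    have hocc0 := hocc i0
    rw [FreeGroup.invRev_length] at hocc0
    obtain ⟨q, hq⟩ : ∃ q, p i0 = q := ⟨_, rfl⟩
    rw [hq] at hocc0
    have hqlen : q + W.length ≤ k * W.length := by
      have h0 := congrArg List.length hocc0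
      rw [List.length_take, List.length_drop, FreeGroup.invRev_length, hLlen] at h0
      have := min_eq_left_iff.mp h0
      omega
    obtain ⟨a, ha⟩ : ∃ a, q / W.length = a := ⟨_, rfl⟩
    obtain ⟨r, hr⟩ : ∃ r, q % W.length = r := ⟨_, rfl⟩
    have hrℓ : r < W.length := by rw [← hr]; exact Nat.mod_lt _ hℓ
    have hqeq : q = a * W.length + r := by
      have h := Nat.div_add_mod q W.length
      rw [ha, hr, mul_comm] at h
      omega
    have haℓ : a * W.length ≤ q := by
      have := Nat.div_mul_le_self q W.length
      rw [ha] at this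
      omega
    have hak : a < k := by
      have h3 : a * W.length < k * W.length := by omega
      exact Nat.lt_of_mul_lt_mul_right h3
    have hrest : r + W.length ≤ (k - a) * W.length := by
      have h := Nat.sub_mul k a W.length
      omega
    have hdrop : (List.flatten (List.replicate k W)).drop q =
        (List.flatten (List.replicate (k - a) W)).drop r := by
      rw [hqeq, ← drop_flatten_replicate k a (by omega), List.drop_drop]
    have key : FreeGroup.invRev W = W.drop r ++ W.take r := by
      rw [← hocc0, hdrop]
      rcases Nat.lt_or_ge (k - a) 2 with hka | hka
      · have hka1 : k - a = 1 := by omega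
        have hr0 : r = 0 := by
          rw [hka1, one_mul] at hrest; omega
        rw [hka1, hr0]
        simp [flatten_replicate_succ]
      · obtain ⟨m', hm'⟩ : ∃ m', k - a = m' + 2 := ⟨k - a - 2, by omega⟩
        rw [hm', flatten_replicate_succ, flatten_replicate_succ,
          List.drop_append_of_le_length (by omega),
          List.take_append, List.length_drop,
          List.take_of_length_le (by rw [List.length_drop]; omega),
          show W.length - (W.length - r) = r from by omega,
          List.take_append_of_le_length (by omega)]
    have hsplit : FreeGroup.invRev (W.drop r) ++ FreeGroup.invRev (W.take r)
        = W.drop r ++ W.take r := by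
      rw [← invRev_append', List.take_append_drop, key]
    have hdr : FreeGroup.invRev (W.drop r) = W.drop r :=
      List.append_inj_left hsplit (by rw [FreeGroup.invRev_length])
    have hdne : W.drop r ≠ [] := by
      rw [Ne, List.drop_eq_nil_iff]; omega
    exact invRev_ne_self (hWc.infix (List.drop_suffix r W).isInfix) hdne hdr
  have h0 : DisjointOccurrences (FreeGroup.invRev W)
      (List.flatten (List.replicate k W)) 0 :=
    ⟨fun i => i.elim0, fun i => i.elim0, fun i => i.elim0⟩
  have := csSup_le (s := {m | DisjointOccurrences (FreeGroup.invRev W)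
      (List.flatten (List.replicate k W)) m}) ⟨0, h0⟩ (fun m hm => le_of_eq (hzero m hm))
  omega

variable {w : FreeGroup α}

lemma toWord_pow_cr (hw : CyclicallyReduced w) (k : ℕ) :
    (w ^ k).toWord = List.flatten (List.replicate k w.toWord) := by
  have hWne : w.toWord ≠ [] := fun h => hw.1 (FreeGroup.toWord_eq_nil_iff.1 h)
  have hWc : List.Chain' RedRel w.toWord := by
    rw [← FreeGroup.reduce_toWord]; exact chain'_reduce _
  have hcyc : ∀ x ∈ w.toWord.getLast?, ∀ y ∈ w.toWord.head?, RedRel x y := by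
    rintro x hx y hy ⟨h1, h2⟩
    exact hw.2 y hy x hx (Prod.ext h1.symm (by rw [h2, Bool.not_not]))
  conv_lhs => rw [← FreeGroup.mk_toWord (x := w)]
  rw [FreeGroup.pow_mk, FreeGroup.toWord_mk,
    reduce_eq_self_of_chain' (chain'_flatten_replicate hWne hWc hcyc k)]

end Aux

/-- For a nontrivial cyclically reduced `w`, `ψ_w(wᵏ) = k` for all `k > 0`, and hence
the homogenisation satisfies `ψ̄_w(w) = 1`. -/
theorem littleQM_pow_self (n : ℕ) (w : FreeGroup (Fin n)) (hw : CyclicallyReduced w) :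
    (∀ k : ℕ, 0 < k → littleQM w (w ^ k) = (k : ℤ)) ∧
    Filter.Tendsto (fun k : ℕ => (littleQM w (w ^ k) : ℝ) / (k : ℝ))
      Filter.atTop (nhds 1) := by
  have hWne : w.toWord ≠ [] := fun h => hw.1 (FreeGroup.toWord_eq_nil_iff.1 h)
  have hWc : List.Chain' RedRel w.toWord := by
    rw [← FreeGroup.reduce_toWord]; exact chain'_reduce _
  have h1 : ∀ k : ℕ, 0 < k → littleQM w (w ^ k) = (k : ℤ) := by
    intro k _
    unfold littleQM littleCount
    rw [toWord_pow_cr hw k, FreeGroup.toWord_inv, count_flatten_eq hWne k,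
      count_inv_flatten_eq hWne hWc k]
    simp
  refine ⟨h1, ?_⟩
  have hev : ∀ᶠ k : ℕ in Filter.atTop,
      (1 : ℝ) = (littleQM w (w ^ k) : ℝ) / (k : ℝ) := by
    rw [Filter.eventually_atTop]
    refine ⟨1, fun k hk => ?_⟩
    rw [h1 k hk]
    rw [Int.cast_natCast, div_self (Nat.cast_ne_zero.2 (by omega))]
  exact Filter.Tendsto.congr' hev tendsto_const_nhds
end

section
/- Let m ≥ 1 and n ≥ 2, and equip F_m and F_n with the bi-invariant word metrics associated with their standard generating sets. Any group homomorphism ρ : F_m → F_n whose image is a proper subgroup of finite index in F_n is not a quasi-isometric embedding. -/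
section NormBasics
variable {G : Type*} [Group G] {S : Set G}

lemma conjGens_inv_mem {a : G} (h : a ∈ conjGens S) : a⁻¹ ∈ conjGens S := by
  obtain ⟨g, s, hs, rfl⟩ := h
  exact ⟨g, s⁻¹, by simpa [or_comm] using hs, by group⟩

lemma conjGens_conj_mem (g : G) {a : G} (h : a ∈ conjGens S) :
    g * a * g⁻¹ ∈ conjGens S := by
  obtain ⟨c, s, hs, rfl⟩ := h
  exact ⟨g * c, s, hs, by group⟩

lemma mem_ciNorm_set_of_list {g : G} (l : List G) (h1 : ∀ a ∈ l, a ∈ conjGens S)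
    (h2 : l.prod = g) :
    l.length ∈ {k | ∃ f : Fin k → G, (∀ i, f i ∈ conjGens S) ∧ (List.ofFn f).prod = g} := by
  refine ⟨l.get, fun i => h1 _ (l.get_mem i), ?_⟩
  rw [List.ofFn_get, h2]

lemma ciNorm_le_list {g : G} (l : List G) (h1 : ∀ a ∈ l, a ∈ conjGens S)
    (h2 : l.prod = g) : ciNorm S g ≤ l.length :=
  Nat.sInf_le (mem_ciNorm_set_of_list l h1 h2)

end NormBasics

section FreeNorm
variable {ι : Type*}

lemma exists_conj_repr (g : FreeGroup ι) :
    ∃ l : List (FreeGroup ι),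
      (∀ a ∈ l, a ∈ conjGens (Set.range (FreeGroup.of : ι → FreeGroup ι))) ∧ l.prod = g := by
  refine FreeGroup.induction_on g ⟨[], by simp, rfl⟩ ?_ ?_ ?_
  · intro x
    exact ⟨[FreeGroup.of x], by
      simp only [List.mem_singleton, forall_eq]
      exact ⟨1, FreeGroup.of x, Or.inl ⟨x, rfl⟩, by group⟩,
      by simp only [List.prod_singleton]⟩
  · intro x _
    exact ⟨[(FreeGroup.of x)⁻¹], by
      simp only [List.mem_singleton, forall_eq]
      exact ⟨1, (FreeGroup.of x)⁻¹, Or.inr (by simp only [inv_inv]; exact ⟨x, rfl⟩), by group⟩,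
      by simp only [List.prod_singleton]⟩
  · intro x y hx hy
    obtain ⟨l1, h1, h1p⟩ := hx
    obtain ⟨l2, h2, h2p⟩ := hy
    refine ⟨l1 ++ l2, ?_, by rw [List.prod_append, h1p, h2p]⟩
    intro a ha
    rcases List.mem_append.mp ha with h | h
    · exact h1 a h
    · exact h2 a h

lemma ciNorm_spec (g : FreeGroup ι) :
    ∃ l : List (FreeGroup ι),
      (∀ a ∈ l, a ∈ conjGens (Set.range (FreeGroup.of : ι → FreeGroup ι))) ∧ l.prod = g ∧
        l.length = ciNorm (Set.range (FreeGroup.of : ι → FreeGroup ι)) g := by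
  obtain ⟨l0, h1, h2⟩ := exists_conj_repr g
  have hne : {k | ∃ f : Fin k → FreeGroup ι, (∀ i, f i ∈ conjGens (Set.range FreeGroup.of)) ∧
      (List.ofFn f).prod = g}.Nonempty := ⟨l0.length, mem_ciNorm_set_of_list l0 h1 h2⟩
  have hmem := Nat.sInf_mem hne
  obtain ⟨f, hf, hfp⟩ := hmem
  refine ⟨List.ofFn f, ?_, hfp, by simp [ciNorm]⟩
  intro a ha
  rw [List.mem_ofFn] at ha
  obtain ⟨i, rfl⟩ := ha
  exact hf i

lemma ciNorm_mul_le (a b : FreeGroup ι) :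
    ciNorm (Set.range (FreeGroup.of : ι → FreeGroup ι)) (a * b) ≤
      ciNorm (Set.range (FreeGroup.of : ι → FreeGroup ι)) a +
      ciNorm (Set.range (FreeGroup.of : ι → FreeGroup ι)) b := by
  obtain ⟨l1, h1, h1p, h1l⟩ := ciNorm_spec a
  obtain ⟨l2, h2, h2p, h2l⟩ := ciNorm_spec b
  have := ciNorm_le_list (S := Set.range (FreeGroup.of : ι → FreeGroup ι)) (l1 ++ l2)
    (by intro x hx; rcases List.mem_append.mp hx with h | h; exacts [h1 x h, h2 x h])
    (by rw [List.prod_append, h1p, h2p])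
  simpa [h1l, h2l] using this

lemma ciNorm_inv_le (a : FreeGroup ι) :
    ciNorm (Set.range (FreeGroup.of : ι → FreeGroup ι)) a⁻¹ ≤
      ciNorm (Set.range (FreeGroup.of : ι → FreeGroup ι)) a := by
  obtain ⟨l, h1, h1p, h1l⟩ := ciNorm_spec a
  have := ciNorm_le_list (S := Set.range (FreeGroup.of : ι → FreeGroup ι))
    ((l.map fun x => x⁻¹).reverse)
    (by
      intro x hx
      simp only [List.mem_reverse, List.mem_map] at hx
      obtain ⟨y, hy, rfl⟩ := hx
      exact conjGens_inv_mem (h1 y hy))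
    (by rw [← List.prod_inv_reverse, h1p])
  simpa [h1l] using this

lemma prod_map_conj (g : FreeGroup ι) (l : List (FreeGroup ι)) :
    (l.map fun x => g * x * g⁻¹).prod = g * l.prod * g⁻¹ := by
  induction l with
  | nil => simp
  | cons a t ih => simp only [List.map_cons, List.prod_cons, ih]; group

lemma ciNorm_conj_le (g a : FreeGroup ι) :
    ciNorm (Set.range (FreeGroup.of : ι → FreeGroup ι)) (g * a * g⁻¹) ≤
      ciNorm (Set.range (FreeGroup.of : ι → FreeGroup ι)) a := by
  obtain ⟨l, h1, h1p, h1l⟩ := ciNorm_spec a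
  have := ciNorm_le_list (S := Set.range (FreeGroup.of : ι → FreeGroup ι))
    (l.map fun x => g * x * g⁻¹)
    (by
      intro x hx
      simp only [List.mem_map] at hx
      obtain ⟨y, hy, rfl⟩ := hx
      exact conjGens_conj_mem g (h1 y hy))
    (by rw [prod_map_conj, h1p])
  simpa [h1l] using this

end FreeNorm

section PsiBound
variable {ι : Type*} [Fintype ι]

lemma abs_psi_le (ψ : FreeGroup ι → ℝ) (hψ : ∀ a b, ψ (a * b) = ψ a + ψ b)
    (g : FreeGroup ι) :
    |ψ g| ≤ (ciNorm (Set.range (FreeGroup.of : ι → FreeGroup ι)) g : ℝ) *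
      (∑ j, |ψ (FreeGroup.of j)|) := by
  have hone : ψ 1 = 0 := by have := hψ 1 1; simp at this; linarith
  have hinv : ∀ a, ψ a⁻¹ = -ψ a := by
    intro a; have := hψ a a⁻¹; simp [hone] at this; linarith
  set Cm := ∑ j, |ψ (FreeGroup.of j)| with hCm
  have hCm0 : 0 ≤ Cm := Finset.sum_nonneg fun _ _ => abs_nonneg _
  have hfac : ∀ a ∈ conjGens (Set.range (FreeGroup.of : ι → FreeGroup ι)), |ψ a| ≤ Cm := by
    rintro a ⟨c, s, hs, rfl⟩
    have hconj : ψ (c * s * c⁻¹) = ψ s := by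
      rw [hψ, hψ, hinv]; ring
    rw [hconj]
    rcases hs with ⟨j, rfl⟩ | ⟨j, hj⟩
    · exact Finset.single_le_sum (f := fun j => |ψ (FreeGroup.of j)|)
        (fun _ _ => abs_nonneg _) (Finset.mem_univ j)
    · have : s = (FreeGroup.of j)⁻¹ := by rw [hj, inv_inv]
      rw [this, hinv, abs_neg]
      exact Finset.single_le_sum (f := fun j => |ψ (FreeGroup.of j)|)
        (fun _ _ => abs_nonneg _) (Finset.mem_univ j)
  have hlist : ∀ l : List (FreeGroup ι),
      (∀ a ∈ l, a ∈ conjGens (Set.range (FreeGroup.of : ι → FreeGroup ι))) →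
      |ψ l.prod| ≤ (l.length : ℝ) * Cm := by
    intro l
    induction l with
    | nil => intro _; simp [hone]
    | cons a t ih =>
        intro h
        have h1 := hfac a (h a List.mem_cons_self)
        have h2 := ih fun x hx => h x (List.mem_cons_of_mem a hx)
        rw [List.prod_cons, hψ]
        calc |ψ a + ψ t.prod| ≤ |ψ a| + |ψ t.prod| := abs_add_le _ _
          _ ≤ Cm + (t.length : ℝ) * Cm := add_le_add h1 h2
          _ = ((t.length + 1 : ℕ) : ℝ) * Cm := by push_cast; ring
          _ = ((a :: t).length : ℝ) * Cm := by simp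
  obtain ⟨l, h1, h2, h3⟩ := ciNorm_spec g
  have := hlist l h1
  rw [h2, h3] at this
  exact this

end PsiBound

section WrG

@[ext] structure Wr (S : Type*) where
  f : S → ℝ
  p : Equiv.Perm S

namespace Wr
variable {S : Type*}

protected def wmul (a b : Wr S) : Wr S := ⟨fun d => a.f d + b.f (a.p⁻¹ d), a.p * b.p⟩
protected def wone : Wr S := ⟨0, 1⟩
protected def winv (a : Wr S) : Wr S := ⟨fun d => -a.f (a.p d), a.p⁻¹⟩

instance : Group (Wr S) where
  mul := Wr.wmul
  one := Wr.wone
  inv := Wr.winv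
  mul_assoc a b c := by
    apply Wr.ext
    · funext d
      show (Wr.wmul (Wr.wmul a b) c).f d = (Wr.wmul a (Wr.wmul b c)).f d
      simp [Wr.wmul, mul_inv_rev, Equiv.Perm.mul_apply]
      ring
    · show (Wr.wmul (Wr.wmul a b) c).p = (Wr.wmul a (Wr.wmul b c)).p
      simp [Wr.wmul, mul_assoc]
  one_mul a := by
    apply Wr.ext
    · funext d
      show (Wr.wmul Wr.wone a).f d = a.f d
      simp [Wr.wmul, Wr.wone]
    · show (Wr.wmul Wr.wone a).p = a.p
      simp [Wr.wmul, Wr.wone]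
  mul_one a := by
    apply Wr.ext
    · funext d
      show (Wr.wmul a Wr.wone).f d = a.f d
      simp [Wr.wmul, Wr.wone]
    · show (Wr.wmul a Wr.wone).p = a.p
      simp [Wr.wmul, Wr.wone]
  inv_mul_cancel a := by
    apply Wr.ext
    · funext d
      show (Wr.wmul (Wr.winv a) a).f d = (Wr.wone : Wr S).f d
      simp [Wr.wmul, Wr.winv, Wr.wone]
    · show (Wr.wmul (Wr.winv a) a).p = (Wr.wone : Wr S).p
      simp [Wr.wmul, Wr.winv, Wr.wone]

@[simp] lemma mul_f (a b : Wr S) (d : S) : (a * b).f d = a.f d + b.f (a.p⁻¹ d) := rfl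
@[simp] lemma mul_p (a b : Wr S) : (a * b).p = a.p * b.p := rfl
@[simp] lemma one_f (d : S) : (1 : Wr S).f d = 0 := rfl
@[simp] lemma one_p : (1 : Wr S).p = 1 := rfl
@[simp] lemma inv_f (a : Wr S) (d : S) : (a⁻¹).f d = -a.f (a.p d) := rfl
@[simp] lemma inv_p (a : Wr S) : (a⁻¹).p = a.p⁻¹ := rfl

/-- projection to the permutation part, as a homomorphism. -/
def sndHom : Wr S →* Equiv.Perm S where
  toFun := Wr.p
  map_one' := rfl
  map_mul' _ _ := rfl

end Wr
end WrG

section Cocycle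
variable {ι S : Type*}

/-- The homomorphism into the wreath-type group determined by weights `ω` and an action. -/
noncomputable def Phi (ω : S → ι → ℝ) (act : FreeGroup ι →* Equiv.Perm S) :
    FreeGroup ι →* Wr S :=
  FreeGroup.lift fun j => ⟨fun d => ω d j, act (FreeGroup.of j)⟩

lemma Phi_p (ω : S → ι → ℝ) (act : FreeGroup ι →* Equiv.Perm S) (g : FreeGroup ι) :
    (Phi ω act g).p = act g := by
  have h : (Wr.sndHom).comp (Phi ω act) = act := by
    apply FreeGroup.ext_hom
    intro a
    simp [Phi, Wr.sndHom, FreeGroup.lift_apply_of, MonoidHom.comp_apply]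
    rfl
  calc (Phi ω act g).p = ((Wr.sndHom).comp (Phi ω act)) g := rfl
    _ = act g := by rw [h]

/-- The weighted "integral along the path" cocycle. -/
noncomputable def Lf (ω : S → ι → ℝ) (act : FreeGroup ι →* Equiv.Perm S)
    (g : FreeGroup ι) (d : S) : ℝ :=
  (Phi ω act g).f d

variable (ω : S → ι → ℝ) (act : FreeGroup ι →* Equiv.Perm S)

lemma Lf_mul (g h : FreeGroup ι) (d : S) :
    Lf ω act (g * h) d = Lf ω act g d + Lf ω act h ((act g)⁻¹ d) := by
  simp only [Lf, map_mul, Wr.mul_f, Phi_p]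

lemma Lf_of (j : ι) (d : S) : Lf ω act (FreeGroup.of j) d = ω d j := by
  simp [Lf, Phi, FreeGroup.lift_apply_of]

lemma Lf_one (d : S) : Lf ω act 1 d = 0 := by simp [Lf]

lemma Lf_inv (g : FreeGroup ι) (d : S) :
    Lf ω act g⁻¹ d = -Lf ω act g ((act g) d) := by
  simp only [Lf, map_inv, Wr.inv_f, Phi_p]

lemma Lf_pow (g : FreeGroup ι) (t : ℕ) (d : S) :
    Lf ω act (g ^ t) d = ∑ s ∈ Finset.range t, Lf ω act g (((act g)⁻¹ ^ s) d) := by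
  induction t generalizing d with
  | zero => simp [Lf_one]
  | succ t ih =>
      rw [pow_succ', Lf_mul, ih ((act g)⁻¹ d), Finset.sum_range_succ' _ t]
      have hpt : ∀ s : ℕ, ((act g)⁻¹ ^ s) ((act g)⁻¹ d) = ((act g)⁻¹ ^ (s + 1)) d := by
        intro s
        rw [pow_succ, Equiv.Perm.mul_apply]
      simp only [hpt, pow_zero, Equiv.Perm.one_apply]
      ring

end Cocycle

section Central
variable {ι S : Type*} (ω : S → ι → ℝ) (act : FreeGroup ι →* Equiv.Perm S)

lemma Lf_pow_triv {g : FreeGroup ι} (hg : act g = 1) (t : ℕ) (d : S) :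
    Lf ω act (g ^ t) d = t * Lf ω act g d := by
  rw [Lf_pow]
  simp [hg]

lemma Lf_central (u v b : FreeGroup ι) (hb : act b = 1) (k : ℕ) (d : S) :
    Lf ω act (u * (b ^ k * v * (b ^ k)⁻¹ * v⁻¹) * u⁻¹) d =
      Lf ω act (b ^ k) ((act u)⁻¹ d) - Lf ω act (b ^ k) ((act v)⁻¹ ((act u)⁻¹ d)) := by
  have hbk : act (b ^ k) = 1 := by rw [map_pow, hb, one_pow]
  simp only [Lf_mul, Lf_inv, map_mul, map_inv, hbk, mul_one, one_mul, inv_one,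
    Equiv.Perm.one_apply, mul_inv_rev, Equiv.Perm.mul_apply,
    Equiv.Perm.coe_inv, inv_inv, Equiv.apply_symm_apply, Equiv.symm_apply_apply]
  ring

end Central

section Package
open FreeGroup

lemma exists_package (n : ℕ) (hn : 2 ≤ n) (H : Subgroup (FreeGroup (Fin n)))
    (hproper : H ≠ ⊤) [Fintype (FreeGroup (Fin n) ⧸ H)]
    [DecidableEq (FreeGroup (Fin n) ⧸ H)] :
    ∃ (i₀ i₁ : Fin n) (c : ℕ) (d₀ e₁ : FreeGroup (Fin n) ⧸ H),
      i₁ ≠ i₀ ∧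
      ∀ t : ℕ, (((MulAction.toPermHom (FreeGroup (Fin n)) (FreeGroup (Fin n) ⧸ H))
          (FreeGroup.of i₀ * FreeGroup.of i₁ ^ c))⁻¹ ^ t) e₁ ≠ d₀ := by
  set Q := FreeGroup (Fin n) ⧸ H with hQ
  set act := MulAction.toPermHom (FreeGroup (Fin n)) Q with hactdef
  have hact : ∀ (g : FreeGroup (Fin n)) (d : Q), act g d = g • d := fun _ _ => rfl
  obtain ⟨g₀, hg₀⟩ : ∃ g₀, g₀ ∉ H := by
    by_contra h
    push_neg at h
    exact hproper ((Subgroup.eq_top_iff' H).mpr h)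
  have hc₀ : (QuotientGroup.mk g₀ : Q) ≠ QuotientGroup.mk 1 := by
    intro h
    rw [QuotientGroup.eq] at h
    simp only [mul_one] at h
    exact hg₀ (by simpa using inv_mem h)
  have h01 : (⟨0, by omega⟩ : Fin n) ≠ (⟨1, by omega⟩ : Fin n) := by
    simp [Fin.ext_iff]
  by_cases hP : ∀ d e : Q, ∃ t : ℕ, (FreeGroup.of (⟨0, by omega⟩ : Fin n)) ^ t • e = d
  · -- every point is in the ⟨x⟩-orbit of every other, for x = generator 0
    set i₀ : Fin n := ⟨1, by omega⟩
    set i₁ : Fin n := ⟨0, by omega⟩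
    set y := FreeGroup.of i₀
    set c₀ : Q := QuotientGroup.mk 1
    obtain ⟨c, hc⟩ := hP (y⁻¹ • c₀) c₀
    refine ⟨i₀, i₁, c, c₀, QuotientGroup.mk g₀, h01, ?_⟩
    set w := FreeGroup.of i₀ * FreeGroup.of i₁ ^ c with hw
    have hfix : act w c₀ = c₀ := by
      rw [hact, hw, mul_smul, hc, smul_inv_smul]
    have hfixt : ∀ t : ℕ, (act w ^ t) c₀ = c₀ := by
      intro t
      induction t with
      | zero => simp
      | succ t ih => rw [pow_succ, Equiv.Perm.mul_apply, hfix, ih]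
    intro t hteq
    apply hc₀
    have := congrArg (act w ^ t) hteq
    rw [← Equiv.Perm.mul_apply, inv_pow, mul_inv_cancel, Equiv.Perm.one_apply] at this
    rw [this, hfixt]
  · push_neg at hP
    obtain ⟨d, e, hde⟩ := hP
    refine ⟨⟨0, by omega⟩, ⟨1, by omega⟩, 0, d, e, h01.symm, ?_⟩
    set w := FreeGroup.of (⟨0, by omega⟩ : Fin n) * FreeGroup.of (⟨1, by omega⟩ : Fin n) ^ 0
      with hw
    have hw' : w = FreeGroup.of (⟨0, by omega⟩ : Fin n) := by rw [hw, pow_zero, mul_one]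
    set T := Fintype.card (Equiv.Perm Q) with hT
    have hT1 : 1 ≤ T := Fintype.card_pos
    intro t hteq
    have hTw : act w ^ T = 1 := pow_card_eq_one
    have hkey : act w ^ (t * (T - 1)) = (act w ^ t)⁻¹ := by
      apply eq_inv_of_mul_eq_one_left
      rw [← pow_add]
      have h2 : t * (T - 1) + t = t * ((T - 1) + 1) := by ring
      rw [h2, Nat.sub_add_cancel hT1, mul_comm, pow_mul, hTw, one_pow]
    rw [inv_pow, ← hkey] at hteq
    apply hde (t * (T - 1))
    have : act (w ^ (t * (T - 1))) e = d := by rw [map_pow]; exact hteq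
    rw [hact] at this
    rw [← hw']
    exact this

end Package

/-- A homomorphism `F_m → F_n` (`m ≥ 1`, `n ≥ 2`) whose image is a proper subgroup
of finite index is not a quasi-isometric embedding for the bi-invariant word metrics. -/
theorem not_quasiIsometricEmbedding_of_properFiniteIndex (m n : ℕ)
    (hm : 1 ≤ m) (hn : 2 ≤ n)
    (ρ : FreeGroup (Fin m) →* FreeGroup (Fin n))
    (hproper : ρ.range ≠ ⊤) (hfin : ρ.range.index ≠ 0) :
    ¬ IsQuasiIsometricEmbedding (freeDist m) (freeDist n) ρ := by
  intro hQI
  obtain ⟨C, hC, D, hD, hQE⟩ := hQI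
  set H := ρ.range with hH
  have hfinite : Finite (FreeGroup (Fin n) ⧸ H) := (Nat.card_ne_zero.mp hfin).2
  letI : Fintype (FreeGroup (Fin n) ⧸ H) := Fintype.ofFinite _
  letI : DecidableEq (FreeGroup (Fin n) ⧸ H) := Classical.decEq _
  set Q := FreeGroup (Fin n) ⧸ H with hQdef
  set act := MulAction.toPermHom (FreeGroup (Fin n)) Q with hactdef
  have hact : ∀ (g : FreeGroup (Fin n)) (d : Q), act g d = g • d := fun _ _ => rfl
  set c₀ : Q := QuotientGroup.mk 1 with hc₀def
  -- fixing the basepoint characterizes membership in H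
  have hmemH : ∀ g : FreeGroup (Fin n), act g c₀ = c₀ → g ∈ H := by
    intro g hg
    rw [hact, hc₀def] at hg
    have : (QuotientGroup.mk (g * 1) : Q) = QuotientGroup.mk 1 := hg
    rw [QuotientGroup.eq] at this
    simpa using inv_mem this
  have hfixc₀ : ∀ g : FreeGroup (Fin n), g ∈ H → act g c₀ = c₀ := by
    intro g hg
    rw [hact, hc₀def]
    show (QuotientGroup.mk (g * 1) : Q) = QuotientGroup.mk 1
    rw [QuotientGroup.eq]
    simpa using inv_mem hg
  have hfixc₀' : ∀ g : FreeGroup (Fin n), g ∈ H → (act g)⁻¹ c₀ = c₀ := by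
    intro g hg
    conv_lhs => rw [← hfixc₀ g hg]
    exact Equiv.symm_apply_apply _ _
  -- the combinatorial package
  obtain ⟨i₀, i₁, c, d₀, e₁, hi, hpt⟩ := exists_package n hn H hproper
  set w := FreeGroup.of i₀ * FreeGroup.of i₁ ^ c with hwdef
  set ω : Q → Fin n → ℝ := fun d j => if d = d₀ ∧ j = i₀ then 1 else 0 with hωdef
  have hLw : ∀ d : Q, Lf ω act w d = if d = d₀ then 1 else 0 := by
    intro d
    have hx : ∀ e : Q, Lf ω act (FreeGroup.of i₁ ^ c) e = 0 := by
      intro e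
      rw [Lf_pow]
      apply Finset.sum_eq_zero
      intro t _
      rw [Lf_of, hωdef]
      simp [hi]
    rw [hwdef, Lf_mul, Lf_of, hx, add_zero, hωdef]
    simp
  set T := Fintype.card (Equiv.Perm Q) with hTdef
  have hT1 : 0 < T := Fintype.card_pos
  set b := w ^ T with hbdef
  have hbact : act b = 1 := by rw [hbdef, map_pow]; exact pow_card_eq_one
  have hLb₀ : 1 ≤ Lf ω act b d₀ := by
    rw [hbdef, Lf_pow]
    have h0 : Lf ω act w (((act w)⁻¹ ^ 0) d₀) = 1 := by
      rw [pow_zero, Equiv.Perm.one_apply, hLw, if_pos rfl]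
    calc (1:ℝ) = Lf ω act w (((act w)⁻¹ ^ 0) d₀) := h0.symm
      _ ≤ ∑ s ∈ Finset.range T, Lf ω act w (((act w)⁻¹ ^ s) d₀) := by
          apply Finset.single_le_sum (f := fun s => Lf ω act w (((act w)⁻¹ ^ s) d₀))
          · intro s _
            rw [hLw]
            split <;> norm_num
          · exact Finset.mem_range.mpr hT1
  have hLb₁ : Lf ω act b e₁ = 0 := by
    rw [hbdef, Lf_pow]
    apply Finset.sum_eq_zero
    intro s _
    rw [hLw, if_neg (hpt s)]
  -- representatives and the conjugating elements
  obtain ⟨r, hr⟩ := QuotientGroup.mk_surjective d₀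
  obtain ⟨sE, hsE⟩ := QuotientGroup.mk_surjective e₁
  set u := r⁻¹ with hudef
  set v := r * sE⁻¹ with hvdef
  have hu : (act u)⁻¹ c₀ = d₀ := by
    rw [← map_inv, hact, hudef, inv_inv, hc₀def]
    show (QuotientGroup.mk (r * 1) : Q) = d₀
    rw [mul_one, hr]
  have hv : (act v)⁻¹ d₀ = e₁ := by
    rw [← map_inv, hact, hvdef, ← hr]
    show (QuotientGroup.mk ((r * sE⁻¹)⁻¹ * r) : Q) = e₁
    rw [← hsE]
    congr 1
    group
  -- ψ and its additivity
  set ψ : FreeGroup (Fin m) → ℝ := fun g => Lf ω act (ρ g) c₀ with hψdef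
  have hψadd : ∀ a b : FreeGroup (Fin m), ψ (a * b) = ψ a + ψ b := by
    intro a b'
    rw [hψdef]
    simp only [map_mul]
    rw [Lf_mul, hfixc₀' (ρ a) ⟨a, rfl⟩]
  set Cm := ∑ j, |ψ (FreeGroup.of j)| with hCmdef
  have hCm0 : 0 ≤ Cm := Finset.sum_nonneg fun _ _ => abs_nonneg _
  -- bound independent of k
  set Sn := Set.range (FreeGroup.of : Fin n → FreeGroup (Fin n)) with hSndef
  set B0 := (2 * (ciNorm Sn v) : ℝ) with hB0def
  -- get a contradiction
  obtain ⟨k, hk⟩ := exists_nat_gt (C * (B0 + D) * Cm)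
  set wk := u * (b ^ k * v * (b ^ k)⁻¹ * v⁻¹) * u⁻¹ with hwkdef
  have hbk : act (b ^ k) = 1 := by rw [map_pow, hbact, one_pow]
  have hactwk : act wk = 1 := by
    rw [hwkdef]
    simp only [map_mul, map_inv, hbk]
    group
  have hwkH : wk ∈ H := hmemH wk (by rw [hactwk]; rfl)
  obtain ⟨gk, hgk⟩ := hwkH
  -- the value of ψ at gk
  have hval : ψ gk = k * Lf ω act b d₀ := by
    rw [hψdef]
    simp only
    rw [hgk, hwkdef, Lf_central ω act u v b hbact k c₀, hu, hv,
      Lf_pow_triv ω act hbact, Lf_pow_triv ω act hbact, hLb₁]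
    ring
  have hvalge : (k : ℝ) ≤ ψ gk := by
    rw [hval]
    calc (k:ℝ) = k * 1 := by ring
      _ ≤ k * Lf ω act b d₀ := by
          apply mul_le_mul_of_nonneg_left hLb₀ (by positivity)
  -- norm bound on wk
  have hsplit : wk = ((u * b ^ k) * v * (u * b ^ k)⁻¹) * (u * v⁻¹ * u⁻¹) := by
    rw [hwkdef]; group
  have hnorm : (ciNorm Sn wk : ℝ) ≤ B0 := by
    have h1 : ciNorm Sn wk ≤ ciNorm Sn ((u * b ^ k) * v * (u * b ^ k)⁻¹) +
        ciNorm Sn (u * v⁻¹ * u⁻¹) := by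
      rw [hsplit]; exact ciNorm_mul_le _ _
    have h2 : ciNorm Sn ((u * b ^ k) * v * (u * b ^ k)⁻¹) ≤ ciNorm Sn v :=
      ciNorm_conj_le _ _
    have h3 : ciNorm Sn (u * v⁻¹ * u⁻¹) ≤ ciNorm Sn v := by
      calc ciNorm Sn (u * v⁻¹ * u⁻¹) ≤ ciNorm Sn v⁻¹ := ciNorm_conj_le _ _
        _ ≤ ciNorm Sn v := ciNorm_inv_le _
    rw [hB0def]
    push_cast
    have := le_trans h1 (add_le_add h2 h3)
    calc (ciNorm Sn wk : ℝ) ≤ (ciNorm Sn v : ℝ) + (ciNorm Sn v : ℝ) := by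
          exact_mod_cast this
      _ = 2 * (ciNorm Sn v : ℝ) := by ring
  -- QI lower bound
  have hlow := (hQE gk 1).1
  have hd1 : freeDist m gk 1 = ((ciNorm (Set.range (FreeGroup.of : Fin m → FreeGroup (Fin m))) gk : ℕ) : ℝ) := by
    simp [freeDist, ciDist]
  have hd2 : freeDist n (ρ gk) (ρ 1) = (ciNorm Sn wk : ℝ) := by
    rw [map_one]
    simp [freeDist, ciDist, hgk, hSndef]
  rw [hd1, hd2] at hlow
  set Nk := ((ciNorm (Set.range (FreeGroup.of : Fin m → FreeGroup (Fin m))) gk : ℕ) : ℝ) with hNk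
  have hNk0 : 0 ≤ Nk := Nat.cast_nonneg _
  have hNkle : Nk ≤ C * (B0 + D) := by
    have h4 : 1/C * Nk ≤ B0 + D := by linarith
    calc Nk = C * (1/C * Nk) := by field_simp
      _ ≤ C * (B0 + D) := by
          apply mul_le_mul_of_nonneg_left h4 (le_of_lt hC)
  -- ψ bound
  have hpsib : |ψ gk| ≤ Nk * Cm := by
    rw [hNk, hCmdef]
    exact abs_psi_le ψ hψadd gk
  have : (k : ℝ) ≤ C * (B0 + D) * Cm := by
    calc (k:ℝ) ≤ ψ gk := hvalge
      _ ≤ |ψ gk| := le_abs_self _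
      _ ≤ Nk * Cm := hpsib
      _ ≤ C * (B0 + D) * Cm := mul_le_mul_of_nonneg_right hNkle hCm0
  linarith
end

section
/- Every nontrivial normal subgroup N of the free group F_n is unbounded with respect to the bi-invariant word metric associated with the standard generating set; more precisely, N contains a nontrivial cyclically reduced element w, and ‖w^k‖ → ∞ as k → ∞. -/
open FreeGroup List

namespace CIAux

variable {α : Type*} [DecidableEq α]

/-- A word is reduced iff no adjacent cancelling pair. -/
def IsRed (L : List (α × Bool)) : Prop :=
  List.Chain' (fun a b => b ≠ (a.1, !a.2)) L

theorem IsRed.reduce_eq {L : List (α × Bool)} (h : IsRed L) : FreeGroup.reduce L = L := by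
  induction L with
  | nil => rfl
  | cons x L ih =>
    have hL : IsRed L := h.tail
    rw [FreeGroup.reduce.cons, ih hL]
    cases L with
    | nil => rfl
    | cons hd tl =>
      have hne : hd ≠ (x.1, !x.2) := (List.isChain_cons_cons.mp h).1
      have : ¬(x.1 = hd.1 ∧ x.2 = !hd.2) := by
        rintro ⟨h1, h2⟩
        exact hne (by cases hd; cases x; simp_all)
      simp [this]

theorem isRed_reduce (L : List (α × Bool)) : IsRed (FreeGroup.reduce L) := by
  induction L with
  | nil => exact List.isChain_nil
  | cons x L ih =>
    rw [FreeGroup.reduce.cons]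
    rcases h : FreeGroup.reduce L with _ | ⟨hd, tl⟩
    · exact List.isChain_singleton x
    · rw [h] at ih
      by_cases hc : x.1 = hd.1 ∧ x.2 = !hd.2
      · simpa [hc, IsRed, List.Chain'] using ih.tail
      · have : hd ≠ (x.1, !x.2) := by
          intro he
          exact hc ⟨(congrArg Prod.fst he).symm, by rw [he]; simp⟩
        simp only [if_neg hc]
        exact List.isChain_cons_cons.mpr ⟨this, ih⟩

theorem isRed_toWord (g : FreeGroup α) : IsRed g.toWord := by
  rw [← FreeGroup.reduce_toWord]
  exact isRed_reduce _

theorem invRev_append (L₁ L₂ : List (α × Bool)) :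
    FreeGroup.invRev (L₁ ++ L₂) = FreeGroup.invRev L₂ ++ FreeGroup.invRev L₁ := by
  simp [FreeGroup.invRev]

theorem invRev_singleton (x : α × Bool) :
    FreeGroup.invRev [x] = [(x.1, !x.2)] := by
  simp [FreeGroup.invRev]

theorem toWord_mul (g h : FreeGroup α) :
    (g * h).toWord = FreeGroup.reduce (g.toWord ++ h.toWord) := by
  conv_lhs => rw [← FreeGroup.mk_toWord (x := g), ← FreeGroup.mk_toWord (x := h)]
  rw [FreeGroup.mul_mk, FreeGroup.toWord_mk]

/-- The key cancellation structure lemma. -/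
theorem cancel_aux (m : ℕ) : ∀ P Q : List (α × Bool), P.length ≤ m → IsRed P → IsRed Q →
    ∃ A C B : List (α × Bool), P = A ++ C ∧ Q = FreeGroup.invRev C ++ B ∧
      FreeGroup.reduce (P ++ Q) = A ++ B := by
  induction m with
  | zero =>
    intro P Q hlen hP hQ
    have : P = [] := List.eq_nil_of_length_eq_zero (Nat.le_zero.mp hlen)
    subst this
    exact ⟨[], [], Q, rfl, by simp [FreeGroup.invRev], by simpa using hQ.reduce_eq⟩
  | succ m ih =>
    intro P Q hlen hP hQ
    rcases List.eq_nil_or_concat P with rfl | ⟨P', p, rfl⟩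
    · exact ⟨[], [], Q, rfl, by simp [FreeGroup.invRev], by simpa using hQ.reduce_eq⟩
    rw [List.concat_eq_append] at hlen hP ⊢
    rcases Q with _ | ⟨q, Q'⟩
    · exact ⟨P' ++ [p], [], [], by simp, by simp [FreeGroup.invRev], by simpa using hP.reduce_eq⟩
    by_cases hq : q = (p.1, !p.2)
    · -- cancellation at the junction
      have hP' : IsRed P' := hP.prefix ⟨[p], rfl⟩
      have hQ' : IsRed Q' := hQ.tail
      have hlen' : P'.length ≤ m := by
        have := hlen; simp [List.length_append] at this; omega
      obtain ⟨A, C, B, h1, h2, h3⟩ := ih P' Q' hlen' hP' hQ'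
      refine ⟨A, C ++ [p], B, by rw [h1, List.append_assoc], ?_, ?_⟩
      · rw [invRev_append, invRev_singleton, ← hq, h2]
        simp
      · rw [← h3]
        have hstep : FreeGroup.Red.Step (P' ++ [p] ++ q :: Q') (P' ++ Q') := by
          subst hq
          have : P' ++ [p] ++ (p.1, !p.2) :: Q' = P' ++ (p.1, p.2) :: (p.1, !p.2) :: Q' := by
            simp
          rw [this]
          exact FreeGroup.Red.Step.not
        exact FreeGroup.reduce.Step.eq hstep
    · -- no cancellation: already reduced
      refine ⟨P' ++ [p], [], q :: Q', by simp, by simp [FreeGroup.invRev], ?_⟩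
      have : IsRed ((P' ++ [p]) ++ q :: Q') := by
        apply List.IsChain.append hP hQ
        intro x hx y hy
        simp at hx hy
        subst hx; subst hy
        exact fun hcon => hq hcon
      simpa using this.reduce_eq

theorem exists_cancel (g h : FreeGroup α) :
    ∃ A C B : List (α × Bool), g.toWord = A ++ C ∧ h.toWord = FreeGroup.invRev C ++ B ∧
      (g * h).toWord = A ++ B := by
  obtain ⟨A, C, B, h1, h2, h3⟩ :=
    cancel_aux g.toWord.length g.toWord h.toWord le_rfl (isRed_toWord g) (isRed_toWord h)
  exact ⟨A, C, B, h1, h2, by rw [toWord_mul, h3]⟩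


section Occ

variable {β : Type*} [DecidableEq β]

/-- Number of occurrences of `u` as an infix of `v`, counted by position. -/
def occ (u v : List β) : ℕ :=
  ((Finset.range v.length).filter (fun i => (v.drop i).take u.length = u)).card

lemma occ_nil (u : List β) : occ u [] = 0 := by simp [occ]

lemma match_bound {u v : List β} {i : ℕ} (hL : 0 < u.length)
    (h : (v.drop i).take u.length = u) :
    i + u.length ≤ v.length := by
  have := congrArg List.length h
  simp only [List.length_take, List.length_drop] at this
  omega

lemma occ_le (u v : List β) : occ u v ≤ v.length :=
  le_trans (Finset.card_filter_le _ _) (by simp)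

lemma match_append_left {u A B : List β} {i : ℕ} (h : i + u.length ≤ A.length) :
    (((A ++ B).drop i).take u.length = u) ↔ ((A.drop i).take u.length = u) := by
  rw [List.drop_append_of_le_length (by omega),
    List.take_append_of_le_length (by simp; omega)]

lemma match_append_right (u A B : List β) (j : ℕ) :
    (((A ++ B).drop (A.length + j)).take u.length = u) ↔ ((B.drop j).take u.length = u) := by
  rw [List.drop_append, List.drop_eq_nil_of_le (by omega), List.nil_append, Nat.add_sub_cancel_left]

lemma occ_append_ge (u A B : List β) (hu : u ≠ []) :
    occ u A + occ u B ≤ occ u (A ++ B) := by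
  have hL : 0 < u.length := List.length_pos_iff.mpr hu
  classical
  set sA := (Finset.range A.length).filter (fun i => (A.drop i).take u.length = u) with hsA
  set sB := (Finset.range B.length).filter (fun i => (B.drop i).take u.length = u) with hsB
  set sAB := (Finset.range (A ++ B).length).filter
      (fun i => ((A ++ B).drop i).take u.length = u) with hsAB
  have h1 : sA ⊆ sAB := by
    intro i hi
    simp only [hsA, Finset.mem_filter, Finset.mem_range] at hi
    have hb := match_bound hL hi.2
    simp only [hsAB, Finset.mem_filter, Finset.mem_range, List.length_append]
    exact ⟨by omega, (match_append_left hb).mpr hi.2⟩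
  have h2 : sB.image (fun j => A.length + j) ⊆ sAB := by
    intro i hi
    simp only [Finset.mem_image, hsB, Finset.mem_filter, Finset.mem_range] at hi
    obtain ⟨j, ⟨hj1, hj2⟩, rfl⟩ := hi
    simp only [hsAB, Finset.mem_filter, Finset.mem_range, List.length_append]
    exact ⟨by omega, (match_append_right u A B j).mpr hj2⟩
  have hdisj : Disjoint sA (sB.image (fun j => A.length + j)) := by
    rw [Finset.disjoint_left]
    intro i hi hi2
    simp only [hsA, Finset.mem_filter, Finset.mem_range] at hi
    have hb := match_bound hL hi.2
    simp only [Finset.mem_image] at hi2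
    obtain ⟨j, _, rfl⟩ := hi2
    omega
  calc occ u A + occ u B = sA.card + (sB.image (fun j => A.length + j)).card := by
        rw [Finset.card_image_of_injective _ (add_right_injective _)]; rfl
    _ = (sA ∪ sB.image (fun j => A.length + j)).card := (Finset.card_union_of_disjoint hdisj).symm
    _ ≤ sAB.card := Finset.card_le_card (Finset.union_subset h1 h2)

lemma occ_append_le (u A B : List β) (hu : u ≠ []) :
    occ u (A ++ B) ≤ occ u A + occ u B + (u.length - 1) := by
  have hL : 0 < u.length := List.length_pos_iff.mpr hu
  classical
  set sA := (Finset.range A.length).filter (fun i => (A.drop i).take u.length = u) with hsA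
  set sB := (Finset.range B.length).filter (fun i => (B.drop i).take u.length = u) with hsB
  set sAB := (Finset.range (A ++ B).length).filter
      (fun i => ((A ++ B).drop i).take u.length = u) with hsAB
  have hsub : sAB ⊆ sA ∪ sB.image (fun j => A.length + j) ∪
      Finset.Ico (A.length + 1 - u.length) A.length := by
    intro i hi
    simp only [hsAB, Finset.mem_filter, Finset.mem_range, List.length_append] at hi
    obtain ⟨hi1, hi2⟩ := hi
    have hb := match_bound hL hi2
    simp only [List.length_append] at hb
    by_cases hc1 : i + u.length ≤ A.length
    · apply Finset.mem_union_left; apply Finset.mem_union_left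
      simp only [hsA, Finset.mem_filter, Finset.mem_range]
      exact ⟨by omega, (match_append_left hc1).mp hi2⟩
    · by_cases hc2 : A.length ≤ i
      · apply Finset.mem_union_left; apply Finset.mem_union_right
        refine Finset.mem_image.mpr ⟨i - A.length, ?_, by omega⟩
        simp only [hsB, Finset.mem_filter, Finset.mem_range]
        have : i = A.length + (i - A.length) := by omega
        rw [this] at hi2
        exact ⟨by omega, (match_append_right u A B _).mp hi2⟩
      · apply Finset.mem_union_right
        simp only [Finset.mem_Ico]
        omega
  calc sAB.card ≤ _ := Finset.card_le_card hsub
    _ ≤ (sA ∪ sB.image (fun j => A.length + j)).card +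
        (Finset.Ico (A.length + 1 - u.length) A.length).card := Finset.card_union_le _ _
    _ ≤ (sA.card + (sB.image (fun j => A.length + j)).card) +
        (Finset.Ico (A.length + 1 - u.length) A.length).card := by
        exact Nat.add_le_add_right (Finset.card_union_le _ _) _
    _ ≤ occ u A + occ u B + (u.length - 1) := by
        rw [Finset.card_image_of_injective _ (add_right_injective _), Nat.card_Ico]
        have : A.length - (A.length + 1 - u.length) ≤ u.length - 1 := by omega
        exact Nat.add_le_add (le_refl _) this

end Occ

section InvRev

variable {α : Type*} [DecidableEq α]

lemma match_invRev {u v : List (α × Bool)} {i : ℕ} (hL : 0 < u.length)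
    (h : ((FreeGroup.invRev v).drop i).take u.length = u) :
    ((v.drop (v.length - u.length - i)).take (FreeGroup.invRev u).length
      = FreeGroup.invRev u) := by
  have hb := match_bound hL h
  rw [FreeGroup.invRev_length] at hb
  rw [FreeGroup.invRev_length]
  have key : FreeGroup.invRev u
      = FreeGroup.invRev (((FreeGroup.invRev v).drop i).take u.length) := by rw [h]
  rw [key]
  simp only [FreeGroup.invRev, List.drop_reverse, List.take_reverse, List.length_map,
    List.length_take, List.length_reverse, List.reverse_reverse, List.map_reverse,
    List.map_map, List.drop_take, List.map_take, List.map_drop]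
  have hco : (fun g : α × Bool => (g.1, !g.2)) ∘ (fun g : α × Bool => (g.1, !g.2)) = id := by
    funext x; simp
  rw [hco, List.map_id]
  congr 1
  · omega
  · congr 1; omega

lemma occ_invRev (u v : List (α × Bool)) (hu : u ≠ []) :
    occ u (FreeGroup.invRev v) = occ (FreeGroup.invRev u) v := by
  have hL : 0 < u.length := List.length_pos_iff.mpr hu
  have hL' : 0 < (FreeGroup.invRev u).length := by rw [FreeGroup.invRev_length]; exact hL
  unfold occ
  refine Finset.card_bij' (fun i _ => v.length - u.length - i)
    (fun j _ => v.length - u.length - j) ?_ ?_ ?_ ?_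
  · intro i hi
    simp only [Finset.mem_filter, Finset.mem_range] at hi ⊢
    have hb := match_bound hL hi.2
    rw [FreeGroup.invRev_length] at hb
    exact ⟨by omega, match_invRev hL hi.2⟩
  · intro j hj
    simp only [Finset.mem_filter, Finset.mem_range] at hj ⊢
    have hb := match_bound hL' hj.2
    have hj2 : ((FreeGroup.invRev (FreeGroup.invRev v)).drop j).take
        (FreeGroup.invRev u).length = FreeGroup.invRev u := by
      rw [FreeGroup.invRev_invRev]; exact hj.2
    have := match_invRev hL' hj2
    rw [FreeGroup.invRev_invRev, FreeGroup.invRev_length, FreeGroup.invRev_length] at this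
    refine ⟨by rw [FreeGroup.invRev_length]; omega, this⟩
  · intro i hi
    simp only [Finset.mem_filter, Finset.mem_range] at hi
    have hb := match_bound hL hi.2
    rw [FreeGroup.invRev_length] at hb
    show v.length - u.length - (v.length - u.length - i) = i
    omega
  · intro j hj
    simp only [Finset.mem_filter, Finset.mem_range] at hj
    have hb := match_bound hL' hj.2
    rw [FreeGroup.invRev_length] at hb
    show v.length - u.length - (v.length - u.length - j) = j
    omega

end InvRev

section Phi

variable {α : Type*} [DecidableEq α]

/-- The counting quasimorphism associated to the pattern `u`. -/
def phi (u : List (α × Bool)) (g : FreeGroup α) : ℤ :=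
  (occ u g.toWord : ℤ) - occ (FreeGroup.invRev u) g.toWord

lemma invRev_ne_nil {u : List (α × Bool)} (hu : u ≠ []) : FreeGroup.invRev u ≠ [] := by
  intro h
  have := congrArg List.length h
  rw [FreeGroup.invRev_length] at this
  exact hu (List.eq_nil_of_length_eq_zero this)

lemma phi_one (u : List (α × Bool)) : phi u (1 : FreeGroup α) = 0 := by
  simp [phi, FreeGroup.toWord_one, occ_nil]

lemma phi_inv (u : List (α × Bool)) (hu : u ≠ []) (g : FreeGroup α) :
    phi u g⁻¹ = - phi u g := by
  unfold phi
  rw [FreeGroup.toWord_inv, occ_invRev u g.toWord hu,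
    occ_invRev _ g.toWord (invRev_ne_nil hu), FreeGroup.invRev_invRev]
  ring

lemma phi_defect (u : List (α × Bool)) (hu : u ≠ []) (g h : FreeGroup α) :
    |phi u (g * h) - phi u g - phi u h| ≤ 6 * ((u.length - 1 : ℕ) : ℤ) := by
  obtain ⟨A, C, B, h1, h2, h3⟩ := exists_cancel g h
  have hu' : FreeGroup.invRev u ≠ [] := invRev_ne_nil hu
  have e1 := occ_append_ge u A C hu
  have e2 := occ_append_le u A C hu
  have e3 := occ_append_ge (FreeGroup.invRev u) A C hu'
  have e4 := occ_append_le (FreeGroup.invRev u) A C hu'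
  have e5 := occ_append_ge u (FreeGroup.invRev C) B hu
  have e6 := occ_append_le u (FreeGroup.invRev C) B hu
  have e7 := occ_append_ge (FreeGroup.invRev u) (FreeGroup.invRev C) B hu'
  have e8 := occ_append_le (FreeGroup.invRev u) (FreeGroup.invRev C) B hu'
  have e9 := occ_append_ge u A B hu
  have e10 := occ_append_le u A B hu
  have e11 := occ_append_ge (FreeGroup.invRev u) A B hu'
  have e12 := occ_append_le (FreeGroup.invRev u) A B hu'
  have k1 : occ u (FreeGroup.invRev C) = occ (FreeGroup.invRev u) C := occ_invRev u C hu
  have k2 : occ (FreeGroup.invRev u) (FreeGroup.invRev C) = occ u C := by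
    rw [occ_invRev _ C hu', FreeGroup.invRev_invRev]
  have k3 : (FreeGroup.invRev u).length = u.length := FreeGroup.invRev_length
  rw [k1] at e5 e6
  rw [k2] at e7 e8
  rw [k3] at e4 e8 e12
  unfold phi
  rw [h1, h2, h3]
  rw [abs_le]
  constructor <;> push_cast <;> omega

lemma phi_defect' (u : List (α × Bool)) (hu : u ≠ []) (g h : FreeGroup α) :
    phi u g + phi u h - 6 * ((u.length - 1 : ℕ) : ℤ) ≤ phi u (g * h) ∧
    phi u (g * h) ≤ phi u g + phi u h + 6 * ((u.length - 1 : ℕ) : ℤ) := by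
  have := phi_defect u hu g h
  rw [abs_le] at this
  constructor <;> linarith [this.1, this.2]

lemma phi_conj (u : List (α × Bool)) (hu : u ≠ []) (g s : FreeGroup α) :
    |phi u (g * s * g⁻¹)| ≤ |phi u s| + 12 * ((u.length - 1 : ℕ) : ℤ) := by
  have h1 := phi_defect' u hu (g * s) g⁻¹
  have h2 := phi_defect' u hu g s
  have h3 := phi_inv u hu g
  rw [abs_le]
  constructor <;>
    [linarith [h1.1, h2.1, neg_abs_le (phi u s)]; linarith [h1.2, h2.2, le_abs_self (phi u s)]]

lemma phi_conjGens (u : List (α × Bool)) (hu : u ≠ [])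
    (x : FreeGroup (α)) (hx : x ∈ conjGens (Set.range (FreeGroup.of : α → FreeGroup α))) :
    |phi u x| ≤ 1 + 12 * ((u.length - 1 : ℕ) : ℤ) := by
  obtain ⟨g, s, hs, rfl⟩ := hx
  have hlen : s.toWord.length = 1 := by
    rcases hs with ⟨i, rfl⟩ | ⟨i, hi⟩
    · rw [FreeGroup.toWord_of]; rfl
    · have : s = (FreeGroup.of i)⁻¹ := by rw [hi]; exact (inv_inv s).symm
      rw [this, FreeGroup.toWord_inv, FreeGroup.invRev_length, FreeGroup.toWord_of]; rfl
  have hsb : |phi u s| ≤ 1 := by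
    have o1 : occ u s.toWord ≤ 1 := by
      have := occ_le u s.toWord; omega
    have o2 : occ (FreeGroup.invRev u) s.toWord ≤ 1 := by
      have := occ_le (FreeGroup.invRev u) s.toWord; omega
    unfold phi
    rw [abs_le]
    constructor <;> push_cast <;> omega
  calc |phi u (g * s * g⁻¹)| ≤ |phi u s| + 12 * ((u.length - 1 : ℕ) : ℤ) := phi_conj u hu g s
    _ ≤ 1 + 12 * ((u.length - 1 : ℕ) : ℤ) := by linarith

lemma phi_prod (u : List (α × Bool)) (hu : u ≠ []) :
    ∀ l : List (FreeGroup α),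
    (∀ x ∈ l, x ∈ conjGens (Set.range (FreeGroup.of : α → FreeGroup α))) →
    |phi u l.prod| ≤ l.length * (1 + 18 * ((u.length - 1 : ℕ) : ℤ)) := by
  intro l
  induction l with
  | nil => intro _; simp [phi_one]
  | cons x l ih =>
    intro hmem
    have hx := phi_conjGens u hu x (hmem x List.mem_cons_self)
    have hl := ih (fun y hy => hmem y (List.mem_cons_of_mem _ hy))
    have hd := phi_defect' u hu x l.prod
    rw [List.prod_cons, List.length_cons]
    rw [abs_le] at hx hl ⊢
    have hd6 : (0:ℤ) ≤ ((u.length - 1 : ℕ) : ℤ) := by positivity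
    have hcast : ((l.length + 1 : ℕ) : ℤ) = (l.length : ℤ) + 1 := by push_cast; ring
    rw [hcast]
    constructor
    · nlinarith [hx.1, hl.1, hd.1]
    · nlinarith [hx.2, hl.2, hd.2]

end Phi

section Pow

variable {α : Type*} [DecidableEq α]

lemma getElem_of_list_eq {γ : Type*} {l₁ l₂ : List γ} (h : l₁ = l₂) (i : ℕ)
    (h₁ : i < l₁.length) : l₁[i]'h₁ = l₂[i]'(h ▸ h₁) := by subst h; rfl

lemma getElem_idx_congr {γ : Type*} {l : List γ} {i j : ℕ} (h : i = j)
    (h₁ : i < l.length) : l[i]'h₁ = l[j]'(h ▸ h₁) := by subst h; rfl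

/-- Cyclic junction condition on a word. -/
def Junction (u : List (α × Bool)) : Prop :=
  ∀ x ∈ u.head?, ∀ y ∈ u.getLast?, x ≠ (y.1, !y.2)

lemma flatten_succ (u : List (α × Bool)) (k : ℕ) :
    (List.replicate (k+1) u).flatten = u ++ (List.replicate k u).flatten := by
  rw [List.replicate_succ, List.flatten_cons]

lemma flatten_succ' (u : List (α × Bool)) (k : ℕ) :
    (List.replicate (k+1) u).flatten = (List.replicate k u).flatten ++ u := by
  rw [List.replicate_succ', List.flatten_append]
  simp

lemma flatten_length (u : List (α × Bool)) (k : ℕ) :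
    ((List.replicate k u).flatten).length = k * u.length := by
  induction k with
  | zero => simp
  | succ k ih => rw [flatten_succ, List.length_append, ih]; ring

lemma isRed_flatten (u : List (α × Bool)) (hu : u ≠ []) (hred : IsRed u)
    (hj : Junction u) (k : ℕ) : IsRed ((List.replicate k u).flatten) := by
  induction k with
  | zero => exact List.isChain_nil
  | succ k ih =>
    rw [flatten_succ]
    apply List.IsChain.append hred ih
    intro x hx y hy
    cases k with
    | zero => simp at hy
    | succ k =>
      rw [flatten_succ] at hy
      rw [List.head?_append] at hy
      have hhead : ((u.head?).or ((List.replicate k u).flatten).head?) = u.head? := by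
        cases hh : u.head? with
        | none => exact absurd (List.head?_eq_none_iff.mp hh) hu
        | some z => rfl
      rw [hhead] at hy
      exact hj y hy x hx

lemma toWord_pow (w : FreeGroup α) (hred : Junction w.toWord) (k : ℕ) :
    (w ^ k).toWord = (List.replicate k w.toWord).flatten := by
  rcases eq_or_ne w 1 with rfl | hw
  · rw [one_pow, FreeGroup.toWord_one]
    symm
    rw [List.flatten_eq_nil_iff]
    intro l hl
    rw [List.eq_of_mem_replicate hl]
  · have hu : w.toWord ≠ [] := fun h => hw (FreeGroup.toWord_eq_nil_iff.mp h)
    induction k with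
    | zero => simp [pow_zero, FreeGroup.toWord_one]
    | succ k ih =>
      rw [pow_succ, toWord_mul, ih, ← flatten_succ']
      exact (isRed_flatten w.toWord hu (isRed_toWord w) hred (k+1)).reduce_eq

lemma occ_pow_ge (u : List (α × Bool)) (hu : u ≠ []) (k : ℕ) :
    k ≤ occ u ((List.replicate k u).flatten) := by
  have hL : 0 < u.length := List.length_pos_iff.mpr hu
  have hdrop : ∀ j ≤ k, ((List.replicate k u).flatten).drop (j * u.length)
      = (List.replicate (k - j) u).flatten := by
    intro j hj
    induction j with
    | zero => simp
    | succ j ih =>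
      have hj' : j ≤ k := by omega
      have h1 : (j+1) * u.length = j * u.length + u.length := by ring
      rw [h1, ← List.drop_drop, ih hj']
      have h2 : k - j = (k - (j+1)) + 1 := by omega
      rw [h2, flatten_succ, List.drop_left]
  have hmatch : ∀ j < k, (((List.replicate k u).flatten).drop (j * u.length)).take u.length
      = u := by
    intro j hj
    rw [hdrop j (le_of_lt hj)]
    have h3 : k - j = (k - j - 1) + 1 := by omega
    rw [h3, flatten_succ, List.take_left]
  have hinj : Finset.card (Finset.range k) ≤ occ u ((List.replicate k u).flatten) := by
    apply Finset.card_le_card_of_injOn (fun j => j * u.length)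
    · intro j hj
      simp only [Finset.mem_coe, Finset.mem_range] at hj
      simp only [Finset.mem_coe, Finset.mem_filter, Finset.mem_range, flatten_length]
      refine ⟨?_, hmatch j hj⟩
      calc j * u.length < (j + 1) * u.length := by nlinarith
        _ ≤ k * u.length := Nat.mul_le_mul_right _ (by omega)
    · intro a _ b _ hab
      simp only at hab
      exact Nat.eq_of_mul_eq_mul_right hL hab
  simpa using hinj

lemma flatten_getElem? (u : List (α × Bool)) (hL : 0 < u.length) (k j : ℕ)
    (hj : j < k * u.length) :
    ((List.replicate k u).flatten)[j]? = u[j % u.length]? := by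
  induction k generalizing j with
  | zero => omega
  | succ k ih =>
    rw [flatten_succ]
    by_cases hc : j < u.length
    · rw [List.getElem?_append_left hc, Nat.mod_eq_of_lt hc]
    · push_neg at hc
      have hj' : j - u.length < k * u.length := by
        have : (k+1) * u.length = k * u.length + u.length := by ring
        omega
      rw [List.getElem?_append_right hc, ih _ hj']
      congr 1
      conv_rhs => rw [Nat.mod_eq_sub_mod hc]

lemma flatten_getElem (u : List (α × Bool)) (hL : 0 < u.length) (k j : ℕ)
    (hj : j < k * u.length) :
    ((List.replicate k u).flatten)[j]'(by rw [flatten_length]; exact hj)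
      = u[j % u.length]'(Nat.mod_lt _ hL) := by
  have h1 := flatten_getElem? u hL k j hj
  rw [List.getElem?_eq_getElem (by rw [flatten_length]; exact hj),
    List.getElem?_eq_getElem (Nat.mod_lt _ hL)] at h1
  exact Option.some_injective _ h1

/-- The crucial lemma: the inverse pattern never occurs in a power of a
cyclically reduced word. -/
lemma occ_invRev_pow (u : List (α × Bool)) (hu : u ≠ []) (hred : IsRed u)
    (hj : Junction u) (k : ℕ) :
    occ (FreeGroup.invRev u) ((List.replicate k u).flatten) = 0 := by
  have hL : 0 < u.length := List.length_pos_iff.mpr hu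
  unfold occ
  rw [Finset.card_eq_zero, Finset.filter_eq_empty_iff]
  intro i _ hmatch
  rw [FreeGroup.invRev_length] at hmatch
  have hb : i + u.length ≤ k * u.length := by
    have h := match_bound (u := FreeGroup.invRev u)
      (v := (List.replicate k u).flatten) (i := i)
      (by rw [FreeGroup.invRev_length]; exact hL)
      (by rw [FreeGroup.invRev_length]; exact hmatch)
    rw [FreeGroup.invRev_length, flatten_length] at h
    exact h
  -- pointwise consequence of the match
  have key : ∀ t, (ht : t < u.length) →
      ((List.replicate k u).flatten)[i + t]'(by rw [flatten_length]; omega)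
      = ((u[u.length - 1 - t]'(by omega)).1, !(u[u.length - 1 - t]'(by omega)).2) := by
    intro t ht
    have pf1 : t < ((((List.replicate k u).flatten).drop i).take u.length).length := by
      rw [List.length_take, List.length_drop, flatten_length]; omega
    have e3 : ((((List.replicate k u).flatten).drop i).take u.length)[t]'pf1
        = (FreeGroup.invRev u)[t]'(by rw [FreeGroup.invRev_length]; exact ht) :=
      getElem_of_list_eq hmatch t pf1
    have e1 : ((((List.replicate k u).flatten).drop i).take u.length)[t]'pf1
        = (((List.replicate k u).flatten).drop i)[t]'(by
            rw [List.length_drop, flatten_length]; omega) := List.getElem_take ..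
    have e2 : (((List.replicate k u).flatten).drop i)[t]'(by
            rw [List.length_drop, flatten_length]; omega)
        = ((List.replicate k u).flatten)[i + t]'(by rw [flatten_length]; omega) :=
      List.getElem_drop ..
    have e4 : (FreeGroup.invRev u)[t]'(by rw [FreeGroup.invRev_length]; exact ht)
        = ((u[u.length - 1 - t]'(by omega)).1, !(u[u.length - 1 - t]'(by omega)).2) := by
      show ((u.map (fun x : α × Bool => (x.1, !x.2))).reverse)[t]'(by simp; exact ht) = _
      rw [List.getElem_reverse]
      have hidx2 : (u.map (fun x : α × Bool => (x.1, !x.2))).length - 1 - t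
          = u.length - 1 - t := by rw [List.length_map]
      rw [getElem_idx_congr hidx2, List.getElem_map]
    rw [← e2, ← e1, e3, e4]
  -- the symmetric relation
  have rel : ∀ a b, (ha : a < u.length) → (hb' : b < u.length) → (a + b) % u.length = (i + (u.length - 1)) % u.length →
      u[a]'ha = ((u[b]'hb').1, !(u[b]'hb').2) := by
    intro a b ha hb' hab
    have ht : u.length - 1 - b < u.length := by omega
    have h1 := key (u.length - 1 - b) ht
    have hidx : u.length - 1 - (u.length - 1 - b) = b := by omega
    have hsum : i + (u.length - 1 - b) + b = i + (u.length - 1) := by omega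
    have hmod : (i + (u.length - 1 - b)) % u.length = a := by
      have m1 : (i + (u.length - 1 - b)) + b ≡ a + b [MOD u.length] := by
        unfold Nat.ModEq
        rw [hsum, hab]
      have m2 := Nat.ModEq.add_right_cancel' b m1
      unfold Nat.ModEq at m2
      rw [Nat.mod_eq_of_lt ha] at m2
      exact m2
    have h2 : ((List.replicate k u).flatten)[i + (u.length - 1 - b)]'(by
        rw [flatten_length]; omega) = u[(i + (u.length - 1 - b)) % u.length]'(Nat.mod_lt _ hL) :=
      flatten_getElem u hL k _ (by omega)
    calc u[a]'ha = u[(i + (u.length - 1 - b)) % u.length]'(Nat.mod_lt _ hL) :=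
          (getElem_idx_congr hmod (Nat.mod_lt _ hL)).symm
      _ = ((List.replicate k u).flatten)[i + (u.length - 1 - b)]'(by
            rw [flatten_length]; omega) := h2.symm
      _ = ((u[u.length - 1 - (u.length - 1 - b)]'(by omega)).1, !(u[u.length - 1 - (u.length - 1 - b)]'(by omega)).2) := h1
      _ = ((u[b]'hb').1, !(u[b]'hb').2) := by
            rw [getElem_idx_congr hidx]
  -- derive the contradiction
  set r := (i + (u.length - 1)) % u.length with hr
  have hrL : r < u.length := Nat.mod_lt _ hL
  rcases Nat.even_or_odd r with ⟨a, ha⟩ | ⟨a, ha⟩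
  · have haL : a < u.length := by omega
    have heq := rel a a haL haL (by
      rw [show a + a = r by omega, Nat.mod_eq_of_lt hrL])
    have := congrArg Prod.snd heq
    simp at this
  · by_cases hrl : r = u.length - 1
    · have heq := rel (u.length - 1) 0 (by omega) (by omega) (by
        rw [show u.length - 1 + 0 = r by omega, Nat.mod_eq_of_lt hrL])
      have hx : u[0]'(by omega) ∈ u.head? := by
        rw [List.head?_eq_getElem?, List.getElem?_eq_getElem (by omega)]
        rfl
      have hy : u[u.length-1]'(by omega) ∈ u.getLast? := by
        rw [List.getLast?_eq_getElem?, List.getElem?_eq_getElem (by omega)]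
        rfl
      apply hj _ hx _ hy
      rw [heq]
      simp
    · have haL : a + 1 < u.length := by omega
      have heq := rel a (a + 1) (by omega) haL (by
        rw [show a + (a + 1) = r by omega, Nat.mod_eq_of_lt hrL])
      unfold IsRed at hred
      simp only [List.Chain', List.isChain_iff_getElem] at hred
      apply hred a (by omega)
      have h1 := congrArg Prod.fst heq
      have h2 := congrArg Prod.snd heq
      simp only at h1 h2
      conv_lhs => rw [← Prod.mk.eta (p := u[a+1]'haL)]
      rw [← h1, h2]
      simp

end Pow

section Assemble

variable {α : Type*} [DecidableEq α]

lemma prod_mk_letters (l : List (α × Bool)) :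
    (l.map (fun x => FreeGroup.mk [x])).prod = FreeGroup.mk l := by
  induction l with
  | nil => simp [FreeGroup.one_eq_mk]
  | cons x l ih => rw [List.map_cons, List.prod_cons, ih, FreeGroup.mul_mk]; rfl

lemma mk_letter_mem_conjGens (x : α × Bool) :
    FreeGroup.mk [x] ∈ conjGens (Set.range (FreeGroup.of : α → FreeGroup α)) := by
  rcases x with ⟨i, b⟩
  cases b
  · refine ⟨1, FreeGroup.mk [(i, false)], Or.inr ?_, by group⟩
    refine ⟨i, ?_⟩
    rw [FreeGroup.inv_mk, invRev_singleton]
    rfl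
  · exact ⟨1, FreeGroup.mk [(i, true)], Or.inl ⟨i, by rw [← FreeGroup.toWord_of i,
      FreeGroup.mk_toWord]⟩, by group⟩

lemma ciNorm_set_nonempty (g : FreeGroup α) :
    {k | ∃ f : Fin k → FreeGroup α,
      (∀ i, f i ∈ conjGens (Set.range (FreeGroup.of : α → FreeGroup α))) ∧
      (List.ofFn f).prod = g}.Nonempty := by
  refine ⟨(g.toWord.map (fun x => FreeGroup.mk [x])).length,
    fun i => (g.toWord.map (fun x => FreeGroup.mk [x])).get i, ?_, ?_⟩
  · intro i
    have hmem : (g.toWord.map (fun x => FreeGroup.mk [x])).get i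
        ∈ g.toWord.map (fun x => FreeGroup.mk [x]) := List.get_mem _ _
    obtain ⟨x, _, hx⟩ := List.mem_map.mp hmem
    show (g.toWord.map (fun x => FreeGroup.mk [x])).get i ∈ conjGens (Set.range FreeGroup.of)
    rw [← hx]
    exact mk_letter_mem_conjGens x
  · rw [List.ofFn_get, prod_mk_letters, FreeGroup.mk_toWord]

/-- Main lower bound: `k ≤ ciNorm (w^k) * C` for `w` cyclically reduced. -/
lemma ciNorm_pow_lower (w : FreeGroup α) (hw : CyclicallyReduced w) (k : ℕ) :
    k ≤ ciNorm (Set.range (FreeGroup.of : α → FreeGroup α)) (w ^ k) *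
      (1 + 18 * (w.toWord.length - 1)) := by
  obtain ⟨hw1, hwj⟩ := hw
  have hu : w.toWord ≠ [] := fun h => hw1 (FreeGroup.toWord_eq_nil_iff.mp h)
  set m := ciNorm (Set.range (FreeGroup.of : α → FreeGroup α)) (w ^ k) with hm
  obtain ⟨f, hf, hprod⟩ : ∃ f : Fin m → FreeGroup α,
      (∀ i, f i ∈ conjGens (Set.range (FreeGroup.of : α → FreeGroup α))) ∧
      (List.ofFn f).prod = w ^ k :=
    Nat.sInf_mem (ciNorm_set_nonempty (w ^ k))
  have hlen : (List.ofFn f).length = m := by simp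
  have hbound : |phi w.toWord ((List.ofFn f).prod)| ≤
      (List.ofFn f).length * (1 + 18 * ((w.toWord.length - 1 : ℕ) : ℤ)) := by
    apply phi_prod w.toWord hu
    intro x hx
    obtain ⟨i, rfl⟩ := List.mem_ofFn.mp hx
    exact hf i
  rw [hprod, hlen] at hbound
  have hphi : (k : ℤ) ≤ phi w.toWord (w ^ k) := by
    unfold phi
    rw [toWord_pow w hwj k]
    have h1 := occ_pow_ge w.toWord hu k
    have h2 := occ_invRev_pow w.toWord hu (isRed_toWord w) hwj k
    rw [h2]
    push_cast
    omega
  have hfin : (k : ℤ) ≤ (m : ℤ) * (1 + 18 * ((w.toWord.length - 1 : ℕ) : ℤ)) :=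
    le_trans hphi (le_trans (le_abs_self _) hbound)
  have hcast : ((m * (1 + 18 * (w.toWord.length - 1)) : ℕ) : ℤ)
      = (m : ℤ) * (1 + 18 * ((w.toWord.length - 1 : ℕ) : ℤ)) := by push_cast; ring
  omega

/-- Existence of a cyclically reduced conjugate. -/
lemma exists_cycRed_conj : ∀ (m : ℕ) (u : FreeGroup α), u.toWord.length ≤ m → u ≠ 1 →
    ∃ c : FreeGroup α, CyclicallyReduced (c * u * c⁻¹) := by
  intro m
  induction m with
  | zero =>
    intro u hlen hu
    exact absurd (FreeGroup.toWord_eq_nil_iff.mp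
      (List.eq_nil_of_length_eq_zero (Nat.le_zero.mp hlen))) hu
  | succ m ih =>
    intro u hlen hu
    by_cases hcyc : ∀ x ∈ u.toWord.head?, ∀ y ∈ u.toWord.getLast?, x ≠ (y.1, !y.2)
    · have h1 : (1 : FreeGroup α) * u * 1⁻¹ = u := by group
      exact ⟨1, by rw [h1]; exact ⟨hu, hcyc⟩⟩
    · push_neg at hcyc
      obtain ⟨x, hx, y, hy, hxy⟩ := hcyc
      have hne : u.toWord ≠ [] := fun h => by simp [h] at hx
      rcases List.eq_nil_or_concat u.toWord with h | ⟨V, z, hVz⟩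
      · exact absurd h hne
      have hzy : y = z := by
        rw [hVz, List.concat_eq_append, List.getLast?_concat] at hy
        rw [Option.mem_def] at hy
        exact (Option.some.inj hy).symm
      rcases V with _ | ⟨a, V'⟩
      · rw [hVz] at hx
        have hxz : x = z := by have := hx; simp at this; exact this.symm
        have hcon := hxy
        rw [hzy] at hcon
        rw [hxz] at hcon
        exact absurd (congrArg Prod.snd hcon) (by simp)
      · have hax : x = a := by
          rw [hVz, List.concat_eq_append] at hx
          have := hx; simp at this; exact this.symm
        have hyz2 : a = (z.1, !z.2) := by rw [← hax, hxy, hzy]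
        rw [List.concat_eq_append] at hVz
        -- u = mk [a] * mk (V' ++ [z])
        have hudecomp : u = FreeGroup.mk [a] * FreeGroup.mk (V' ++ [z]) := by
          rw [FreeGroup.mul_mk]
          conv_lhs => rw [← FreeGroup.mk_toWord (x := u)]
          rw [hVz]
          rfl
        have hredW : IsRed u.toWord := isRed_toWord u
        have hredV' : IsRed V' := by
          apply hredW.infix
          rw [hVz]
          exact ⟨[a], [z], by simp⟩
        have hcancel : FreeGroup.mk (V' ++ [z] ++ [a]) = FreeGroup.mk V' := by
          apply FreeGroup.reduce.exact
          have hstep : FreeGroup.Red.Step (V' ++ (z.1, z.2) :: (z.1, !z.2) :: []) (V' ++ []) :=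
            FreeGroup.Red.Step.not
          have hshape : V' ++ [z] ++ [a] = V' ++ (z.1, z.2) :: (z.1, !z.2) :: [] := by
            rw [hyz2]
            simp
          rw [hshape]
          rw [FreeGroup.reduce.Step.eq hstep]
          simp
        have hconj : (FreeGroup.mk [a])⁻¹ * u * FreeGroup.mk [a] = FreeGroup.mk V' := by
          rw [hudecomp]
          have hg : (FreeGroup.mk [a])⁻¹ * (FreeGroup.mk [a] * FreeGroup.mk (V' ++ [z]))
              * FreeGroup.mk [a] = FreeGroup.mk (V' ++ [z]) * FreeGroup.mk [a] := by group
          rw [hg, FreeGroup.mul_mk]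
          exact hcancel
        have hV'word : (FreeGroup.mk V').toWord = V' := by
          rw [FreeGroup.toWord_mk]
          exact hredV'.reduce_eq
        have hV'ne : FreeGroup.mk V' ≠ 1 := by
          intro h
          apply hu
          have hrt : u = FreeGroup.mk [a] * FreeGroup.mk V' * (FreeGroup.mk [a])⁻¹ := by
            rw [← hconj]; group
          rw [h] at hrt
          rw [hrt]; group
        have hV'len : (FreeGroup.mk V').toWord.length ≤ m := by
          rw [hV'word]
          have hle := congrArg List.length hVz
          simp at hle
          omega
        obtain ⟨c', hc'⟩ := ih (FreeGroup.mk V') hV'len hV'ne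
        refine ⟨c' * (FreeGroup.mk [a])⁻¹, ?_⟩
        have heq : c' * (FreeGroup.mk [a])⁻¹ * u * (c' * (FreeGroup.mk [a])⁻¹)⁻¹
            = c' * ((FreeGroup.mk [a])⁻¹ * u * FreeGroup.mk [a]) * c'⁻¹ := by group
        rw [heq, hconj]
        exact hc'

end Assemble

end CIAux

/-- Every nontrivial normal subgroup `N` of `F_n` is unbounded for the bi-invariant
word metric: it contains a nontrivial cyclically reduced element `w` with
`‖wᵏ‖ → ∞`. -/
theorem normal_subgroup_unbounded (n : ℕ) (N : Subgroup (FreeGroup (Fin n)))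
    [N.Normal] (hN : N ≠ ⊥) :
    (¬ ∃ B : ℝ, ∀ x ∈ N, ∀ y ∈ N, freeDist n x y ≤ B) ∧
    ∃ w ∈ N, CyclicallyReduced w ∧
      Filter.Tendsto
        (fun k : ℕ =>
          ((ciNorm (Set.range (FreeGroup.of : Fin n → FreeGroup (Fin n))) (w ^ k) : ℝ)))
        Filter.atTop Filter.atTop := by
  obtain ⟨⟨u, huN⟩, hune⟩ := Subgroup.ne_bot_iff_exists_ne_one.mp hN
  have hu1 : u ≠ 1 := by simpa using hune
  obtain ⟨c, hcyc⟩ := CIAux.exists_cycRed_conj u.toWord.length u le_rfl hu1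
  set w := c * u * c⁻¹ with hw
  have hwN : w ∈ N := Subgroup.Normal.conj_mem ‹N.Normal› u huN c
  have hCpos : 0 < 1 + 18 * (w.toWord.length - 1) := by omega
  have hlow : ∀ k : ℕ, k ≤ ciNorm (Set.range (FreeGroup.of : Fin n → FreeGroup (Fin n)))
      (w ^ k) * (1 + 18 * (w.toWord.length - 1)) :=
    fun k => CIAux.ciNorm_pow_lower w hcyc k
  have htend : Filter.Tendsto
      (fun k : ℕ =>
        ((ciNorm (Set.range (FreeGroup.of : Fin n → FreeGroup (Fin n))) (w ^ k) : ℝ)))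
      Filter.atTop Filter.atTop := by
    apply Filter.tendsto_atTop_mono
      (f := fun k : ℕ => (k : ℝ) / (1 + 18 * (w.toWord.length - 1) : ℕ))
    · intro k
      rw [div_le_iff₀ (by positivity)]
      calc (k : ℝ) ≤ ((ciNorm (Set.range (FreeGroup.of : Fin n → FreeGroup (Fin n)))
            (w ^ k) * (1 + 18 * (w.toWord.length - 1)) : ℕ) : ℝ) := by
            exact_mod_cast hlow k
        _ = _ := by push_cast; ring
    · exact (tendsto_natCast_atTop_atTop).atTop_div_const (by positivity)
  refine ⟨?_, w, hwN, hcyc, htend⟩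
  rintro ⟨B, hB⟩
  obtain ⟨k, hk⟩ := (htend.eventually_gt_atTop B).exists
  have hle := hB (w ^ k) (pow_mem hwN k) 1 (one_mem N)
  rw [freeDist, ciDist, inv_one, mul_one] at hle
  exact absurd hle (not_le.mpr hk)
end

section
/- Let π : F_2 = ⟨a,b⟩ → ℤ/2 * ℤ/2 be the canonical surjection sending the free generators a, b to the two generators of order 2, and let G = ker(π). Then every element of F_2 lies at distance at most 2 from G with respect to the bi-invariant word metric on F_2 associated with {a,b}; in particular, the inclusion G → F_2 is quasi-surjective. -/
/-- The infinite dihedral group `ℤ/2 * ℤ/2`, the free product of two cyclic groups of order 2. -/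
abbrev InfDihedral : Type := Monoid.CoprodI (fun _ : Fin 2 => Multiplicative (ZMod 2))

/-- The canonical surjection `F₂ = ⟨a, b⟩ → ℤ/2 * ℤ/2` sending the free generators
to the two generators of order 2. -/
noncomputable def piMap : FreeGroup (Fin 2) →* InfDihedral :=
  FreeGroup.lift (fun i : Fin 2 =>
    Monoid.CoprodI.of (M := fun _ : Fin 2 => Multiplicative (ZMod 2)) (i := i)
      (Multiplicative.ofAdd (1 : ZMod 2)))

/- ## Auxiliary material -/

section Aux

lemma ciNorm_le_two' {G : Type*} [Group G] (S : Set G) {u v : G}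
    (hu : u ∈ conjGens S) (hv : v ∈ conjGens S) : ciNorm S (u * v) ≤ 2 := by
  apply Nat.sInf_le
  refine ⟨![u, v], ?_, ?_⟩
  · intro i; fin_cases i <;> simpa
  · simp [List.ofFn_succ]

lemma ciNorm_le_one' {G : Type*} [Group G] (S : Set G) {u : G}
    (hu : u ∈ conjGens S) : ciNorm S u ≤ 1 := by
  apply Nat.sInf_le
  refine ⟨![u], ?_, ?_⟩
  · intro i; fin_cases i; simpa
  · simp [List.ofFn_succ]

/-- The first generator of order 2 of the infinite dihedral group. -/
noncomputable def DA : InfDihedral :=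
  Monoid.CoprodI.of (M := fun _ : Fin 2 => Multiplicative (ZMod 2)) (i := (0 : Fin 2))
    (Multiplicative.ofAdd (1 : ZMod 2))

/-- The second generator of order 2 of the infinite dihedral group. -/
noncomputable def DB : InfDihedral :=
  Monoid.CoprodI.of (M := fun _ : Fin 2 => Multiplicative (ZMod 2)) (i := (1 : Fin 2))
    (Multiplicative.ofAdd (1 : ZMod 2))

lemma DA_mul_DA : DA * DA = 1 := by
  rw [DA, ← MonoidHom.map_mul]
  have : (Multiplicative.ofAdd (1 : ZMod 2)) * (Multiplicative.ofAdd (1 : ZMod 2)) = 1 := by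
    decide
  rw [this, MonoidHom.map_one]

lemma DB_mul_DB : DB * DB = 1 := by
  rw [DB, ← MonoidHom.map_mul]
  have : (Multiplicative.ofAdd (1 : ZMod 2)) * (Multiplicative.ofAdd (1 : ZMod 2)) = 1 := by
    decide
  rw [this, MonoidHom.map_one]

lemma DA_inv : DA⁻¹ = DA := by rw [inv_eq_iff_mul_eq_one, DA_mul_DA]

lemma DB_inv : DB⁻¹ = DB := by rw [inv_eq_iff_mul_eq_one, DB_mul_DB]

lemma relA (k : ℤ) : DA * (DA * DB) ^ k = (DA * DB) ^ (-k) * DA := by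
  have h1 : DA * (DA * DB) * DA⁻¹ = (DA * DB)⁻¹ := by
    rw [DA_inv, mul_inv_rev, DA_inv, DB_inv]
    calc DA * (DA * DB) * DA = (DA * DA) * (DB * DA) := by group
    _ = DB * DA := by rw [DA_mul_DA, one_mul]
  have h := conj_zpow (i := k) (a := DA) (b := DA * DB)
  rw [h1] at h
  have h2 : DA * (DA * DB) ^ k * DA⁻¹ = (DA * DB) ^ (-k) := by
    rw [← h, inv_zpow, ← zpow_neg]
  calc DA * (DA * DB) ^ k = (DA * (DA * DB) ^ k * DA⁻¹) * DA := by group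
  _ = (DA * DB) ^ (-k) * DA := by rw [h2]

lemma relB (k : ℤ) : DB * (DA * DB) ^ k = (DA * DB) ^ (-k) * DB := by
  have h1 : DB * (DA * DB) * DB⁻¹ = (DA * DB)⁻¹ := by
    rw [DB_inv, mul_inv_rev, DA_inv, DB_inv]
    calc DB * (DA * DB) * DB = DB * DA * (DB * DB) := by group
    _ = DB * DA := by rw [DB_mul_DB, mul_one]
  have h := conj_zpow (i := k) (a := DB) (b := DA * DB)
  rw [h1] at h
  have h2 : DB * (DA * DB) ^ k * DB⁻¹ = (DA * DB) ^ (-k) := by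
    rw [← h, inv_zpow, ← zpow_neg]
  calc DB * (DA * DB) ^ k = (DB * (DA * DB) ^ k * DB⁻¹) * DB := by group
  _ = (DA * DB) ^ (-k) * DB := by rw [h2]

/-- Classification of the elements of the infinite dihedral group: rotations and
reflections. -/
lemma infDihedral_classify (z : InfDihedral) :
    ∃ k : ℤ, z = (DA * DB) ^ k ∨ z = (DA * DB) ^ k * DA := by
  induction z using Monoid.CoprodI.induction_on with
  | one => exact ⟨0, Or.inl (by simp)⟩
  | of i m =>
    have hm : ∀ x : Multiplicative (ZMod 2), x = 1 ∨ x = Multiplicative.ofAdd 1 := by decide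
    fin_cases i
    · rcases hm m with rfl | rfl
      · exact ⟨0, Or.inl (by simp)⟩
      · exact ⟨0, Or.inr (by simp [DA])⟩
    · rcases hm m with rfl | rfl
      · exact ⟨0, Or.inl (by simp)⟩
      · refine ⟨-1, Or.inr ?_⟩
        show DB = _
        rw [zpow_neg_one, mul_inv_rev, DA_inv, DB_inv, mul_assoc, DA_mul_DA, mul_one]
  | mul x y hx hy =>
    obtain ⟨k, hk | hk⟩ := hx <;> obtain ⟨j, hj | hj⟩ := hy <;> subst hk hj
    · exact ⟨k + j, Or.inl (by rw [zpow_add])⟩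
    · exact ⟨k + j, Or.inr (by rw [zpow_add, mul_assoc])⟩
    · refine ⟨k - j, Or.inr ?_⟩
      rw [mul_assoc, relA j, sub_eq_add_neg, zpow_add, mul_assoc]
    · refine ⟨k - j, Or.inl ?_⟩
      calc (DA*DB)^k * DA * ((DA*DB)^j * DA) = (DA*DB)^k * (DA * (DA*DB)^j) * DA := by group
      _ = (DA*DB)^k * ((DA*DB)^(-j) * DA) * DA := by rw [relA j]
      _ = (DA*DB)^(k + -j) * (DA * DA) := by rw [zpow_add]; group
      _ = (DA*DB)^(k-j) := by rw [DA_mul_DA, mul_one, sub_eq_add_neg]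

lemma piMap_of (i : Fin 2) :
    piMap (FreeGroup.of i) =
      Monoid.CoprodI.of (M := fun _ : Fin 2 => Multiplicative (ZMod 2)) (i := i)
        (Multiplicative.ofAdd (1 : ZMod 2)) :=
  FreeGroup.lift_apply_of

lemma piMap_a : piMap (FreeGroup.of (0 : Fin 2)) = DA := piMap_of 0
lemma piMap_b : piMap (FreeGroup.of (1 : Fin 2)) = DB := piMap_of 1

lemma mem_conjGens_free (g : FreeGroup (Fin 2)) (i : Fin 2) :
    g * FreeGroup.of i * g⁻¹ ∈
      conjGens (Set.range (FreeGroup.of : Fin 2 → FreeGroup (Fin 2))) :=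
  ⟨g, FreeGroup.of i, Or.inl ⟨i, rfl⟩, rfl⟩

lemma mem_conjGens_free' (i : Fin 2) :
    FreeGroup.of i ∈ conjGens (Set.range (FreeGroup.of : Fin 2 → FreeGroup (Fin 2))) :=
  ⟨1, FreeGroup.of i, Or.inl ⟨i, rfl⟩, by group⟩

end Aux

/-- Every element of `F₂` lies at distance at most 2 from `G = ker(π : F₂ → ℤ/2 * ℤ/2)`
for the bi-invariant word metric; in particular the inclusion `G → F₂` is
quasi-surjective. -/
theorem kernel_to_infDihedral_quasiSurjective :
    (∀ y : FreeGroup (Fin 2), ∃ x ∈ piMap.ker, freeDist 2 x y ≤ 2) ∧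
    IsQuasiSurjective (freeDist 2)
      (fun x : piMap.ker => (x : FreeGroup (Fin 2))) := by
  have main : ∀ y : FreeGroup (Fin 2), ∃ x ∈ piMap.ker, freeDist 2 x y ≤ 2 := by
    intro y
    -- it suffices to find `w` of norm ≤ 2 with `π w = (π y)⁻¹`
    suffices h : ∃ w : FreeGroup (Fin 2), piMap w = (piMap y)⁻¹ ∧
        ciNorm (Set.range (FreeGroup.of : Fin 2 → FreeGroup (Fin 2))) w ≤ 2 by
      obtain ⟨w, hw1, hw2⟩ := h
      refine ⟨w * y, ?_, ?_⟩
      · show piMap (w * y) = 1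
        rw [map_mul, hw1, inv_mul_cancel]
      · show ciDist _ (w * y) y ≤ 2
        rw [ciDist, mul_inv_cancel_right]
        exact_mod_cast hw2
    set a₀ : FreeGroup (Fin 2) := FreeGroup.of 0 with ha₀
    set b₀ : FreeGroup (Fin 2) := FreeGroup.of 1 with hb₀
    have pa : piMap a₀ = DA := piMap_a
    have pb : piMap b₀ = DB := piMap_b
    obtain ⟨k, hz | hz⟩ := infDihedral_classify (piMap y)⁻¹
    · rcases Int.even_or_odd k with ⟨j, hj⟩ | ⟨j, hj⟩
      · -- `(π y)⁻¹ = (AB)^(j+j)`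
        refine ⟨(a₀*b₀) ^ j * a₀ * ((a₀*b₀) ^ j)⁻¹ * a₀, ?_, ?_⟩
        · have hpi : piMap ((a₀*b₀) ^ j * a₀ * ((a₀*b₀) ^ j)⁻¹ * a₀) =
              (DA*DB)^j * DA * ((DA*DB)^j)⁻¹ * DA := by
            simp only [map_mul, map_zpow, map_inv, pa, pb]
          rw [hpi, hz, hj]
          calc (DA*DB)^j * DA * ((DA*DB)^j)⁻¹ * DA
              = (DA*DB)^j * (DA * (DA*DB)^(-j)) * DA := by rw [← zpow_neg]; group
            _ = (DA*DB)^j * ((DA*DB)^j * DA) * DA := by rw [relA, neg_neg]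
            _ = (DA*DB)^(j+j) * (DA * DA) := by rw [zpow_add]; group
            _ = (DA*DB)^(j+j) := by rw [DA_mul_DA, mul_one]
        · exact ciNorm_le_two' _ (mem_conjGens_free ((a₀*b₀) ^ j) 0) (mem_conjGens_free' 0)
      · -- `(π y)⁻¹ = (AB)^(2j+1)`
        refine ⟨(a₀*b₀) ^ j * a₀ * ((a₀*b₀) ^ j)⁻¹ * b₀, ?_, ?_⟩
        · have hpi : piMap ((a₀*b₀) ^ j * a₀ * ((a₀*b₀) ^ j)⁻¹ * b₀) =
              (DA*DB)^j * DA * ((DA*DB)^j)⁻¹ * DB := by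
            simp only [map_mul, map_zpow, map_inv, pa, pb]
          rw [hpi, hz, hj]
          calc (DA*DB)^j * DA * ((DA*DB)^j)⁻¹ * DB
              = (DA*DB)^j * (DA * (DA*DB)^(-j)) * DB := by rw [← zpow_neg]; group
            _ = (DA*DB)^j * ((DA*DB)^j * DA) * DB := by rw [relA, neg_neg]
            _ = (DA*DB)^(j+j) * (DA * DB) := by rw [zpow_add]; group
            _ = (DA*DB)^(2*j+1) := by
                  simp [zpow_add, zpow_one, two_mul, mul_assoc]
        · exact ciNorm_le_two' _ (mem_conjGens_free ((a₀*b₀) ^ j) 0) (mem_conjGens_free' 1)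
    · rcases Int.even_or_odd k with ⟨j, hj⟩ | ⟨j, hj⟩
      · -- `(π y)⁻¹ = (AB)^(j+j) * A`
        refine ⟨(a₀*b₀) ^ j * a₀ * ((a₀*b₀) ^ j)⁻¹, ?_, ?_⟩
        · have hpi : piMap ((a₀*b₀) ^ j * a₀ * ((a₀*b₀) ^ j)⁻¹) =
              (DA*DB)^j * DA * ((DA*DB)^j)⁻¹ := by
            simp only [map_mul, map_zpow, map_inv, pa, pb]
          rw [hpi, hz, hj]
          calc (DA*DB)^j * DA * ((DA*DB)^j)⁻¹
              = (DA*DB)^j * (DA * (DA*DB)^(-j)) := by rw [← zpow_neg]; group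
            _ = (DA*DB)^j * ((DA*DB)^j * DA) := by rw [relA, neg_neg]
            _ = (DA*DB)^(j+j) * DA := by rw [zpow_add]; group
        · exact le_trans (ciNorm_le_one' _ (mem_conjGens_free ((a₀*b₀) ^ j) 0)) one_le_two
      · -- `(π y)⁻¹ = (AB)^(2j+1) * A`
        refine ⟨(a₀*b₀) ^ (j+1) * b₀ * ((a₀*b₀) ^ (j+1))⁻¹, ?_, ?_⟩
        · have hpi : piMap ((a₀*b₀) ^ (j+1) * b₀ * ((a₀*b₀) ^ (j+1))⁻¹) =
              (DA*DB)^(j+1) * DB * ((DA*DB)^(j+1))⁻¹ := by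
            simp only [map_mul, map_zpow, map_inv, pa, pb]
          rw [hpi, hz, hj]
          calc (DA*DB)^(j+1) * DB * ((DA*DB)^(j+1))⁻¹
              = (DA*DB)^(j+1) * (DB * (DA*DB)^(-(j+1))) := by rw [← zpow_neg]; group
            _ = (DA*DB)^(j+1) * ((DA*DB)^(j+1) * DB) := by rw [relB, neg_neg]
            _ = (DA*DB)^(2*j+1) * ((DA*DB) * DB) := by
                  rw [← mul_assoc, ← zpow_add]
                  rw [show (j+1) + (j+1) = (2*j+1) + 1 by ring, zpow_add, zpow_one]
                  group
            _ = (DA*DB)^(2*j+1) * DA := by rw [mul_assoc DA DB DB, DB_mul_DB, mul_one]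
        · exact le_trans (ciNorm_le_one' _ (mem_conjGens_free ((a₀*b₀) ^ (j+1)) 1)) one_le_two
  refine ⟨main, 2, by norm_num, ?_⟩
  intro y
  obtain ⟨x, hx, hd⟩ := main y
  exact ⟨⟨x, hx⟩, hd⟩
end

section
/- Let ℤ/2 * ℤ/2 be the infinite dihedral group, the free product of two cyclic groups of order 2 with generators ā and b̄, equipped with the conjugation-invariant word norm ‖·‖_T associated with T = {ā, b̄}. Then the diameter of ℤ/2 * ℤ/2 with respect to the associated bi-invariant metric equals 2; equivalently, every nontrivial element is a product of at most 2 conjugates of ā and b̄, and some element is not a single conjugate of ā or b̄. -/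
noncomputable def Da : InfDihedral :=
  Monoid.CoprodI.of (M := fun _ : Fin 2 => Multiplicative (ZMod 2)) (i := (0 : Fin 2))
    (Multiplicative.ofAdd (1 : ZMod 2))

noncomputable def Db : InfDihedral :=
  Monoid.CoprodI.of (M := fun _ : Fin 2 => Multiplicative (ZMod 2)) (i := (1 : Fin 2))
    (Multiplicative.ofAdd (1 : ZMod 2))

noncomputable def Dt : InfDihedral := Da * Db

lemma Da_sq : Da * Da = 1 := by
  rw [Da, ← map_mul]
  have h : (Multiplicative.ofAdd (1 : ZMod 2)) * (Multiplicative.ofAdd (1 : ZMod 2)) = 1 := by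
    decide
  rw [h, map_one]

lemma Db_sq : Db * Db = 1 := by
  rw [Db, ← map_mul]
  have h : (Multiplicative.ofAdd (1 : ZMod 2)) * (Multiplicative.ofAdd (1 : ZMod 2)) = 1 := by
    decide
  rw [h, map_one]

lemma Da_inv : Da⁻¹ = Da := by
  rw [inv_eq_iff_mul_eq_one, Da_sq]

lemma Db_inv : Db⁻¹ = Db := by
  rw [inv_eq_iff_mul_eq_one, Db_sq]

lemma Da_Dt : Da * Dt = Db := by
  rw [Dt, ← mul_assoc, Da_sq, one_mul]

lemma conj_Dt : Da * Dt * Da⁻¹ = Dt⁻¹ := by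
  rw [Da_inv, Dt, mul_inv_rev, Da_inv, Db_inv, show Da * (Da * Db) * Da = Db * Da by rw [← mul_assoc Da Da Db, Da_sq, one_mul]]

lemma conj_Dt_zpow (m : ℤ) : Da * Dt ^ m * Da⁻¹ = Dt ^ (-m) := by
  have := map_zpow (MulAut.conj Da) Dt m
  simp only [MulAut.conj_apply] at this
  rw [this, conj_Dt, inv_zpow, ← zpow_neg]

lemma swap (m : ℤ) : Da * Dt ^ m = Dt ^ (-m) * Da := by
  have h := conj_Dt_zpow m
  rw [← h]; group

lemma struct (g : InfDihedral) : ∃ i : ℤ, g = Dt ^ i ∨ g = Da * Dt ^ i := by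
  induction g using Monoid.CoprodI.induction_on with
  | one => exact ⟨0, Or.inl (by rw [zpow_zero])⟩
  | of j m =>
    have hm : m = 1 ∨ m = Multiplicative.ofAdd (1 : ZMod 2) := by revert m; decide
    rcases hm with rfl | rfl
    · exact ⟨0, Or.inl (by rw [zpow_zero, map_one])⟩
    · fin_cases j
      · exact ⟨0, Or.inr (by rw [zpow_zero, mul_one]; rfl)⟩
      · exact ⟨1, Or.inr (by rw [zpow_one, Da_Dt]; rfl)⟩
  | mul x y hx hy =>
    obtain ⟨i, hx | hx⟩ := hx <;> obtain ⟨j, hy | hy⟩ := hy <;> subst hx hy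
    · exact ⟨i + j, Or.inl (zpow_add Dt i j).symm⟩
    · refine ⟨-i + j, Or.inr ?_⟩
      rw [← mul_assoc, show Dt ^ i * Da = Da * Dt ^ (-i) by rw [swap, neg_neg],
        mul_assoc, ← zpow_add]
    · exact ⟨i + j, Or.inr (by rw [mul_assoc, ← zpow_add])⟩
    · refine ⟨-i + j, Or.inl ?_⟩
      rw [mul_assoc, ← mul_assoc (Dt ^ i), show Dt ^ i * Da = Da * Dt ^ (-i) by
        rw [swap, neg_neg], ← mul_assoc, ← mul_assoc, Da_sq, one_mul, ← zpow_add]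

lemma Da_mem : Da ∈ conjGens ({Da, Db} : Set InfDihedral) :=
  ⟨1, Da, Or.inl (Or.inl rfl), by rw [one_mul, inv_one, mul_one]⟩

lemma Db_mem : Db ∈ conjGens ({Da, Db} : Set InfDihedral) :=
  ⟨1, Db, Or.inl (Or.inr rfl), by rw [one_mul, inv_one, mul_one]⟩

lemma ofFn_one_prod {G : Type*} [Monoid G] (x : G) : (List.ofFn ![x]).prod = x := by simp

lemma ofFn_two_prod {G : Type*} [Monoid G] (x y : G) : (List.ofFn ![x, y]).prod = x * y := by simp

lemma key (i : ℤ) : Da * Dt ^ i ∈ conjGens ({Da, Db} : Set InfDihedral) := by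
  rcases Int.even_or_odd i with ⟨m, rfl⟩ | ⟨m, rfl⟩
  · refine ⟨Dt ^ (-m), Da, Or.inl (Or.inl rfl), ?_⟩
    have h1 : Dt ^ (-m) * Da = Da * Dt ^ m := (swap m).symm
    calc Da * Dt ^ (m + m) = Da * Dt ^ m * (Dt ^ (-m))⁻¹ := by group
      _ = Dt ^ (-m) * Da * (Dt ^ (-m))⁻¹ := by rw [h1]
  · refine ⟨Dt ^ (-m), Db, Or.inl (Or.inr rfl), ?_⟩
    have h1 : Dt ^ (-m) * Da = Da * Dt ^ m := (swap m).symm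
    calc Da * Dt ^ (2 * m + 1) = Da * Dt ^ m * (Dt * (Dt ^ (-m))⁻¹) := by group
      _ = Dt ^ (-m) * Da * (Dt * (Dt ^ (-m))⁻¹) := by rw [h1]
      _ = Dt ^ (-m) * Db * (Dt ^ (-m))⁻¹ := by rw [← Da_Dt]; group

lemma norm_le (g : InfDihedral) : ciNorm ({Da, Db} : Set InfDihedral) g ≤ 2 := by
  obtain ⟨i, hg | hg⟩ := struct g
  · apply Nat.sInf_le
    refine ⟨![Da, Da * Dt ^ i], fun j => ?_, ?_⟩
    · fin_cases j
      · exact Da_mem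
      · exact key i
    · rw [ofFn_two_prod, ← mul_assoc, Da_sq, one_mul, hg]
  · have h1 : (1 : ℕ) ∈ {k | ∃ f : Fin k → InfDihedral,
        (∀ i, f i ∈ conjGens ({Da, Db} : Set InfDihedral)) ∧ (List.ofFn f).prod = g} := by
      refine ⟨![Da * Dt ^ i], fun j => ?_, by rw [ofFn_one_prod, hg]⟩
      fin_cases j
      exact key i
    exact le_trans (Nat.sInf_le h1) one_le_two

noncomputable def pj (j : Fin 2) : InfDihedral →* Multiplicative (ZMod 2) :=
  Monoid.CoprodI.lift (fun k : Fin 2 => if k = j then MonoidHom.id (Multiplicative (ZMod 2)) else 1)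

lemma pj_Da (j : Fin 2) :
    pj j Da = if (0 : Fin 2) = j then Multiplicative.ofAdd (1 : ZMod 2) else 1 := by
  rw [Da, pj, Monoid.CoprodI.lift_of]
  split <;> rfl

lemma pj_Db (j : Fin 2) :
    pj j Db = if (1 : Fin 2) = j then Multiplicative.ofAdd (1 : ZMod 2) else 1 := by
  rw [Db, pj, Monoid.CoprodI.lift_of]
  split <;> rfl

lemma pj_conj (j : Fin 2) (g s : InfDihedral) : pj j (g * s * g⁻¹) = pj j s := by
  rw [map_mul, map_mul, map_inv, mul_comm (pj j g), mul_assoc, mul_inv_cancel, mul_one]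

lemma ofFn_one_prod' {G : Type*} [Monoid G] (f : Fin 1 → G) : (List.ofFn f).prod = f 0 := by
  simp

lemma ab_ne_one : Da * Db ≠ 1 := by
  intro h
  have := congrArg (pj 0) h
  rw [map_one, map_mul, pj_Da, pj_Db, if_pos rfl, if_neg (by decide), mul_one] at this
  exact (by decide : Multiplicative.ofAdd (1 : ZMod 2) ≠ 1) this

lemma ab_not_conj : Da * Db ∉ conjGens ({Da, Db} : Set InfDihedral) := by
  rintro ⟨g, s, hs, heq⟩
  have hs' : s = Da ∨ s = Db := by
    rcases hs with (h | h) | (h | h)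
    · exact Or.inl h
    · exact Or.inr h
    · exact Or.inl (by rw [← inv_inv s, h, Da_inv])
    · exact Or.inr (by rw [← inv_inv s, h, Db_inv])
  rcases hs' with rfl | rfl
  · have := congrArg (pj 1) heq
    rw [pj_conj, map_mul, pj_Da, pj_Db] at this
    rw [if_neg (by decide), if_pos rfl] at this
    exact (by decide : ¬ ((1 : Multiplicative (ZMod 2)) * Multiplicative.ofAdd (1 : ZMod 2)
      = 1)) this
  · have := congrArg (pj 0) heq
    rw [pj_conj, map_mul, pj_Da, pj_Db] at this
    rw [if_pos rfl, if_neg (by decide)] at this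
    exact (by decide : ¬ (Multiplicative.ofAdd (1 : ZMod 2) * (1 : Multiplicative (ZMod 2))
      = 1)) this

lemma norm_ab : ciNorm ({Da, Db} : Set InfDihedral) (Da * Db) = 2 := by
  have h2 : (2 : ℕ) ∈ {k | ∃ f : Fin k → InfDihedral,
      (∀ i, f i ∈ conjGens ({Da, Db} : Set InfDihedral)) ∧ (List.ofFn f).prod = Da * Db} := by
    refine ⟨![Da, Db], fun j => ?_, ofFn_two_prod Da Db⟩
    fin_cases j
    · exact Da_mem
    · exact Db_mem
  refine le_antisymm (Nat.sInf_le h2) (le_csInf ⟨2, h2⟩ ?_)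
  rintro k ⟨f, hf, hprod⟩
  match k with
  | 0 => exact absurd (hprod.symm.trans (by simp)) ab_ne_one
  | 1 =>
    exfalso
    apply ab_not_conj
    rw [← hprod, ofFn_one_prod']
    exact hf 0
  | (n + 2) => omega

/-- The infinite dihedral group `ℤ/2 * ℤ/2` with the conjugation-invariant word norm
associated with its two canonical generators has diameter 2: every element has norm
at most 2 and some element has norm exactly 2. -/
theorem infDihedral_diameter_two :
    (∀ g h : InfDihedral,
      ciDist ({Monoid.CoprodI.of (M := fun _ : Fin 2 => Multiplicative (ZMod 2))
          (i := (0 : Fin 2)) (Multiplicative.ofAdd (1 : ZMod 2)),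
        Monoid.CoprodI.of (M := fun _ : Fin 2 => Multiplicative (ZMod 2))
          (i := (1 : Fin 2)) (Multiplicative.ofAdd (1 : ZMod 2))} : Set InfDihedral)
        g h ≤ 2) ∧
    (∃ g h : InfDihedral,
      ciDist ({Monoid.CoprodI.of (M := fun _ : Fin 2 => Multiplicative (ZMod 2))
          (i := (0 : Fin 2)) (Multiplicative.ofAdd (1 : ZMod 2)),
        Monoid.CoprodI.of (M := fun _ : Fin 2 => Multiplicative (ZMod 2))
          (i := (1 : Fin 2)) (Multiplicative.ofAdd (1 : ZMod 2))} : Set InfDihedral)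
        g h = 2) := by
  constructor
  · intro g h
    show (ciNorm ({Da, Db} : Set InfDihedral) (g * h⁻¹) : ℝ) ≤ 2
    exact_mod_cast norm_le (g * h⁻¹)
  · refine ⟨Da * Db, 1, ?_⟩
    show (ciNorm ({Da, Db} : Set InfDihedral) (Da * Db * 1⁻¹) : ℝ) = 2
    rw [inv_one, mul_one, norm_ab]
    norm_num
end

section
/- Let π : F_2 = ⟨a,b⟩ → ℤ/2 * ℤ/2 be the canonical surjection and G = ker(π). The elements a²b² and ab²a of F_2 both lie in G, they are conjugate in F_2 (indeed ab²a = a⁻¹(a²b²)a), but they are not conjugate in G. -/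
namespace ConjAux

abbrev P5 := Equiv.Perm (Fin 5)

/-- Image of the first generator: a transposition (odd). -/
def A : P5 := Equiv.swap 0 1

/-- Image of the second generator: a 5-cycle (even). -/
def B : P5 := finRotate 5

set_option maxRecDepth 10000 in
/-- Every permutation conjugating `A²B² = B²` (a 5-cycle, whose centralizer `⟨B²⟩` is
contained in the alternating group) to `AB²A` is odd. -/
theorem key : ∀ w : P5, w * (A ^ 2 * B ^ 2) * w⁻¹ = A * B ^ 2 * A →
    Equiv.Perm.sign w = -1 := by
  decide

/-- The evaluation homomorphism `F₂ → S₅`, `a ↦ A`, `b ↦ B`. -/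
noncomputable def q : FreeGroup (Fin 2) →* P5 :=
  FreeGroup.lift (fun i => if i = 0 then A else B)

/-- The homomorphism `ℤ/2 → ℤˣ` sending the generator to `-1`. -/
def toUnits : Multiplicative (ZMod 2) →* ℤˣ where
  toFun x := if x = 1 then 1 else -1
  map_one' := by decide
  map_mul' := by decide

/-- The homomorphism `ℤ/2 * ℤ/2 → ℤˣ` which is `toUnits` on the first factor and trivial
on the second. -/
noncomputable def ebar : InfDihedral →* ℤˣ :=
  Monoid.CoprodI.lift (fun i : Fin 2 => if i = 0 then toUnits else 1)

theorem factor : ebar.comp piMap =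
    (Equiv.Perm.sign).comp q := by
  apply FreeGroup.ext_hom
  intro i
  fin_cases i <;>
    simp [ebar, piMap, q, A, B, toUnits, Equiv.Perm.sign_swap, sign_finRotate] <;>
    decide

end ConjAux

/-- The elements `a²b²` and `ab²a` of `F₂` both lie in `G = ker(π : F₂ → ℤ/2 * ℤ/2)`,
are conjugate in `F₂` (indeed `ab²a = a⁻¹(a²b²)a`), but are not conjugate in `G`. -/
theorem conjugate_in_F2_not_in_kernel :
    (FreeGroup.of (0 : Fin 2)) ^ 2 * (FreeGroup.of (1 : Fin 2)) ^ 2 ∈ piMap.ker ∧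
    (FreeGroup.of (0 : Fin 2)) * (FreeGroup.of (1 : Fin 2)) ^ 2 *
      (FreeGroup.of (0 : Fin 2)) ∈ piMap.ker ∧
    (FreeGroup.of (0 : Fin 2)) * (FreeGroup.of (1 : Fin 2)) ^ 2 *
        (FreeGroup.of (0 : Fin 2)) =
      (FreeGroup.of (0 : Fin 2))⁻¹ *
        ((FreeGroup.of (0 : Fin 2)) ^ 2 * (FreeGroup.of (1 : Fin 2)) ^ 2) *
        (FreeGroup.of (0 : Fin 2)) ∧
    ¬ ∃ v ∈ piMap.ker,
        v * ((FreeGroup.of (0 : Fin 2)) ^ 2 * (FreeGroup.of (1 : Fin 2)) ^ 2) * v⁻¹ =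
          (FreeGroup.of (0 : Fin 2)) * (FreeGroup.of (1 : Fin 2)) ^ 2 *
            (FreeGroup.of (0 : Fin 2)) := by
  have hsq : ∀ i : Fin 2, piMap (FreeGroup.of i) ^ 2 = 1 := by
    intro i
    have : (Multiplicative.ofAdd (1 : ZMod 2)) ^ 2 = 1 := by decide
    simp [piMap, ← map_pow, this]
  have hgen : ∀ i : Fin 2, (FreeGroup.of i) ^ 2 ∈ piMap.ker := by
    intro i
    simp [MonoidHom.mem_ker, map_pow] at ⊢
    simpa [map_pow] using hsq i
  refine ⟨?_, ?_, ?_, ?_⟩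
  · have := hgen 0; have := hgen 1
    simp only [MonoidHom.mem_ker, map_mul, map_pow] at *
    simp [*]
  · have h0 := hgen 0; have h1 := hgen 1
    simp only [MonoidHom.mem_ker, map_pow] at h0 h1
    simp only [MonoidHom.mem_ker, map_mul, map_pow, h1, mul_one]
    have : piMap (FreeGroup.of 0) * piMap (FreeGroup.of 0) = 1 := by
      have := h0; rwa [pow_two] at this
    simpa [mul_assoc] using this
  · group
  · rintro ⟨v, hv, hconj⟩
    -- apply q
    have hq : ConjAux.q v * (ConjAux.A ^ 2 * ConjAux.B ^ 2) * (ConjAux.q v)⁻¹ =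
        ConjAux.A * ConjAux.B ^ 2 * ConjAux.A := by
      have := congrArg ConjAux.q hconj
      simpa [map_mul, map_pow, map_inv, ConjAux.q, ConjAux.A, ConjAux.B] using this
    have hsign : Equiv.Perm.sign (ConjAux.q v) = -1 := ConjAux.key _ hq
    have heven : Equiv.Perm.sign (ConjAux.q v) = 1 := by
      have := congrFun (congrArg DFunLike.coe ConjAux.factor) v
      simp only [MonoidHom.comp_apply] at this
      rw [← this, MonoidHom.mem_ker.mp hv, map_one]
    rw [hsign] at heven
    exact absurd heven (by decide)
end

section
/- Let n ≥ 1 and let G ≤ F_n be a finitely generated subgroup of infinite index. Then G admits a killer word: there exists a nonempty reduced word w in F_n such that w does not occur as a contiguous subword of the reduced word representing any element of G. -/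
set_option linter.unusedSectionVars false
set_option maxHeartbeats 1000000

namespace KillerAux

open FreeGroup List

variable {α : Type*} [DecidableEq α] {G : Subgroup (FreeGroup α)}

/-- Non-cancelling adjacency: `b` does not cancel `a`. -/
def NR (a b : α × Bool) : Prop := ¬(b.1 = a.1 ∧ b.2 = !a.2)

lemma chain'_reduce (L : List (α × Bool)) : List.Chain' NR (reduce L) := by
  induction L with
  | nil => exact List.isChain_nil
  | cons x L ih =>
    rw [FreeGroup.reduce.cons]
    rcases h : reduce L with _ | ⟨hd, tl⟩
    · exact List.isChain_singleton _
    · rw [h] at ih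
      by_cases hc : x.1 = hd.1 ∧ x.2 = !hd.2
      · simp only [hc, if_true]
        exact ih.tail
      · simp only [hc, if_false]
        exact List.IsChain.cons_cons (by
          intro h'
          exact hc ⟨h'.1.symm, by rw [h'.2]; simp⟩) ih

lemma chain'_of_reduced {L : List (α × Bool)} (h : reduce L = L) : List.Chain' NR L := by
  rw [← h]; exact chain'_reduce L

lemma reduced_of_chain' {L : List (α × Bool)} (h : List.Chain' NR L) : reduce L = L := by
  induction L with
  | nil => rfl
  | cons x L ih =>
    have hL : reduce L = L := ih h.tail
    rw [FreeGroup.reduce.cons, hL]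
    rcases L with _ | ⟨hd, tl⟩
    · rfl
    · have hnr : NR x hd := (List.isChain_cons_cons.mp h).1
      have : ¬(x.1 = hd.1 ∧ x.2 = !hd.2) := by
        intro hc; exact hnr ⟨hc.1.symm, by rw [hc.2]; simp⟩
      simp only [this, if_false]

lemma reduced_iff_chain' {L : List (α × Bool)} : reduce L = L ↔ List.Chain' NR L :=
  ⟨chain'_of_reduced, reduced_of_chain'⟩

lemma reduced_infix {L l : List (α × Bool)} (h : reduce L = L) (h' : l <:+: L) :
    reduce l = l :=
  reduced_of_chain' ((chain'_of_reduced h).infix h')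

lemma reduced_append {w₁ w₂ : List (α × Bool)} (h₁ : reduce w₁ = w₁) (h₂ : reduce w₂ = w₂)
    (h : ∀ a ∈ w₁.getLast?, ∀ b ∈ w₂.head?, NR a b) : reduce (w₁ ++ w₂) = w₁ ++ w₂ :=
  reduced_of_chain' (List.isChain_append.mpr ⟨chain'_of_reduced h₁, chain'_of_reduced h₂, h⟩)

lemma mk_pair_cancel (a : α × Bool) :
    FreeGroup.mk [a, (a.1, !a.2)] = (1 : FreeGroup α) := by
  have : FreeGroup.mk [a, (a.1, !a.2)] = FreeGroup.mk [] := by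
    apply FreeGroup.reduce.exact
    have : reduce [a, (a.1, !a.2)] = [] := by
      rw [FreeGroup.reduce.cons]
      have : reduce [(a.1, !a.2)] = [(a.1, !a.2)] := FreeGroup.reduce_singleton _
      rw [this]
      simp
    rw [this, FreeGroup.reduce_nil]
  rw [this, ← FreeGroup.one_eq_mk]

/-- Cancellation structure of a product of two reduced words. -/
lemma cancel_words : ∀ (w₁ w₂ : List (α × Bool)), reduce w₁ = w₁ → reduce w₂ = w₂ →
    ∃ u₁ t s u₂, w₁ = u₁ ++ t ∧ w₂ = s ++ u₂ ∧
      FreeGroup.mk t * FreeGroup.mk s = 1 ∧ reduce (w₁ ++ w₂) = u₁ ++ u₂ := by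
  suffices h : ∀ (n) (w₁ w₂ : List (α × Bool)), w₁.length ≤ n → reduce w₁ = w₁ → reduce w₂ = w₂ →
      ∃ u₁ t s u₂, w₁ = u₁ ++ t ∧ w₂ = s ++ u₂ ∧
        FreeGroup.mk t * FreeGroup.mk s = 1 ∧ reduce (w₁ ++ w₂) = u₁ ++ u₂ by
    intro w₁ w₂ h₁ h₂; exact h w₁.length w₁ w₂ le_rfl h₁ h₂
  intro n
  induction n with
  | zero =>
    intro w₁ w₂ hlen h₁ h₂
    rw [List.length_eq_zero_iff.mp (Nat.le_zero.mp hlen)]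
    exact ⟨[], [], [], w₂, rfl, rfl, by rw [← FreeGroup.one_eq_mk, one_mul], by simpa using h₂⟩
  | succ n ih =>
  intro w₁ w₂ hn h₁ h₂
  rcases List.eq_nil_or_concat w₁ with rfl | ⟨w₁', a, rfl⟩
  · exact ⟨[], [], [], w₂, rfl, rfl, by rw [← FreeGroup.one_eq_mk, one_mul], by simpa using h₂⟩
  simp only [List.concat_eq_append] at h₁ hn ⊢
  rcases w₂ with _ | ⟨b, w₂'⟩
  · exact ⟨w₁' ++ [a], [], [], [], by simp, rfl, by rw [← FreeGroup.one_eq_mk, one_mul],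
      by simpa using h₁⟩
  by_cases hc : b.1 = a.1 ∧ b.2 = !a.2
  · -- boundary cancellation
    have hb : b = (a.1, !a.2) := Prod.ext hc.1 hc.2
    have hred1 : reduce w₁' = w₁' := reduced_infix h₁ ⟨[], [a], by simp⟩
    have hred2 : reduce w₂' = w₂' := reduced_infix h₂ ⟨[b], [], by simp⟩
    have hlen : w₁'.length ≤ n := by
      have := hn; simp at this; omega
    obtain ⟨u₁, t, s, u₂, e₁, e₂, hts, hr⟩ := ih w₁' w₂' hlen hred1 hred2
    refine ⟨u₁, t ++ [a], b :: s, u₂, by rw [e₁, List.append_assoc], by rw [e₂]; rfl, ?_, ?_⟩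
    · have : FreeGroup.mk [a] * FreeGroup.mk [b] = 1 := by
        rw [FreeGroup.mul_mk]
        rw [hb]
        exact mk_pair_cancel a
      rw [← FreeGroup.mul_mk, show b :: s = [b] ++ s from rfl, ← FreeGroup.mul_mk (L₁ := [b])]
      calc FreeGroup.mk t * FreeGroup.mk [a] * (FreeGroup.mk [b] * FreeGroup.mk s)
          = FreeGroup.mk t * (FreeGroup.mk [a] * FreeGroup.mk [b]) * FreeGroup.mk s := by
            group
        _ = FreeGroup.mk t * FreeGroup.mk s := by rw [this]; group
        _ = 1 := hts
    · have hstep : FreeGroup.Red.Step ((w₁' ++ [a]) ++ b :: w₂') (w₁' ++ w₂') := by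
        have : (w₁' ++ [a]) ++ b :: w₂' = w₁' ++ a :: (a.1, !a.2) :: w₂' := by
          rw [hb]; simp
        rw [this]
        have := @FreeGroup.Red.Step.not α w₁' w₂' a.1 a.2
        simpa using this
      rw [FreeGroup.reduce.Step.eq hstep, hr]
  · -- no cancellation
    refine ⟨w₁' ++ [a], [], [], b :: w₂', by simp, rfl,
      by rw [← FreeGroup.one_eq_mk, one_mul], ?_⟩
    apply reduced_append h₁ h₂
    intro x hx y hy
    simp at hx hy
    subst hx; subst hy
    intro hcc
    exact hc hcc


def st (G : Subgroup (FreeGroup α)) (x : FreeGroup α) :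
    Quotient (QuotientGroup.rightRel G) := Quotient.mk _ x

lemma st_eq_iff {x y : FreeGroup α} : st G x = st G y ↔ y * x⁻¹ ∈ G := by
  constructor
  · intro h
    exact QuotientGroup.rightRel_apply.mp (Quotient.exact h)
  · intro h
    exact Quotient.sound (QuotientGroup.rightRel_apply.mpr h)

lemma st_mul_right {a b : FreeGroup α} (h : st G a = st G b) (y : FreeGroup α) :
    st G (a * y) = st G (b * y) := by
  rw [st_eq_iff] at h ⊢
  have : b * y * (a * y)⁻¹ = b * a⁻¹ := by group
  rw [this]; exact h

lemma st_out (s : Quotient (QuotientGroup.rightRel G)) : st G s.out = s :=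
  Quotient.out_eq s


/-- Words that can follow the letter `d` without cancellation. -/
def Ok (d : α × Bool) (q : List (α × Bool)) : Prop :=
  reduce q = q ∧ ∀ b ∈ q.head?, NR d b


lemma ok_replicate (d : α × Bool) (k : ℕ) : Ok d (List.replicate k d) := by
  constructor
  · exact FreeGroup.reduce_replicate k d
  · intro b hb
    rcases k with _ | k
    · simp at hb
    · simp [List.replicate_succ] at hb
      subst hb
      rintro ⟨-, h2⟩
      simp at h2

lemma mk_replicate (d : α × Bool) (k : ℕ) :
    FreeGroup.mk (List.replicate k d) = (FreeGroup.mk [d]) ^ k := by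
  induction k with
  | zero => rw [pow_zero, List.replicate_zero]; exact FreeGroup.one_eq_mk.symm
  | succ k ih => rw [List.replicate_succ', pow_succ, ← ih, FreeGroup.mul_mk]

lemma mk_inv_letter (d : α × Bool) :
    FreeGroup.mk [(d.1, !d.2)] = (FreeGroup.mk [d])⁻¹ := by
  rw [FreeGroup.inv_mk]
  simp [FreeGroup.invRev]

lemma cone_infinite (hQ : Infinite (Quotient (QuotientGroup.rightRel G)))
    (x : FreeGroup α) (d : α × Bool) :
    {s | ∃ q, Ok d q ∧ s = st G (x * FreeGroup.mk q)}.Infinite := by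
  set C := {s | ∃ q, Ok d q ∧ s = st G (x * FreeGroup.mk q)} with hC
  by_contra hninf
  rw [Set.not_infinite] at hninf
  have hfin := hninf
  have hmem : ∀ q, Ok d q → st G (x * FreeGroup.mk q) ∈ C := fun q hq => ⟨q, hq, rfl⟩
  set u := FreeGroup.mk [d] with hu
  -- pigeonhole along the d-ray
  have hray : ∀ k : ℕ, st G (x * u ^ k) ∈ C := by
    intro k
    rw [← mk_replicate]
    exact hmem _ (ok_replicate d k)
  have key : ∀ i j : ℕ, i < j → st G (x * u ^ i) = st G (x * u ^ j) →
      st G (x * u⁻¹) ∈ C := by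
    intro i j hlt hij
    have hGmem : x * u ^ j * (x * u ^ i)⁻¹ ∈ G := st_eq_iff.mp hij
    have hmain : st G (x * u⁻¹) = st G (x * u ^ (j - i - 1)) := by
      rw [st_eq_iff]
      have h1 : x * u ^ (j - i - 1) * (x * u⁻¹)⁻¹ = x * u ^ (j - i) * x⁻¹ := by
        have : u ^ (j - i - 1) * u = u ^ (j - i) := by
          rw [← pow_succ]
          congr 1
          omega
        calc x * u ^ (j - i - 1) * (x * u⁻¹)⁻¹
            = x * (u ^ (j - i - 1) * u) * x⁻¹ := by group
          _ = x * u ^ (j - i) * x⁻¹ := by rw [this]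
      have h2 : x * u ^ j * (x * u ^ i)⁻¹ = x * u ^ (j - i) * x⁻¹ := by
        have : u ^ (j - i) * u ^ i = u ^ j := by
          rw [← pow_add]
          congr 1
          omega
        calc x * u ^ j * (x * u ^ i)⁻¹
            = x * (u ^ j * (u ^ i)⁻¹) * x⁻¹ := by group
          _ = x * (u ^ (j - i) * u ^ i * (u ^ i)⁻¹) * x⁻¹ := by rw [this]
          _ = x * u ^ (j - i) * x⁻¹ := by group
      rw [h1, ← h2]
      exact hGmem
    rw [hmain]
    exact hray _
  have hback : st G (x * u⁻¹) ∈ C := by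
    have hninj : ¬ Function.Injective (fun k : ℕ => st G (x * u ^ k)) := by
      intro hinj
      exact (hfin.subset (Set.range_subset_iff.mpr hray)).not_infinite
        (Set.infinite_range_of_injective hinj)
    rw [Function.not_injective_iff] at hninj
    obtain ⟨i, j, hij, hne⟩ := hninj
    rcases Ne.lt_or_gt hne with hlt | hlt
    · exact key i j hlt hij
    · exact key j i hlt hij.symm
  -- closure of C under appending a single letter
  have hstep : ∀ (c : α × Bool) (q), Ok d q →
      st G (x * FreeGroup.mk q * FreeGroup.mk [c]) ∈ C := by
    intro c q hq
    rcases List.eq_nil_or_concat q with rfl | ⟨q', l, rfl⟩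
    · by_cases hnr : NR d c
      · have hok : Ok d [c] := by
          refine ⟨FreeGroup.reduce_singleton c, ?_⟩
          intro b hb
          simp at hb
          subst hb
          exact hnr
        have := hmem [c] hok
        rw [← FreeGroup.one_eq_mk]
        simpa using this
      · have hc : c = (d.1, !d.2) := by
          unfold NR at hnr
          push_neg at hnr
          rcases hnr with ⟨h1, h2⟩
          exact Prod.ext h1 h2
        rw [← FreeGroup.one_eq_mk, mul_one, hc, mk_inv_letter]
        exact hback
    · simp only [List.concat_eq_append] at hq ⊢
      by_cases hnr : NR l c
      · have hok : Ok d (q' ++ [l] ++ [c]) := by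
          constructor
          · apply reduced_append hq.1 (FreeGroup.reduce_singleton c)
            intro a ha b hb
            simp at ha hb
            subst ha
            subst hb
            exact hnr
          · intro b hb
            apply hq.2
            rw [List.head?_append_of_ne_nil _ (by simp)] at hb
            exact hb
        have := hmem _ hok
        rwa [← FreeGroup.mul_mk, ← mul_assoc] at this
      · have hc : c = (l.1, !l.2) := by
          unfold NR at hnr
          push_neg at hnr
          rcases hnr with ⟨h1, h2⟩
          exact Prod.ext h1 h2
        have hcan : FreeGroup.mk (q' ++ [l]) * FreeGroup.mk [c] = FreeGroup.mk q' := by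
          rw [FreeGroup.mul_mk, List.append_assoc, ← FreeGroup.mul_mk, hc]
          rw [show ([l] ++ [(l.1, !l.2)] : List (α × Bool)) = [l, (l.1, !l.2)] from rfl]
          rw [mk_pair_cancel l, mul_one]
        rw [mul_assoc, hcan]
        apply hmem
        constructor
        · exact reduced_infix hq.1 ⟨[], [l], by simp⟩
        · intro b hb
          apply hq.2
          rcases q' with - | ⟨e, q''⟩
          · simp at hb
          · simpa using hb
  -- closure of C under right multiplication by any element
  have hact : ∀ (y : FreeGroup α) (q), Ok d q →
      st G (x * FreeGroup.mk q * y) ∈ C := by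
    intro y
    induction y using FreeGroup.induction_on with
    | C1 =>
      intro q hq
      rw [mul_one]
      exact hmem q hq
    | of a =>
      intro q hq
      exact hstep (a, true) q hq
    | inv_of a _ =>
      intro q hq
      have h1 : (FreeGroup.of a : FreeGroup α)⁻¹ = FreeGroup.mk [(a, false)] := by
        have h0 : (FreeGroup.of a : FreeGroup α) = FreeGroup.mk [(a, true)] := rfl
        rw [h0, FreeGroup.inv_mk]
        simp [FreeGroup.invRev]
      rw [h1]
      exact hstep (a, false) q hq
    | mul y₁ y₂ ih₁ ih₂ =>
      intro q hq
      obtain ⟨q', hq', he⟩ := ih₁ q hq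
      have : st G (x * FreeGroup.mk q * (y₁ * y₂)) = st G (x * FreeGroup.mk q' * y₂) := by
        rw [← mul_assoc]
        exact st_mul_right he y₂
      rw [this]
      exact ih₂ q' hq'
  -- C is everything
  have hall : ∀ s : Quotient (QuotientGroup.rightRel G), s ∈ C := by
    intro s
    induction s using Quotient.inductionOn with
    | _ z =>
      have := hact (x⁻¹ * z) [] ⟨rfl, by simp⟩
      rw [← FreeGroup.one_eq_mk, mul_one, ← mul_assoc, mul_inv_cancel, one_mul] at this
      exact this
  have : C = Set.univ := Set.eq_univ_of_forall hall
  rw [this] at hfin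
  exact Set.infinite_univ hfin

/-- The set of states visited by elements of `G` generated by `T`. -/
def S0 (G : Subgroup (FreeGroup α)) (T : Finset (FreeGroup α)) :
    Set (Quotient (QuotientGroup.rightRel G)) :=
  {st G 1} ∪ ⋃ t ∈ T, (fun p => st G (FreeGroup.mk p)) '' {p | p <+: t.toWord}

lemma S0_finite (T : Finset (FreeGroup α)) : (S0 G T).Finite := by
  apply Set.Finite.union (Set.finite_singleton _)
  apply Set.Finite.biUnion T.finite_toSet
  intro t _
  apply Set.Finite.image
  have : {p | p <+: t.toWord} = {p | p ∈ t.toWord.inits} := by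
    ext p
    simp [List.mem_inits]
  rw [this]
  exact t.toWord.inits.finite_toSet

lemma mem_S0 (T : Finset (FreeGroup α)) (hT : Subgroup.closure (T : Set (FreeGroup α)) = G)
    {g : FreeGroup α} (hg : g ∈ G) {p : List (α × Bool)} (hp : p <+: g.toWord) :
    st G (FreeGroup.mk p) ∈ S0 G T := by
  rw [← hT] at hg
  revert p
  induction hg using Subgroup.closure_induction with
  | mem t ht =>
    intro p hp
    right
    exact Set.mem_biUnion ht ⟨p, hp, rfl⟩
  | one =>
    intro p hp
    rw [FreeGroup.toWord_one, List.prefix_nil] at hp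
    subst hp
    left
    rw [← FreeGroup.one_eq_mk]
    rfl
  | mul x y hx hy ihx ihy =>
    intro p hp
    obtain ⟨u₁, t, s, u₂, hx1, hy1, hts, hred⟩ :=
      cancel_words x.toWord y.toWord (FreeGroup.reduce_toWord x) (FreeGroup.reduce_toWord y)
    have hxy : (x * y).toWord = u₁ ++ u₂ := by
      have hmk : x * y = FreeGroup.mk (x.toWord ++ y.toWord) := by
        rw [← FreeGroup.mul_mk, FreeGroup.mk_toWord, FreeGroup.mk_toWord]
      rw [hmk, FreeGroup.toWord_mk, hred]
    rw [hxy] at hp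
    obtain ⟨r, hr⟩ := hp
    rcases List.append_eq_append_iff.mp hr with ⟨a', ha1, _⟩ | ⟨c', hc1, hc2⟩
    · -- p is a prefix of u₁, hence of x.toWord
      apply ihx
      rw [hx1]
      exact List.IsPrefix.trans ⟨a', ha1.symm⟩ ⟨t, rfl⟩
    · -- p = u₁ ++ c' with c' a prefix of u₂
      have hq : c' <+: u₂ := ⟨r, hc2.symm⟩
      have hGx : x ∈ G := by rw [← hT]; exact hx
      have heq : st G (FreeGroup.mk p) = st G (FreeGroup.mk (s ++ c')) := by
        rw [st_eq_iff]
        have e1 : FreeGroup.mk (s ++ c') * (FreeGroup.mk p)⁻¹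
            = FreeGroup.mk s * (FreeGroup.mk u₁)⁻¹ := by
          rw [hc1, ← FreeGroup.mul_mk, ← FreeGroup.mul_mk]
          group
        have e2 : FreeGroup.mk s = (FreeGroup.mk t)⁻¹ :=
          eq_inv_of_mul_eq_one_right hts
        have e3 : FreeGroup.mk u₁ * FreeGroup.mk t = x := by
          rw [FreeGroup.mul_mk, ← hx1, FreeGroup.mk_toWord]
        have : FreeGroup.mk s * (FreeGroup.mk u₁)⁻¹ = x⁻¹ := by
          rw [e2, ← e3]
          group
        rw [e1, this]
        exact inv_mem hGx
      rw [heq]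
      apply ihy
      rw [hy1]
      obtain ⟨r', hr'⟩ := hq
      exact ⟨r', by rw [List.append_assoc, hr']⟩
  | inv x hx ihx =>
    intro p hp
    rw [FreeGroup.toWord_inv] at hp
    -- p is a prefix of invRev x.toWord
    set w := x.toWord with hw
    set σ : α × Bool → α × Bool := fun g => (g.1, !g.2) with hσ
    have hσσ : ∀ l : List (α × Bool), (l.map σ).map σ = l := by
      intro l
      rw [List.map_map]
      simp [hσ, Function.comp_def]
    have hpre : p.reverse <:+ w.map σ := by
      have : p <+: (w.map σ).reverse := hp
      rw [← List.reverse_suffix] at this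
      simpa using this
    obtain ⟨pre, hpre2⟩ := hpre
    have hwdec : w = pre.map σ ++ (p.reverse.map σ) := by
      have := congrArg (List.map σ) hpre2
      rw [List.map_append, hσσ] at this
      exact this.symm
    have hmkp : FreeGroup.mk p = (FreeGroup.mk (p.reverse.map σ))⁻¹ := by
      rw [FreeGroup.inv_mk]
      congr 1
      show p = FreeGroup.invRev (List.map σ p.reverse)
      unfold FreeGroup.invRev
      rw [show List.map (fun g : α × Bool => (g.1, !g.2)) (List.map σ p.reverse)
          = List.map σ (List.map σ p.reverse) from rfl, hσσ, List.reverse_reverse]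
    have heq : st G (FreeGroup.mk p) = st G (FreeGroup.mk (pre.map σ)) := by
      rw [st_eq_iff, hmkp, inv_inv, FreeGroup.mul_mk, ← hwdec, FreeGroup.mk_toWord]
      rw [← hT]
      exact hx
    rw [heq]
    apply ihx
    exact ⟨p.reverse.map σ, hwdec.symm⟩


lemma greedy (hQ : Infinite (Quotient (QuotientGroup.rightRel G)))
    {S : Set (Quotient (QuotientGroup.rightRel G))} (hS : S.Finite) :
    ∀ (xs : List (FreeGroup α)) (w₀ : List (α × Bool)), reduce w₀ = w₀ → w₀ ≠ [] →
      ∃ w, reduce w = w ∧ w₀ <+: w ∧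
        ∀ x ∈ xs, ∃ q, q <+: w ∧ st G (x * FreeGroup.mk q) ∉ S := by
  intro xs
  induction xs with
  | nil => exact fun w₀ h hne => ⟨w₀, h, List.prefix_refl _, by simp⟩
  | cons x xs ih =>
    intro w₀ hw₀ hne
    set d := w₀.getLast hne with hd
    obtain ⟨s', hs', hnot⟩ :=
      ((cone_infinite hQ (x * FreeGroup.mk w₀) d).diff hS).nonempty
    obtain ⟨q, hq, rfl⟩ := hs'
    have hred1 : reduce (w₀ ++ q) = w₀ ++ q := by
      apply reduced_append hw₀ hq.1
      intro a ha b hb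
      rw [List.getLast?_eq_getLast hne] at ha
      simp at ha
      subst ha
      exact hq.2 b hb
    obtain ⟨w, hred, hpre, hall⟩ := ih (w₀ ++ q) hred1 (by simp [hne])
    refine ⟨w, hred, (List.prefix_append w₀ q).trans hpre, ?_⟩
    intro x' hx'
    rcases List.mem_cons.mp hx' with rfl | hx'
    · refine ⟨w₀ ++ q, hpre, ?_⟩
      rw [← FreeGroup.mul_mk, ← mul_assoc]
      exact hnot
    · exact hall x' hx'


end KillerAux

open KillerAux in
/-- Killer words: a finitely generated subgroup of infinite index in `F_n` admits a
nonempty reduced word that does not occur as a contiguous subword of the reduced word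
of any of its elements. -/
theorem exists_killer_word (n : ℕ) (hn : 1 ≤ n) (G : Subgroup (FreeGroup (Fin n)))
    (hfg : G.FG) (hinf : G.index = 0) :
    ∃ w : List (Fin n × Bool), w ≠ [] ∧ FreeGroup.reduce w = w ∧
      ∀ g ∈ G, ¬ w <:+: FreeGroup.toWord g := by
  obtain ⟨T, hT⟩ := hfg
  -- the coset space is infinite
  have hQ : Infinite (Quotient (QuotientGroup.rightRel G)) := by
    have h1 : Infinite (FreeGroup (Fin n) ⧸ G) := by
      unfold Subgroup.index at hinf
      rcases Nat.card_eq_zero.mp hinf with h | h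
      · exact (h.false ((QuotientGroup.mk (1 : FreeGroup (Fin n))) : FreeGroup (Fin n) ⧸ G)).elim
      · exact h
    exact (QuotientGroup.quotientRightRelEquivQuotientLeftRel G).infinite_iff.mpr h1
  have hSfin := S0_finite (G := G) T
  -- list of representatives of S0
  set xs := hSfin.toFinset.toList.map Quotient.out with hxs
  have hxs_mem : ∀ s ∈ S0 G T, s.out ∈ xs := by
    intro s hs
    rw [hxs]
    apply List.mem_map_of_mem
    rw [Finset.mem_toList, Set.Finite.mem_toFinset]
    exact hs
  -- initial nonempty reduced word
  have hd0 : FreeGroup.reduce [((⟨0, hn⟩ : Fin n), true)] = [((⟨0, hn⟩ : Fin n), true)] :=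
    FreeGroup.reduce_singleton _
  obtain ⟨w, hred, hpre, hall⟩ := greedy hQ hSfin xs _ hd0 (by simp)
  refine ⟨w, ?_, hred, ?_⟩
  · intro hwnil
    rw [hwnil, List.prefix_nil] at hpre
    simp at hpre
  · rintro g hg ⟨p, r, hpr⟩
    -- p ++ w ++ r = g.toWord
    have hpS : st G (FreeGroup.mk p) ∈ S0 G T := by
      apply mem_S0 T hT hg
      exact ⟨w ++ r, by rw [← hpr, List.append_assoc]⟩
    obtain ⟨q, hqw, hnot⟩ := hall _ (hxs_mem _ hpS)
    apply hnot
    have he : st G ((st G (FreeGroup.mk p)).out * FreeGroup.mk q)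
        = st G (FreeGroup.mk (p ++ q)) := by
      rw [← FreeGroup.mul_mk]
      exact st_mul_right (Quotient.out_eq _) (FreeGroup.mk q)
    rw [he]
    apply mem_S0 T hT hg
    obtain ⟨r', hr'⟩ := hqw
    refine ⟨r' ++ r, ?_⟩
    rw [← hpr, List.append_assoc, List.append_assoc, ← hr', List.append_assoc]
end

section
/- Let m, n ≥ 1 and let φ : F_m → F_n be a group homomorphism that is not injective, where both free groups are equipped with the bi-invariant word metrics associated with their standard generating sets. Then φ is not a quasi-isometric embedding; indeed, its kernel is an unbounded subset of F_m whose image under φ is bounded. -/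
lemma exists_list_rep {m : ℕ} (g : FreeGroup (Fin m)) :
    ∃ L : List (FreeGroup (Fin m)),
      (∀ x ∈ L, x ∈ conjGens (Set.range (FreeGroup.of : Fin m → _))) ∧ L.prod = g := by
  induction g using FreeGroup.induction_on with
  | C1 => exact ⟨[], by simp, by simp⟩
  | of i =>
    refine ⟨[FreeGroup.of i], ?_, by simp⟩
    rintro x hx
    simp only [List.mem_singleton] at hx
    exact ⟨1, FreeGroup.of i, Or.inl ⟨i, rfl⟩, by simp [hx]⟩
  | inv_of i _ =>
    refine ⟨[(FreeGroup.of i)⁻¹], ?_, by simp⟩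
    rintro x hx
    simp only [List.mem_singleton] at hx
    exact ⟨1, (FreeGroup.of i)⁻¹, Or.inr ⟨i, by simp⟩, by simp [hx]⟩
  | mul a b ha hb =>
    obtain ⟨La, hLa, rfl⟩ := ha
    obtain ⟨Lb, hLb, rfl⟩ := hb
    refine ⟨La ++ Lb, ?_, by simp⟩
    intro x hx
    rcases List.mem_append.mp hx with h | h
    exacts [hLa x h, hLb x h]

lemma ciNorm_set_nonempty {m : ℕ} (g : FreeGroup (Fin m)) :
    {k | ∃ f : Fin k → FreeGroup (Fin m),
      (∀ i, f i ∈ conjGens (Set.range (FreeGroup.of : Fin m → _))) ∧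
      (List.ofFn f).prod = g}.Nonempty := by
  obtain ⟨L, hL, rfl⟩ := exists_list_rep g
  exact ⟨L.length, L.get, fun i => hL _ (L.get_mem _), by rw [List.ofFn_get]⟩

lemma abs_prod_le {m : ℕ} (ψ : FreeGroup (Fin m) →* Multiplicative ℤ)
    (hψ : ∀ i : Fin m, ((ψ (FreeGroup.of i)).toAdd).natAbs ≤ 1) :
    ∀ L : List (FreeGroup (Fin m)),
      (∀ x ∈ L, x ∈ conjGens (Set.range (FreeGroup.of : Fin m → _))) →
      ((ψ L.prod).toAdd).natAbs ≤ L.length := by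
  intro L
  induction L with
  | nil => intro _; simp
  | cons a L ih =>
    intro h
    have ha : ((ψ a).toAdd).natAbs ≤ 1 := by
      obtain ⟨g, s, hs, rfl⟩ := h a List.mem_cons_self
      have : ψ (g * s * g⁻¹) = ψ s := by
        rw [map_mul, map_mul, map_inv, mul_comm, ← mul_assoc, inv_mul_cancel, one_mul]
      rw [this]
      rcases hs with ⟨i, rfl⟩ | ⟨i, hi⟩
      · exact hψ i
      · have : ψ s = (ψ s⁻¹)⁻¹ := by simp
        rw [this, ← hi]
        simpa using hψ i
    have hL := ih (fun x hx => h x (List.mem_cons_of_mem a hx))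
    calc ((ψ (a :: L).prod).toAdd).natAbs
        = ((ψ a).toAdd + (ψ L.prod).toAdd).natAbs := by
          rw [List.prod_cons, map_mul]; rfl
      _ ≤ ((ψ a).toAdd).natAbs + ((ψ L.prod).toAdd).natAbs := Int.natAbs_add_le _ _
      _ ≤ 1 + L.length := Nat.add_le_add ha hL
      _ = (a :: L).length := by simp [Nat.add_comm]

lemma abs_le_ciNorm {m : ℕ} (ψ : FreeGroup (Fin m) →* Multiplicative ℤ)
    (hψ : ∀ i : Fin m, ((ψ (FreeGroup.of i)).toAdd).natAbs ≤ 1) (g : FreeGroup (Fin m)) :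
    ((ψ g).toAdd).natAbs ≤ ciNorm (Set.range (FreeGroup.of : Fin m → _)) g := by
  have hmem := Nat.sInf_mem (ciNorm_set_nonempty g)
  obtain ⟨f, hf, hprod⟩ := hmem
  have := abs_prod_le ψ hψ (List.ofFn f) (by
    intro x hx
    obtain ⟨i, rfl⟩ := List.mem_ofFn.mp hx
    exact hf i)
  rw [hprod] at this
  simpa [ciNorm] using this

section StallingsCore

variable {m : ℕ} (L : ℕ) (c : ℕ → Fin m × Bool)

/-- letter slot `y` is an "up move" for generator `i`. -/
def upP (i : Fin m) (y : ℕ) : Prop := y < L ∧ c y = (i, true)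

def downP (i : Fin m) (y : ℕ) : Prop := y < L ∧ c y = (i, false)

def srcP (i : Fin m) (y : ℕ) : Prop := upP L c i y ∨ (0 < y ∧ downP L c i (y - 1))

def tgtP (i : Fin m) (y : ℕ) : Prop := downP L c i y ∨ (0 < y ∧ upP L c i (y - 1))

variable (hc : ∀ (i : Fin m) (y : ℕ),
    (upP L c i y → ¬ downP L c i (y + 1)) ∧ (downP L c i y → ¬ upP L c i (y + 1)))

open Classical in
noncomputable def mv (i : Fin m) (s : {y : Fin (L+1) // srcP L c i y.val}) :
    {y : Fin (L+1) // tgtP L c i y.val} :=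
  if h : upP L c i s.1.val then
    ⟨⟨s.1.val + 1, by have := h.1; omega⟩, Or.inr ⟨Nat.succ_pos _, by simpa using h⟩⟩
  else
    ⟨⟨s.1.val - 1, by have := s.1.isLt; omega⟩, Or.inl (s.2.resolve_left h).2⟩

open Classical in
noncomputable def imv (i : Fin m) (t : {y : Fin (L+1) // tgtP L c i y.val}) :
    {y : Fin (L+1) // srcP L c i y.val} :=
  if h : downP L c i t.1.val then
    ⟨⟨t.1.val + 1, by have := h.1; omega⟩, Or.inr ⟨Nat.succ_pos _, by simpa using h⟩⟩
  else
    ⟨⟨t.1.val - 1, by have := t.1.isLt; omega⟩, Or.inl (t.2.resolve_left h).2⟩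

noncomputable def eMv (i : Fin m) :
    {y : Fin (L+1) // srcP L c i y.val} ≃ {y : Fin (L+1) // tgtP L c i y.val} where
  toFun := mv L c i
  invFun := imv L c i
  left_inv := by
    rintro ⟨⟨y, hy⟩, hs⟩
    by_cases h : upP L c i y
    · have h1 : mv L c i ⟨⟨y, hy⟩, hs⟩ = ⟨⟨y + 1, by have := h.1; omega⟩,
        Or.inr ⟨Nat.succ_pos _, by simpa using h⟩⟩ := dif_pos h
      rw [h1, imv, dif_neg]
      · apply Subtype.ext; apply Fin.ext; simp
      · exact (hc i y).1 h
    · have hd : 0 < y ∧ downP L c i (y - 1) := hs.resolve_left h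
      have h1 : mv L c i ⟨⟨y, hy⟩, hs⟩ = ⟨⟨y - 1, by omega⟩,
        Or.inl hd.2⟩ := dif_neg h
      rw [h1, imv, dif_pos]
      · apply Subtype.ext; apply Fin.ext; simp; omega
      · exact hd.2
  right_inv := by
    rintro ⟨⟨y, hy⟩, ht⟩
    by_cases h : downP L c i y
    · have h1 : imv L c i ⟨⟨y, hy⟩, ht⟩ = ⟨⟨y + 1, by have := h.1; omega⟩,
        Or.inr ⟨Nat.succ_pos _, by simpa using h⟩⟩ := dif_pos h
      rw [h1, mv, dif_neg]
      · apply Subtype.ext; apply Fin.ext; simp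
      · exact (hc i y).2 h
    · have hd : 0 < y ∧ upP L c i (y - 1) := ht.resolve_left h
      have h1 : imv L c i ⟨⟨y, hy⟩, ht⟩ = ⟨⟨y - 1, by omega⟩,
        Or.inl hd.2⟩ := dif_neg h
      rw [h1, mv, dif_pos]
      · apply Subtype.ext; apply Fin.ext; simp; omega
      · exact hd.2

open Classical in
noncomputable def sigma (i : Fin m) : Equiv.Perm (Fin (L+1)) :=
  ((Equiv.sumCompl (fun y : Fin (L+1) => srcP L c i y.val)).symm.trans
    ((eMv L c hc i).sumCongr
      (Fintype.equivOfCardEq (by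
        have h1 : Fintype.card {y : Fin (L+1) // srcP L c i y.val}
            = Fintype.card {y : Fin (L+1) // tgtP L c i y.val} :=
          Fintype.card_congr (eMv L c hc i)
        have h2 := Fintype.card_subtype_compl (fun y : Fin (L+1) => srcP L c i y.val)
        have h3 := Fintype.card_subtype_compl (fun y : Fin (L+1) => tgtP L c i y.val)
        rw [h2, h3, h1])))).trans
    (Equiv.sumCompl (fun y : Fin (L+1) => tgtP L c i y.val))

open Classical in
lemma sigma_src (i : Fin m) (y : Fin (L+1)) (h : srcP L c i y.val) :
    sigma L c hc i y = ((eMv L c hc i) ⟨y, h⟩).1 := by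
  simp only [sigma, Equiv.trans_apply, Equiv.sumCongr_apply]
  rw [Equiv.sumCompl_symm_apply_of_pos (p := fun y : Fin (L+1) => srcP L c i y.val) h]
  simp

lemma sigma_up (i : Fin m) (y : Fin (L+1)) (h : upP L c i y.val) :
    sigma L c hc i y = ⟨y.val + 1, by have := h.1; omega⟩ := by
  rw [sigma_src L c hc i y (Or.inl h)]
  have : eMv L c hc i ⟨y, Or.inl h⟩ = ⟨⟨y.val + 1, by have := h.1; omega⟩,
      Or.inr ⟨Nat.succ_pos _, by simpa using h⟩⟩ := dif_pos h
  rw [this]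

lemma sigma_down (i : Fin m) (y : ℕ) (h : downP L c i y) :
    sigma L c hc i ⟨y + 1, by have := h.1; omega⟩ = ⟨y, by have := h.1; omega⟩ := by
  have hsrc : srcP L c i (y + 1) := Or.inr ⟨Nat.succ_pos _, by simpa using h⟩
  rw [sigma_src L c hc i _ hsrc]
  have hnup : ¬ upP L c i (y + 1) := (hc i y).2 h
  have : eMv L c hc i ⟨⟨y + 1, by have := h.1; omega⟩, hsrc⟩
      = ⟨⟨(y+1) - 1, by have := h.1; omega⟩, Or.inl ((hsrc.resolve_left hnup).2)⟩ := dif_neg hnup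
  rw [this]
  apply Fin.ext
  simp

end StallingsCore

lemma exists_perm_hom {m : ℕ} (w : FreeGroup (Fin m)) (hw : w ≠ 1) :
    ∃ (N : ℕ) (π : FreeGroup (Fin m) →* Equiv.Perm (Fin N)), π w ≠ 1 := by
  classical
  set l := w.toWord with hldef
  have hred : FreeGroup.reduce l = l := w.reduce_toWord
  have hne : l ≠ [] := by
    intro h
    exact hw (FreeGroup.toWord_eq_nil_iff.mp h)
  set L := l.length with hLdef
  have hL : 0 < L := List.length_pos_iff.mpr hne
  set d : Fin m × Bool := l.head hne with hd
  set c : ℕ → Fin m × Bool := fun x => l.getD (L - 1 - x) d with hcdef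
  have hpair : ∀ k, k + 1 < L → ∀ (i : Fin m) (b : Bool),
      l.getD k d = (i, b) → l.getD (k+1) d ≠ (i, !b) := by
    intro k hk i b h1 h2
    have hk0 : k < l.length := by omega
    have hk1 : k + 1 < l.length := hk
    rw [List.getD_eq_getElem l d hk0] at h1
    rw [List.getD_eq_getElem l d hk1] at h2
    have hdec : l = l.take k ++ (i, b) :: (i, !b) :: l.drop (k+2) := by
      conv_lhs => rw [← List.take_append_drop k l]
      congr 1
      rw [List.drop_eq_getElem_cons hk0, List.drop_eq_getElem_cons hk1, h1, h2]
    exact FreeGroup.reduce.not (hred.trans hdec)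
  have hcc : ∀ (i : Fin m) (y : ℕ),
      (upP L c i y → ¬ downP L c i (y + 1)) ∧ (downP L c i y → ¬ upP L c i (y + 1)) := by
    intro i y
    constructor
    · intro hu hdn
      obtain ⟨hy, hcy⟩ := hu
      obtain ⟨hy1, hcy1⟩ := hdn
      have e1 : L - 1 - (y+1) = L - 2 - y := by omega
      have e2 : L - 2 - y + 1 = L - 1 - y := by omega
      refine hpair (L - 2 - y) (by omega) i false ?_ ?_
      · rw [← e1]; exact hcy1
      · rw [e2]; exact hcy
    · intro hdn hu
      obtain ⟨hy, hcy⟩ := hdn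
      obtain ⟨hy1, hcy1⟩ := hu
      have e1 : L - 1 - (y+1) = L - 2 - y := by omega
      have e2 : L - 2 - y + 1 = L - 1 - y := by omega
      refine hpair (L - 2 - y) (by omega) i true ?_ ?_
      · rw [← e1]; exact hcy1
      · rw [e2]; exact hcy
  set σ : Fin m → Equiv.Perm (Fin (L+1)) := fun i => sigma L c hcc i with hσ
  have key : ∀ t (htL : t ≤ L),
      (FreeGroup.lift σ) (FreeGroup.mk (l.drop (L - t))) ⟨0, by omega⟩ = (⟨t, by omega⟩ : Fin (L+1)) := by
    intro t
    induction t with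
    | zero =>
      intro _
      have : l.drop (L - 0) = [] := by
        rw [Nat.sub_zero, hLdef, List.drop_length]
      rw [this, ← FreeGroup.one_eq_mk, map_one]
      rfl
    | succ t ih =>
      intro ht
      have ht' : t ≤ L := by omega
      have hkk : L - (t+1) < l.length := by omega
      have hdrop : l.drop (L - (t+1)) = l[L - (t+1)]'hkk :: l.drop (L - (t+1) + 1) :=
        List.drop_eq_getElem_cons hkk
      have e2 : L - (t+1) + 1 = L - t := by omega
      rw [hdrop, e2]
      have hsplit : FreeGroup.mk (l[L-(t+1)]'hkk :: l.drop (L - t))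
          = FreeGroup.mk [l[L-(t+1)]'hkk] * FreeGroup.mk (l.drop (L-t)) := by
        rw [FreeGroup.mul_mk]
        rfl
      rw [hsplit, map_mul, Equiv.Perm.mul_apply, ih ht']
      have hc_t : c t = l[L - (t+1)]'hkk := by
        have e3 : L - 1 - t = L - (t+1) := by omega
        rw [hcdef]
        simp only
        rw [e3]
        exact List.getD_eq_getElem l d hkk
      rcases hab : l[L - (t+1)]'hkk with ⟨j, b⟩
      rw [hab] at hc_t
      cases b with
      | true =>
        have hup : upP L c j t := ⟨by omega, hc_t⟩
        have : FreeGroup.mk [(j, true)] = FreeGroup.of j := rfl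
        rw [this, FreeGroup.lift_apply_of]
        have := sigma_up L c hcc j ⟨t, by omega⟩ hup
        rw [hσ]
        exact this
      | false =>
        have hdn : downP L c j t := ⟨by omega, hc_t⟩
        have hinv : FreeGroup.mk [(j, false)] = (FreeGroup.of j)⁻¹ := by
          show FreeGroup.mk [(j, false)] = (FreeGroup.mk [(j, true)])⁻¹
          rw [FreeGroup.inv_mk]
          simp [FreeGroup.invRev]
        rw [hinv, map_inv, FreeGroup.lift_apply_of]
        have hsd := sigma_down L c hcc j t hdn
        rw [hσ]
        have : (⟨t, by omega⟩ : Fin (L+1)) = (sigma L c hcc j) ⟨t+1, by omega⟩ := hsd.symm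
        rw [this]
        exact Equiv.symm_apply_apply _ _
  have h0 : (FreeGroup.lift σ) w ⟨0, by omega⟩ = ⟨L, by omega⟩ := by
    have hk := key L le_rfl
    rw [Nat.sub_self, List.drop_zero] at hk
    have hlw : FreeGroup.mk l = w := FreeGroup.mk_toWord
    rwa [hlw] at hk
  refine ⟨L + 1, FreeGroup.lift σ, fun h1 => ?_⟩
  rw [h1] at h0
  have : (0 : ℕ) = L := congrArg Fin.val h0
  omega

lemma hopfian {m : ℕ} (θ : FreeGroup (Fin m) →* FreeGroup (Fin m))
    (hs : Function.Surjective θ) : Function.Injective θ := by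
  rw [injective_iff_map_eq_one]
  intro a ha
  by_contra hne
  obtain ⟨N, π, hπ⟩ := exists_perm_hom a hne
  have hfin : Finite (FreeGroup (Fin m) →* Equiv.Perm (Fin N)) := by
    refine Finite.of_injective (fun ψ => (fun i => ψ (FreeGroup.of i) : Fin m → _)) ?_
    intro ψ₁ ψ₂ h
    exact FreeGroup.ext_hom _ _ (fun i => congrFun h i)
  have hT : Function.Injective
      (fun ψ : FreeGroup (Fin m) →* Equiv.Perm (Fin N) => ψ.comp θ) := by
    intro ψ₁ ψ₂ h
    apply MonoidHom.ext
    intro x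
    obtain ⟨y, rfl⟩ := hs x
    exact DFunLike.congr_fun h y
  obtain ⟨π', hπ'⟩ := Finite.injective_iff_surjective.mp hT π
  have : π a = 1 := by
    rw [← hπ']
    show π' (θ a) = 1
    rw [ha, map_one]
  exact hπ this

lemma exists_ker_expsum {m n : ℕ} (φ : FreeGroup (Fin m) →* FreeGroup (Fin n))
    (hφ : ¬ Function.Injective φ) :
    ∃ w ∈ φ.ker, ∃ i : Fin m,
      Multiplicative.toAdd ((FreeGroup.lift fun j => Multiplicative.ofAdd
        (if j = i then (1:ℤ) else 0)) w) ≠ 0 := by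
  classical
  by_contra hcon
  push_neg at hcon
  set α : FreeGroup (Fin m) →* Multiplicative (FreeAbelianGroup (Fin m)) :=
    FreeGroup.lift (fun i => Multiplicative.ofAdd (FreeAbelianGroup.of i)) with hα
  have hαker : ∀ w ∈ φ.ker, α w = 1 := by
    intro w hwk
    have hco : ∀ i : Fin m, FreeAbelianGroup.coeff i (Multiplicative.toAdd (α w)) = 0 := by
      intro i
      have hhom : (AddMonoidHom.toMultiplicative (FreeAbelianGroup.coeff i)).comp α
          = FreeGroup.lift (fun j => Multiplicative.ofAdd (if j = i then (1:ℤ) else 0)) := by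
        apply FreeGroup.ext_hom
        intro j
        simp only [MonoidHom.comp_apply, hα, FreeGroup.lift_apply_of]
        simp [FreeAbelianGroup.coeff, FreeAbelianGroup.toFinsupp_of, Finsupp.single_apply]
      have := DFunLike.congr_fun hhom w
      simp only [MonoidHom.comp_apply] at this
      have h2 := hcon w hwk i
      rw [← this] at h2
      simpa using h2
    have h0 : Multiplicative.toAdd (α w) = 0 := by
      apply (FreeAbelianGroup.equivFinsupp (Fin m)).injective
      rw [map_zero]
      ext i
      exact hco i
    have := congrArg Multiplicative.ofAdd h0
    simpa using this
  haveI hIF : IsFreeGroup (FreeGroup (Fin m) ⧸ φ.ker) :=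
    IsFreeGroup.ofMulEquiv (QuotientGroup.quotientKerEquivRange φ).symm
  set X := IsFreeGroup.Generators (FreeGroup (Fin m) ⧸ φ.ker) with hX
  set q : FreeGroup X ≃* (FreeGroup (Fin m) ⧸ φ.ker) :=
    (IsFreeGroup.toFreeGroup (FreeGroup (Fin m) ⧸ φ.ker)).symm with hq
  set ρ : FreeGroup (Fin m) →* FreeGroup (Fin m) ⧸ φ.ker := QuotientGroup.mk' φ.ker with hρ
  set β : FreeGroup X →* Multiplicative (FreeAbelianGroup X) :=
    FreeGroup.lift (fun x => Multiplicative.ofAdd (FreeAbelianGroup.of x)) with hβ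
  set αbar : (FreeGroup (Fin m) ⧸ φ.ker) →* Multiplicative (FreeAbelianGroup (Fin m)) :=
    QuotientGroup.lift φ.ker α (fun w hw => MonoidHom.mem_ker.mpr (hαker w hw)) with hαbar
  set fAdd : FreeAbelianGroup (Fin m) →+ FreeAbelianGroup X :=
    FreeAbelianGroup.lift (fun i => Multiplicative.toAdd (β (q.symm (ρ (FreeGroup.of i)))))
    with hfAdd
  set gAdd : FreeAbelianGroup X →+ FreeAbelianGroup (Fin m) :=
    FreeAbelianGroup.lift (fun x => Multiplicative.toAdd (αbar (q (FreeGroup.of x))))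
    with hgAdd
  have claim1 : ∀ s : FreeGroup X, gAdd (Multiplicative.toAdd (β s))
      = Multiplicative.toAdd (αbar (q s)) := by
    intro s
    have hhom : (AddMonoidHom.toMultiplicative gAdd).comp β
        = αbar.comp q.toMonoidHom := by
      apply FreeGroup.ext_hom
      intro x
      simp only [MonoidHom.comp_apply, hβ, FreeGroup.lift_apply_of]
      simp only [AddMonoidHom.toMultiplicative_apply_apply, toAdd_ofAdd]
      rw [hgAdd, FreeAbelianGroup.lift_apply_of]
      simp
    have := DFunLike.congr_fun hhom s
    simp only [MonoidHom.comp_apply, AddMonoidHom.toMultiplicative_apply_apply] at this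
    have := congrArg Multiplicative.toAdd this
    simpa using this
  have claim2 : ∀ u : FreeGroup (Fin m), fAdd (Multiplicative.toAdd (α u))
      = Multiplicative.toAdd (β (q.symm (ρ u))) := by
    intro u
    have hhom : (AddMonoidHom.toMultiplicative fAdd).comp α
        = β.comp (q.symm.toMonoidHom.comp ρ) := by
      apply FreeGroup.ext_hom
      intro i
      simp only [MonoidHom.comp_apply, hα, FreeGroup.lift_apply_of]
      simp only [AddMonoidHom.toMultiplicative_apply_apply, toAdd_ofAdd]
      rw [hfAdd, FreeAbelianGroup.lift_apply_of]
      simp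
    have := DFunLike.congr_fun hhom u
    simp only [MonoidHom.comp_apply, AddMonoidHom.toMultiplicative_apply_apply] at this
    have := congrArg Multiplicative.toAdd this
    simpa using this
  have hgf : ∀ a, gAdd (fAdd a) = a := by
    have hco : gAdd.comp fAdd = AddMonoidHom.id _ := by
      apply FreeAbelianGroup.lift_ext
      intro i
      simp only [AddMonoidHom.comp_apply, AddMonoidHom.id_apply]
      rw [hfAdd, FreeAbelianGroup.lift_apply_of, claim1]
      rw [MulEquiv.apply_symm_apply]
      rw [hαbar, hρ]
      rw [QuotientGroup.mk'_apply, QuotientGroup.lift_mk']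
      simp [hα, FreeGroup.lift_apply_of]
    intro a
    exact DFunLike.congr_fun hco a
  have hfg : ∀ a, fAdd (gAdd a) = a := by
    have hco : fAdd.comp gAdd = AddMonoidHom.id _ := by
      apply FreeAbelianGroup.lift_ext
      intro x
      simp only [AddMonoidHom.comp_apply, AddMonoidHom.id_apply]
      obtain ⟨u, hu⟩ := QuotientGroup.mk'_surjective φ.ker (q (FreeGroup.of x))
      rw [hgAdd, FreeAbelianGroup.lift_apply_of, ← hu]
      have h1 : αbar (ρ u) = α u := by
        rw [hαbar, hρ]
        rw [QuotientGroup.mk'_apply, QuotientGroup.lift_mk']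
      rw [h1, claim2, hu, MulEquiv.symm_apply_apply]
      simp [hβ, FreeGroup.lift_apply_of]
    intro a
    exact DFunLike.congr_fun hco a
  have eAdd : FreeAbelianGroup X ≃+ FreeAbelianGroup (Fin m) :=
    { toFun := gAdd, invFun := fAdd, left_inv := hfg, right_inv := hgf,
      map_add' := gAdd.map_add }
  have eX : X ≃ Fin m := Equiv.ofFreeAbelianGroupEquiv eAdd
  set θ : FreeGroup (Fin m) →* FreeGroup (Fin m) :=
    (FreeGroup.freeGroupCongr eX).toMonoidHom.comp (q.symm.toMonoidHom.comp ρ) with hθ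
  have hsurj : Function.Surjective θ := by
    intro y
    obtain ⟨u, hu⟩ := QuotientGroup.mk'_surjective φ.ker
      (q ((FreeGroup.freeGroupCongr eX).symm y))
    refine ⟨u, ?_⟩
    have hu' : ρ u = q ((FreeGroup.freeGroupCongr eX).symm y) := hu
    rw [hθ]
    simp only [MonoidHom.comp_apply, MulEquiv.coe_toMonoidHom]
    rw [hu', MulEquiv.symm_apply_apply, MulEquiv.apply_symm_apply]
  have hinj := hopfian θ hsurj
  obtain ⟨w0, hw0k, hw0⟩ : ∃ w0, w0 ∈ φ.ker ∧ w0 ≠ 1 := by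
    by_contra h
    push_neg at h
    exact hφ ((injective_iff_map_eq_one φ).mpr (fun a ha => h a ha))
  have hθw0 : θ w0 = 1 := by
    have : ρ w0 = 1 := (QuotientGroup.eq_one_iff w0).mpr hw0k
    rw [hθ]
    simp only [MonoidHom.comp_apply]
    rw [this, map_one, map_one]
  exact hw0 (hinj (by rw [hθw0, map_one]))


lemma ciNorm_one {G : Type*} [Group G] (S : Set G) : ciNorm S 1 = 0 := by
  apply Nat.sInf_eq_zero.mpr
  left
  exact ⟨fun i => i.elim0, fun i => i.elim0, by simp⟩

/-- A non-injective homomorphism `F_m → F_n` has unbounded kernel with bounded image,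
and hence is not a quasi-isometric embedding for the bi-invariant word metrics. -/
theorem not_quasiIsometricEmbedding_of_not_injective (m n : ℕ)
    (hm : 1 ≤ m) (hn : 1 ≤ n)
    (φ : FreeGroup (Fin m) →* FreeGroup (Fin n))
    (hφ : ¬ Function.Injective φ) :
    (¬ ∃ B : ℝ, ∀ x ∈ φ.ker, ∀ y ∈ φ.ker, freeDist m x y ≤ B) ∧
    (∃ B : ℝ, ∀ x ∈ φ.ker, ∀ y ∈ φ.ker, freeDist n (φ x) (φ y) ≤ B) ∧
    ¬ IsQuasiIsometricEmbedding (freeDist m) (freeDist n) φ := by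
  classical
  have h2 : ∀ x ∈ φ.ker, ∀ y ∈ φ.ker, freeDist n (φ x) (φ y) = 0 := by
    intro x hx y hy
    have hx1 : φ x = 1 := hx
    have hy1 : φ y = 1 := hy
    rw [freeDist, ciDist, hx1, hy1, inv_one, mul_one, ciNorm_one]
    simp
  have h1 : ¬ ∃ B : ℝ, ∀ x ∈ φ.ker, ∀ y ∈ φ.ker, freeDist m x y ≤ B := by
    rintro ⟨B, hB⟩
    obtain ⟨w, hwk, i, hi⟩ := exists_ker_expsum φ hφ
    set ψ : FreeGroup (Fin m) →* Multiplicative ℤ :=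
      FreeGroup.lift fun j => Multiplicative.ofAdd (if j = i then (1:ℤ) else 0) with hψdef
    have hψ : ∀ i' : Fin m, ((ψ (FreeGroup.of i')).toAdd).natAbs ≤ 1 := by
      intro i'
      rw [hψdef, FreeGroup.lift_apply_of]
      by_cases h : i' = i <;> simp [h]
    obtain ⟨k, hk⟩ := exists_nat_gt B
    have hxk : w ^ k ∈ φ.ker := pow_mem hwk k
    have hle := hB (w ^ k) hxk 1 (one_mem _)
    have hlow : ((ψ (w ^ k)).toAdd).natAbs
        ≤ ciNorm (Set.range (FreeGroup.of : Fin m → _)) (w ^ k) :=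
      abs_le_ciNorm ψ hψ (w ^ k)
    have habs : ((ψ (w ^ k)).toAdd).natAbs = k * ((ψ w).toAdd).natAbs := by
      rw [map_pow, toAdd_pow, nsmul_eq_mul, Int.natAbs_mul]
      simp
    have hge1 : 1 ≤ ((ψ w).toAdd).natAbs := by
      rcases Nat.eq_zero_or_pos ((ψ w).toAdd).natAbs with h | h
      · exact absurd (Int.natAbs_eq_zero.mp h) hi
      · exact h
    have hkle : k ≤ ciNorm (Set.range (FreeGroup.of : Fin m → _)) (w ^ k) := by
      calc k = k * 1 := (Nat.mul_one k).symm
        _ ≤ k * ((ψ w).toAdd).natAbs := Nat.mul_le_mul_left k hge1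
        _ = ((ψ (w ^ k)).toAdd).natAbs := habs.symm
        _ ≤ _ := hlow
    have hfd : freeDist m (w ^ k) 1
        = ((ciNorm (Set.range (FreeGroup.of : Fin m → _)) (w ^ k) : ℕ) : ℝ) := by
      rw [freeDist, ciDist, inv_one, mul_one]
    have : (k : ℝ) ≤ freeDist m (w ^ k) 1 := by
      rw [hfd]
      exact_mod_cast hkle
    linarith
  refine ⟨h1, ⟨0, fun x hx y hy => le_of_eq (h2 x hx y hy)⟩, ?_⟩
  rintro ⟨C, hC, D, hD, hQ⟩
  apply h1
  refine ⟨C * D, fun x hx y hy => ?_⟩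
  have hq := (hQ x y).1
  rw [h2 x hx y hy] at hq
  have h' : (1/C) * freeDist m x y ≤ D := by linarith
  calc freeDist m x y = C * ((1/C) * freeDist m x y) := by field_simp
    _ ≤ C * D := mul_le_mul_of_nonneg_left h' hC.le
end
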